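/- arXiv:2503.14133 — 5 statements merged into one kernel-verified Lean document; each statement's English description precedes it below -/
import Mathlib

section
/- Let p, r > 0 and let (α_n)_{n≥1} be a non-negative sequence. Define ω̄_l^p := Σ_{n=1}^∞ α_n/(n^{pr} + l^{pr}) for l ∈ ℕ, and assume ω̄_l^p is finite for each l. Let 0 < q ≤ 1 and let (μ_k) be a discretizing sequence for (ω̄_l^p) (with parameter λ > 4 large enough). Then for any non-negative sequence (f_j), Σ_{n=1}^∞ α_n · (Σ_{j=1}^∞ f_j/(j^{pr/q} + n^{pr/q}))^q is comparable, up to constants depending only on p, q, r, λ, to Σ_k (Σ_{μ_k ≤ l < μ_{k+1}} ω̄_l^{p/q} · f_l)^q, where the outer sum runs over all indices k of the discretizing sequence. -/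
open scoped ENNReal

/-- The weight `ω̄_l^p = Σ_{n≥1} α_n/(n^{pr}+l^{pr})`. -/
noncomputable def omegaBar (p r : ℝ) (α : ℕ → ℝ≥0∞) (l : ℕ) : ℝ≥0∞ :=
  ∑' n : ℕ, α (n+1) / (((n+1 : ℕ) : ℝ≥0∞) ^ (p * r) + (l : ℝ≥0∞) ^ (p * r))

namespace Stmt1Aux

lemma sum_rpow_le {ι : Type*} {q : ℝ} (hq0 : 0 < q) (hq1 : q ≤ 1) (s : Finset ι)
    (g : ι → ℝ≥0∞) : (∑ i ∈ s, g i) ^ q ≤ ∑ i ∈ s, g i ^ q := by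
  classical
  induction s using Finset.induction_on with
  | empty => simp [ENNReal.zero_rpow_of_pos hq0]
  | insert _ _ h ih =>
      rw [Finset.sum_insert h, Finset.sum_insert h]
      exact (ENNReal.rpow_add_le_add_rpow _ _ hq0.le hq1).trans (add_le_add_right ih _)

lemma tsum_rpow_le {q : ℝ} (hq0 : 0 < q) (hq1 : q ≤ 1) (g : ℕ → ℝ≥0∞) :
    (∑' i, g i) ^ q ≤ ∑' i, g i ^ q := by
  rw [ENNReal.tsum_eq_iSup_sum]
  have hmono : Monotone fun x : ℝ≥0∞ => x ^ q := fun a b hab => ENNReal.rpow_le_rpow hab hq0.le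
  rw [Monotone.map_iSup_of_continuousAt (ENNReal.continuous_rpow_const.continuousAt) hmono
    (by simp [ENNReal.zero_rpow_of_pos hq0])]
  exact iSup_le fun s => (sum_rpow_le hq0 hq1 s g).trans
    (Finset.sum_le_sum fun i _ => le_of_eq rfl) |>.trans
    (by exact Finset.sum_le_sum_of_subset (Finset.Subset.refl s) |>.trans (ENNReal.sum_le_tsum s))

lemma tsum_partition (ν : ℕ → ℕ) (hν : StrictMono ν) (h0 : ν 0 = 0) (h : ℕ → ℝ≥0∞) :
    ∑' n, h n = ∑' k, ∑ m ∈ Finset.Ico (ν k) (ν (k+1)), h m := by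
  have hblocks : ∀ K, (∑ k ∈ Finset.range K, ∑ m ∈ Finset.Ico (ν k) (ν (k+1)), h m)
      = ∑ m ∈ Finset.range (ν K), h m := by
    intro K
    induction K with
    | zero => simp [h0]
    | succ K ih =>
      rw [Finset.sum_range_succ, ih, Finset.range_eq_Ico, Finset.range_eq_Ico]
      exact Finset.sum_Ico_consecutive h (Nat.zero_le (ν K)) (hν (Nat.lt_succ_self K)).le
  rw [ENNReal.tsum_eq_iSup_sum' Finset.range Finset.exists_nat_subset_range,
      ENNReal.tsum_eq_iSup_sum' Finset.range Finset.exists_nat_subset_range]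
  simp only [hblocks]
  apply le_antisymm
  · exact iSup_le fun N => le_iSup_of_le N
      (Finset.sum_le_sum_of_subset (Finset.range_subset_range.2 hν.le_apply))
  · exact iSup_le fun K => le_iSup_of_le (ν K) le_rfl

lemma absorb {X Y ε : ℝ≥0∞} (hX : X ≠ ⊤) (hε : ε < 1) (h : X ≤ Y + ε * X) :
    X ≤ (1 - ε)⁻¹ * Y := by
  have h1 : (1 - ε) * X ≤ Y := by
    rw [ENNReal.sub_mul (fun _ _ => hX), one_mul]
    exact tsub_le_iff_right.2 h
  have h2 : (1 - ε) ≠ 0 := by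
    simpa [tsub_eq_zero_iff_le] using hε.not_ge
  have h3 : (1 - ε) ≠ ⊤ := (tsub_le_self.trans_lt ENNReal.one_lt_top).ne
  calc X = (1 - ε)⁻¹ * ((1 - ε) * X) := by
        rw [← mul_assoc, ENNReal.inv_mul_cancel h2 h3, one_mul]
    _ ≤ (1 - ε)⁻¹ * Y := mul_le_mul_right h1 _

lemma le_inv_mul {c X Y : ℝ≥0∞} (hc0 : c ≠ 0) (hct : c ≠ ⊤) (h : c * X ≤ Y) : X ≤ c⁻¹ * Y := by
  rw [← one_mul X, ← ENNReal.inv_mul_cancel hc0 hct, mul_assoc]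
  exact mul_le_mul_right h _

lemma inv_le_two_inv {x y : ℝ≥0∞} (h : x ≤ 2 * y) : y⁻¹ ≤ 2 * x⁻¹ := by
  calc y⁻¹ = 2 * (2 * y)⁻¹ := by
        rw [ENNReal.mul_inv (Or.inl (by norm_num)) (Or.inl (by norm_num)), ← mul_assoc,
          ENNReal.mul_inv_cancel (by norm_num) (by norm_num), one_mul]
    _ ≤ 2 * x⁻¹ := mul_le_mul_right (ENNReal.inv_le_inv.2 h) _

lemma inv_le_of_mul_le {x A y B : ℝ≥0∞} (hy0 : y ≠ 0) (hyt : y ≠ ⊤) (hx0 : x ≠ 0) (hxt : x ≠ ⊤)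
    (h : x * A ≤ y * B) : B⁻¹ ≤ y * (x⁻¹ * A⁻¹) := by
  calc B⁻¹ = y * (y⁻¹ * B⁻¹) := by rw [← mul_assoc, ENNReal.mul_inv_cancel hy0 hyt, one_mul]
    _ = y * (y * B)⁻¹ := by rw [ENNReal.mul_inv (Or.inl hy0) (Or.inl hyt)]
    _ ≤ y * (x * A)⁻¹ := mul_le_mul_right (ENNReal.inv_le_inv.2 h) _
    _ = y * (x⁻¹ * A⁻¹) := by rw [ENNReal.mul_inv (Or.inl hx0) (Or.inl hxt)]

lemma mul_inv_le_inv {x A c : ℝ≥0∞} (hc0 : c ≠ 0) (hct : c ≠ ⊤) (hA0 : A ≠ 0) (hAt : A ≠ ⊤)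
    (h : x * A ≤ c) : x * c⁻¹ ≤ A⁻¹ := by
  have h1 : x * c⁻¹ = x * A * (A⁻¹ * c⁻¹) := by
    rw [mul_assoc, ← mul_assoc A, ENNReal.mul_inv_cancel hA0 hAt, one_mul]
  rw [h1]
  calc x * A * (A⁻¹ * c⁻¹) ≤ c * (A⁻¹ * c⁻¹) := mul_le_mul_left h _
    _ = A⁻¹ * (c * c⁻¹) := by ring
    _ = A⁻¹ := by rw [ENNReal.mul_inv_cancel hc0 hct, mul_one]

lemma mul_inv_le_of_le_mul {X Y E : ℝ≥0∞} (hE0 : E ≠ 0) (hEt : E ≠ ⊤) (h : X ≤ Y * E) :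
    X * E⁻¹ ≤ Y := by
  calc X * E⁻¹ ≤ Y * E * E⁻¹ := mul_le_mul_left h _
    _ = Y := by rw [mul_assoc, ENNReal.mul_inv_cancel hE0 hEt, mul_one]

end Stmt1Aux

namespace Stmt1Aux

lemma frac_mono {c x y : ℝ≥0∞} (hc0 : c ≠ 0) (hct : c ≠ ⊤) (hxt : x ≠ ⊤) (hyt : y ≠ ⊤)
    (hxy : x ≤ y) : x * (c + x)⁻¹ ≤ y * (c + y)⁻¹ := by
  have hcy0 : c + y ≠ 0 := fun h => hc0 (add_eq_zero.1 h).1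
  have hcyt : c + y ≠ ⊤ := ENNReal.add_ne_top.2 ⟨hct, hyt⟩
  have hcx0 : c + x ≠ 0 := fun h => hc0 (add_eq_zero.1 h).1
  have hcxt : c + x ≠ ⊤ := ENNReal.add_ne_top.2 ⟨hct, hxt⟩
  have key : x * (c + y) ≤ y * (c + x) := by
    rw [mul_add, mul_add]
    exact add_le_add (by rw [mul_comm x c, mul_comm y c]; exact mul_le_mul_right hxy c)
      (le_of_eq (mul_comm x y))
  have e1 : (c + y) * (c + y)⁻¹ = 1 := ENNReal.mul_inv_cancel hcy0 hcyt
  have e2 : (c + x) * (c + x)⁻¹ = 1 := ENNReal.mul_inv_cancel hcx0 hcxt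
  calc x * (c + x)⁻¹ = x * (c + y) * ((c + y)⁻¹ * (c + x)⁻¹) := by
        rw [mul_assoc x, ← mul_assoc (c + y), e1, one_mul]
    _ ≤ y * (c + x) * ((c + y)⁻¹ * (c + x)⁻¹) := mul_le_mul_left key _
    _ = y * (c + y)⁻¹ * ((c + x) * (c + x)⁻¹) := by ring
    _ = y * (c + y)⁻¹ := by rw [e2, mul_one]

lemma core1 {q : ℝ} (hq0 : 0 < q) (hq1 : q ≤ 1)
    (E D : ℕ → ℝ≥0∞)
    (hE1 : ∀ n, 1 ≤ E n) (hEt : ∀ n, E n ≠ ⊤)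
    (hD1 : ∀ n, 1 ≤ D n) (hDt : ∀ n, D n ≠ ⊤) (hDmono : Monotone D)
    (hDq : ∀ n, D n ^ q = E n)
    (a : ℕ → ℝ≥0∞) (w : ℕ → ℝ≥0∞)
    (hw : ∀ m, w m = ∑' n, a n / (E n + E m))
    (ν : ℕ → ℕ) (hν : StrictMono ν) (hν0 : ν 0 = 0)
    (I J : Set ℕ) (hIJ : I ∪ J = Set.univ)
    (c C : ℝ≥0∞) (hc0 : c ≠ 0) (hc1 : c ≤ 1) (hC1 : 1 ≤ C)
    (hI : ∀ k ∈ I, c * w (ν k) ≤ w (ν (k+1) - 1))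
    (hJ : ∀ k ∈ J, w (ν (k+1) - 1) * E (ν (k+1) - 1) ≤ C * (w (ν k) * E (ν k)))
    (g : ℕ → ℝ≥0∞) :
    (∑' n, a n * (∑' j, g j / (D j + D n)) ^ q)
      ≤ (2 * c⁻¹ + 2 * C) * ∑' k, (∑ m ∈ Finset.Ico (ν k) (ν (k+1)), w m ^ (1/q) * g m) ^ q := by
  classical
  have hq' : q ≠ 0 := hq0.ne'
  have hct : c ≠ ⊤ := (hc1.trans_lt ENNReal.one_lt_top).ne
  have hD0 : ∀ n, D n ≠ 0 := fun n => (lt_of_lt_of_le zero_lt_one (hD1 n)).ne'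
  have hE0 : ∀ n, E n ≠ 0 := fun n => (lt_of_lt_of_le zero_lt_one (hE1 n)).ne'
  have hEmono : Monotone E := fun x y hxy => by
    rw [← hDq x, ← hDq y]; exact ENNReal.rpow_le_rpow (hDmono hxy) hq0.le
  have hEq : ∀ n, (E n) ^ (1/q) = D n := fun n => by
    rw [← hDq n, one_div, ENNReal.rpow_rpow_inv hq']
  have hwmono : ∀ {x y : ℕ}, x ≤ y → w y ≤ w x := fun {x y} hxy => by
    rw [hw x, hw y]
    exact ENNReal.tsum_le_tsum fun n => ENNReal.div_le_div_left (add_le_add_right (hEmono hxy) _) _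
  have hwEeq : ∀ m, w m * E m = ∑' n, a n * (E m * (E n + E m)⁻¹) := fun m => by
    rw [hw m, ← ENNReal.tsum_mul_right]
    exact tsum_congr fun n => by rw [div_eq_mul_inv, mul_assoc, mul_comm ((E n + E m)⁻¹)]
  have hwEmono : ∀ {x y : ℕ}, x ≤ y → w x * E x ≤ w y * E y := fun {x y} hxy => by
    rw [hwEeq x, hwEeq y]
    exact ENNReal.tsum_le_tsum fun n => mul_le_mul_right
      (frac_mono (hE0 n) (hEt n) (hEt x) (hEt y) (hEmono hxy)) _
  have key : ∀ k, (∑' n, a n * (∑ m ∈ Finset.Ico (ν k) (ν (k+1)), g m / (D m + D n)) ^ q)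
      ≤ (2 * c⁻¹ + 2 * C) * (∑ m ∈ Finset.Ico (ν k) (ν (k+1)), w m ^ (1/q) * g m) ^ q := by
    intro k
    have hνlt : ν k < ν (k+1) := hν (Nat.lt_succ_self k)
    have hkIJ : k ∈ I ∪ J := by rw [hIJ]; trivial
    set m' := ν (k+1) - 1 with hm'def
    have hmm' : ∀ m ∈ Finset.Ico (ν k) (ν (k+1)), m ≤ m' := fun m hm => by
      have := (Finset.mem_Ico.1 hm).2; omega
    cases hkIJ with
    | inl hkI =>
      have hup : ∀ n, (∑ m ∈ Finset.Ico (ν k) (ν (k+1)), g m / (D m + D n)) ^ q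
          ≤ (∑ m ∈ Finset.Ico (ν k) (ν (k+1)), g m) ^ q * (2 * (E n + E (ν k))⁻¹) := by
        intro n
        calc (∑ m ∈ Finset.Ico (ν k) (ν (k+1)), g m / (D m + D n)) ^ q
            ≤ ((∑ m ∈ Finset.Ico (ν k) (ν (k+1)), g m) * (D (ν k) + D n)⁻¹) ^ q := by
              refine ENNReal.rpow_le_rpow ?_ hq0.le
              rw [Finset.sum_mul]
              refine Finset.sum_le_sum fun m hm => ?_
              rw [div_eq_mul_inv]
              exact mul_le_mul_right (ENNReal.inv_le_inv.2
                (add_le_add_left (hDmono (Finset.mem_Ico.1 hm).1) _)) _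
          _ = (∑ m ∈ Finset.Ico (ν k) (ν (k+1)), g m) ^ q * ((D (ν k) + D n) ^ q)⁻¹ := by
              rw [ENNReal.mul_rpow_of_nonneg _ _ hq0.le, ENNReal.inv_rpow]
          _ ≤ _ := by
              refine mul_le_mul_right (inv_le_two_inv ?_) _
              rw [two_mul]
              exact add_le_add
                (by rw [← hDq n]; exact ENNReal.rpow_le_rpow le_add_self hq0.le)
                (by rw [← hDq (ν k)]; exact ENNReal.rpow_le_rpow le_self_add hq0.le)
      have hlow : c * (w (ν k) * (∑ m ∈ Finset.Ico (ν k) (ν (k+1)), g m) ^ q)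
          ≤ (∑ m ∈ Finset.Ico (ν k) (ν (k+1)), w m ^ (1/q) * g m) ^ q := by
        have h1 : ∀ m ∈ Finset.Ico (ν k) (ν (k+1)),
            (c * w (ν k)) ^ (1/q) * g m ≤ w m ^ (1/q) * g m := fun m hm =>
          mul_le_mul_left (ENNReal.rpow_le_rpow
            ((hI k hkI).trans (hwmono (hmm' m hm))) (by positivity)) _
        calc c * (w (ν k) * (∑ m ∈ Finset.Ico (ν k) (ν (k+1)), g m) ^ q)
            = ((c * w (ν k)) ^ (1/q) * ∑ m ∈ Finset.Ico (ν k) (ν (k+1)), g m) ^ q := by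
              rw [ENNReal.mul_rpow_of_nonneg _ _ hq0.le, one_div,
                ENNReal.rpow_inv_rpow hq', mul_assoc]
          _ ≤ _ := ENNReal.rpow_le_rpow
              (by rw [Finset.mul_sum]; exact Finset.sum_le_sum h1) hq0.le
      calc (∑' n, a n * (∑ m ∈ Finset.Ico (ν k) (ν (k+1)), g m / (D m + D n)) ^ q)
          ≤ ∑' n, (2 * (∑ m ∈ Finset.Ico (ν k) (ν (k+1)), g m) ^ q)
              * (a n * (E n + E (ν k))⁻¹) :=
            ENNReal.tsum_le_tsum fun n => le_trans (mul_le_mul_right (hup n) _) (le_of_eq (by ring))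
        _ = (2 * (∑ m ∈ Finset.Ico (ν k) (ν (k+1)), g m) ^ q) * w (ν k) := by
            rw [ENNReal.tsum_mul_left, hw (ν k)]
            exact congrArg _ (tsum_congr fun n => (div_eq_mul_inv _ _).symm)
        _ = 2 * (w (ν k) * (∑ m ∈ Finset.Ico (ν k) (ν (k+1)), g m) ^ q) := by ring
        _ ≤ 2 * (c⁻¹ * (∑ m ∈ Finset.Ico (ν k) (ν (k+1)), w m ^ (1/q) * g m) ^ q) :=
            mul_le_mul_right (le_inv_mul hc0 hct hlow) _
        _ = (2 * c⁻¹) * (∑ m ∈ Finset.Ico (ν k) (ν (k+1)), w m ^ (1/q) * g m) ^ q := by ring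
        _ ≤ _ := mul_le_mul_left le_self_add _
    | inr hkJ =>
      have hup : ∀ n, (∑ m ∈ Finset.Ico (ν k) (ν (k+1)), g m / (D m + D n)) ^ q
          ≤ (∑ m ∈ Finset.Ico (ν k) (ν (k+1)), g m * (D m)⁻¹) ^ q
            * (E m' * (2 * (E n + E m')⁻¹)) := by
        intro n
        calc (∑ m ∈ Finset.Ico (ν k) (ν (k+1)), g m / (D m + D n)) ^ q
            ≤ ((∑ m ∈ Finset.Ico (ν k) (ν (k+1)), g m * (D m)⁻¹)
                * (D m' * (D m' + D n)⁻¹)) ^ q := by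
              refine ENNReal.rpow_le_rpow ?_ hq0.le
              rw [Finset.sum_mul]
              refine Finset.sum_le_sum fun m hm => ?_
              rw [div_eq_mul_inv, mul_assoc]
              refine mul_le_mul_right ?_ _
              have hcross : D m * (D m' + D n) ≤ D m' * (D m + D n) := by
                rw [mul_add, mul_add]
                exact add_le_add (le_of_eq (mul_comm (D m) (D m')))
                  (mul_le_mul_left (hDmono (hmm' m hm)) _)
              calc (D m + D n)⁻¹ ≤ D m' * ((D m)⁻¹ * (D m' + D n)⁻¹) :=
                    inv_le_of_mul_le (hD0 m') (hDt m') (hD0 m)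
                      (hDt m) hcross
                _ = (D m)⁻¹ * (D m' * (D m' + D n)⁻¹) := by ring
          _ = (∑ m ∈ Finset.Ico (ν k) (ν (k+1)), g m * (D m)⁻¹) ^ q
                * ((D m') ^ q * ((D m' + D n) ^ q)⁻¹) := by
              rw [ENNReal.mul_rpow_of_nonneg _ _ hq0.le,
                ENNReal.mul_rpow_of_nonneg _ _ hq0.le, ENNReal.inv_rpow]
          _ ≤ _ := by
              rw [hDq m']
              refine mul_le_mul_right (mul_le_mul_right (inv_le_two_inv ?_) _) _
              rw [two_mul]
              exact add_le_add
                (by rw [← hDq n]; exact ENNReal.rpow_le_rpow le_add_self hq0.le)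
                (by rw [← hDq m']; exact ENNReal.rpow_le_rpow le_self_add hq0.le)
      have hlow : (w (ν k) * E (ν k))
            * (∑ m ∈ Finset.Ico (ν k) (ν (k+1)), g m * (D m)⁻¹) ^ q
          ≤ (∑ m ∈ Finset.Ico (ν k) (ν (k+1)), w m ^ (1/q) * g m) ^ q := by
        have h1 : ∀ m ∈ Finset.Ico (ν k) (ν (k+1)),
            (w (ν k) * E (ν k)) ^ (1/q) * (g m * (D m)⁻¹) ≤ w m ^ (1/q) * g m := by
          intro m hm
          have h2 : (w (ν k) * E (ν k)) * (E m)⁻¹ ≤ w m :=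
            mul_inv_le_of_le_mul (hE0 m) (hEt m) (hwEmono (Finset.mem_Ico.1 hm).1)
          have h3 : (w (ν k) * E (ν k)) ^ (1/q) * (D m)⁻¹ ≤ w m ^ (1/q) := by
            rw [← hEq m, ← ENNReal.inv_rpow, ← ENNReal.mul_rpow_of_nonneg _ _ (by positivity)]
            exact ENNReal.rpow_le_rpow h2 (by positivity)
          calc (w (ν k) * E (ν k)) ^ (1/q) * (g m * (D m)⁻¹)
              = ((w (ν k) * E (ν k)) ^ (1/q) * (D m)⁻¹) * g m := by ring
            _ ≤ w m ^ (1/q) * g m := mul_le_mul_left h3 _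
        calc (w (ν k) * E (ν k)) * (∑ m ∈ Finset.Ico (ν k) (ν (k+1)), g m * (D m)⁻¹) ^ q
            = ((w (ν k) * E (ν k)) ^ (1/q)
                * ∑ m ∈ Finset.Ico (ν k) (ν (k+1)), g m * (D m)⁻¹) ^ q := by
              rw [ENNReal.mul_rpow_of_nonneg _ _ hq0.le, one_div, ENNReal.rpow_inv_rpow hq']
          _ ≤ _ := ENNReal.rpow_le_rpow
              (by rw [Finset.mul_sum]; exact Finset.sum_le_sum h1) hq0.le
      calc (∑' n, a n * (∑ m ∈ Finset.Ico (ν k) (ν (k+1)), g m / (D m + D n)) ^ q)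
          ≤ ∑' n, (2 * (∑ m ∈ Finset.Ico (ν k) (ν (k+1)), g m * (D m)⁻¹) ^ q * E m')
              * (a n * (E n + E m')⁻¹) :=
            ENNReal.tsum_le_tsum fun n => le_trans (mul_le_mul_right (hup n) _) (le_of_eq (by ring))
        _ = (2 * (∑ m ∈ Finset.Ico (ν k) (ν (k+1)), g m * (D m)⁻¹) ^ q * E m') * w m' := by
            rw [ENNReal.tsum_mul_left, hw m']
            exact congrArg _ (tsum_congr fun n => (div_eq_mul_inv _ _).symm)
        _ = 2 * ((w m' * E m') * (∑ m ∈ Finset.Ico (ν k) (ν (k+1)), g m * (D m)⁻¹) ^ q) := by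
            ring
        _ ≤ 2 * ((C * (w (ν k) * E (ν k)))
              * (∑ m ∈ Finset.Ico (ν k) (ν (k+1)), g m * (D m)⁻¹) ^ q) :=
            mul_le_mul_right (mul_le_mul_left (hJ k hkJ) _) _
        _ = (2 * C) * ((w (ν k) * E (ν k))
              * (∑ m ∈ Finset.Ico (ν k) (ν (k+1)), g m * (D m)⁻¹) ^ q) := by ring
        _ ≤ (2 * C) * (∑ m ∈ Finset.Ico (ν k) (ν (k+1)), w m ^ (1/q) * g m) ^ q :=
            mul_le_mul_right hlow _
        _ ≤ _ := mul_le_mul_left le_add_self _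
  calc (∑' n, a n * (∑' j, g j / (D j + D n)) ^ q)
      ≤ ∑' k, ∑' n, a n * (∑ m ∈ Finset.Ico (ν k) (ν (k+1)), g m / (D m + D n)) ^ q := by
        rw [← ENNReal.tsum_comm]
        refine ENNReal.tsum_le_tsum fun n => ?_
        calc a n * (∑' j, g j / (D j + D n)) ^ q
            ≤ a n * ∑' k, (∑ m ∈ Finset.Ico (ν k) (ν (k+1)), g m / (D m + D n)) ^ q := by
              refine mul_le_mul_right ?_ _
              rw [tsum_partition ν hν hν0 (fun j => g j / (D j + D n))]
              exact tsum_rpow_le hq0 hq1 _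
          _ = ∑' k, a n * (∑ m ∈ Finset.Ico (ν k) (ν (k+1)), g m / (D m + D n)) ^ q :=
              ENNReal.tsum_mul_left.symm
    _ ≤ ∑' k, (2 * c⁻¹ + 2 * C) * (∑ m ∈ Finset.Ico (ν k) (ν (k+1)), w m ^ (1/q) * g m) ^ q :=
        ENNReal.tsum_le_tsum key
    _ = _ := ENNReal.tsum_mul_left


lemma core2 {q : ℝ} (hq0 : 0 < q) (hq1 : q ≤ 1)
    (E D : ℕ → ℝ≥0∞)
    (hE1 : ∀ n, 1 ≤ E n) (hEt : ∀ n, E n ≠ ⊤) (hE01 : E 0 = 1)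
    (c2 : ℝ≥0∞) (hEstep : ∀ m, E (m+1) ≤ c2 * E m)
    (hD1 : ∀ n, 1 ≤ D n) (hDt : ∀ n, D n ≠ ⊤) (hDmono : Monotone D)
    (hDq : ∀ n, D n ^ q = E n)
    (a : ℕ → ℝ≥0∞) (w : ℕ → ℝ≥0∞)
    (hw : ∀ m, w m = ∑' n, a n / (E n + E m))
    (hwt : ∀ m, w m ≠ ⊤)
    (ν : ℕ → ℕ) (hν : StrictMono ν) (hν0 : ν 0 = 0)
    (L : ℝ≥0∞) (hL4 : (4:ℝ≥0∞) < L) (hLt : L ≠ ⊤)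
    (hdec : ∀ k, L * w (ν (k+1)) ≤ w (ν k))
    (hinc : ∀ k, L * (w (ν k) * E (ν k)) ≤ w (ν (k+1)) * E (ν (k+1)))
    (I J : Set ℕ) (hIJ : I ∪ J = Set.univ)
    (c C : ℝ≥0∞) (hc0 : c ≠ 0) (hc1 : c ≤ 1) (hC1 : 1 ≤ C)
    (hI : ∀ k ∈ I, c * w (ν k) ≤ w (ν (k+1) - 1))
    (hJ : ∀ k ∈ J, w (ν (k+1) - 1) * E (ν (k+1) - 1) ≤ C * (w (ν k) * E (ν k)))
    (g : ℕ → ℝ≥0∞) :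
    (∑' k, (∑ m ∈ Finset.Ico (ν k) (ν (k+1)), w m ^ (1/q) * g m) ^ q)
      ≤ (3 * (2*C*(1 - 4*L⁻¹)⁻¹ + 2*c⁻¹*(2 + (3 + 3*c2) * (1 - 4*L⁻¹)⁻¹)))
        * ∑' n, a n * (∑' j, g j / (D j + D n)) ^ q := by
  classical
  have hq' : q ≠ 0 := hq0.ne'
  have hct : c ≠ ⊤ := (hc1.trans_lt ENNReal.one_lt_top).ne
  have hD0 : ∀ n, D n ≠ 0 := fun n => (lt_of_lt_of_le zero_lt_one (hD1 n)).ne'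
  have hE0 : ∀ n, E n ≠ 0 := fun n => (lt_of_lt_of_le zero_lt_one (hE1 n)).ne'
  have hEmono : Monotone E := fun x y hxy => by
    rw [← hDq x, ← hDq y]; exact ENNReal.rpow_le_rpow (hDmono hxy) hq0.le
  have hEq : ∀ n, (E n) ^ (1/q) = D n := fun n => by
    rw [← hDq n, one_div, ENNReal.rpow_rpow_inv hq']
  have hwmono : ∀ {x y : ℕ}, x ≤ y → w y ≤ w x := fun {x y} hxy => by
    rw [hw x, hw y]
    exact ENNReal.tsum_le_tsum fun n => ENNReal.div_le_div_left (add_le_add_right (hEmono hxy) _) _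
  have hwEeq : ∀ m, w m * E m = ∑' n, a n * (E m * (E n + E m)⁻¹) := fun m => by
    rw [hw m, ← ENNReal.tsum_mul_right]
    exact tsum_congr fun n => by rw [div_eq_mul_inv, mul_assoc, mul_comm ((E n + E m)⁻¹)]
  have hwEmono : ∀ {x y : ℕ}, x ≤ y → w x * E x ≤ w y * E y := fun {x y} hxy => by
    rw [hwEeq x, hwEeq y]
    exact ENNReal.tsum_le_tsum fun n => mul_le_mul_right
      (frac_mono (hE0 n) (hEt n) (hEt x) (hEt y) (hEmono hxy)) _
  have hEsum0 : ∀ x y : ℕ, E x + E y ≠ 0 := fun x y h => hE0 x (add_eq_zero.1 h).1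
  have hEsumt : ∀ x y : ℕ, E x + E y ≠ ⊤ := fun x y => ENNReal.add_ne_top.2 ⟨hEt x, hEt y⟩
  have hL0 : L ≠ 0 := fun h => by rw [h] at hL4; exact (not_lt_of_ge zero_le) hL4
  have h4Li : 4 * L⁻¹ < 1 := by
    have h1 : L⁻¹ < 4⁻¹ := ENNReal.inv_lt_inv.2 hL4
    calc 4 * L⁻¹ < 4 * 4⁻¹ := (ENNReal.mul_lt_mul_iff_right (by norm_num) (by norm_num)).2 h1
      _ = 1 := ENNReal.mul_inv_cancel (by norm_num) (by norm_num)
  have h2Li : 2 * L⁻¹ ≤ 1 := le_trans (mul_le_mul_left (by norm_num) _) h4Li.le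
  set CA : ℝ≥0∞ := (1 - 4*L⁻¹)⁻¹ with hCAdef
  set CB : ℝ≥0∞ := 2 + (3 + 3*c2) * CA with hCBdef
  set aa : ℕ → ℝ≥0∞ := fun k => ∑ m ∈ Finset.Ico (ν k) (ν (k+1)), a m with haadef
  set bb : ℕ → ℝ≥0∞ := fun k => ∑ m ∈ Finset.Ico (ν k) (ν (k+1)), a m * (E m)⁻¹ with hbbdef
  set Tl : ℕ → ℝ≥0∞ := fun m => ∑' n, if m ≤ n then a n * (E n)⁻¹ else 0 with hTldef
  set G : ℕ → ℝ≥0∞ := fun k => ∑ m ∈ Finset.Ico (ν k) (ν (k+1)), g m with hGdef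
  set Gd : ℕ → ℝ≥0∞ := fun k => ∑ m ∈ Finset.Ico (ν k) (ν (k+1)), g m * (D m)⁻¹ with hGddef
  set F : ℕ → ℝ≥0∞ := fun n => ∑' j, g j / (D j + D n) with hFdef
  set Lam : ℕ → ℝ≥0∞ := fun n => a n * F n ^ q with hLamdef
  set U : ℕ → ℕ → ℝ≥0∞ :=
    fun k n => ∑ m ∈ Finset.Ico (ν k) (ν (k+1)), g m / (D m + D n) with hUdef
  set Sq : ℕ → ℝ≥0∞ :=
    fun k => (∑ m ∈ Finset.Ico (ν k) (ν (k+1)), w m ^ (1/q) * g m) ^ q with hSqdef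
  set P0 : ℕ → ℝ≥0∞ := fun k => ∑ n ∈ Finset.Ico (ν k) (ν (k+1)), Lam n with hP0def
  have lemH : ∀ m, (∑ j ∈ Finset.range m, a j) ≤ 2 * (w m * E m) := by
    intro m
    have h1 : ∀ j ∈ Finset.range m, a j ≤ (2 * E m) * (a j / (E j + E m)) := by
      intro j hj
      have hEj : E j ≤ E m := hEmono (Finset.mem_range.1 hj).le
      have h2 : (E j + E m) * (E j + E m)⁻¹ = 1 :=
        ENNReal.mul_inv_cancel (hEsum0 j m) (hEsumt j m)
      calc a j = ((E j + E m) * (E j + E m)⁻¹) * a j := by rw [h2, one_mul]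
        _ ≤ ((2 * E m) * (E j + E m)⁻¹) * a j := by
            refine mul_le_mul_left (mul_le_mul_left ?_ _) _
            rw [two_mul]; exact add_le_add_left hEj _
        _ = (2 * E m) * (a j / (E j + E m)) := by rw [div_eq_mul_inv]; ring
    calc (∑ j ∈ Finset.range m, a j)
        ≤ ∑ j ∈ Finset.range m, (2 * E m) * (a j / (E j + E m)) := Finset.sum_le_sum h1
      _ = (2 * E m) * ∑ j ∈ Finset.range m, a j / (E j + E m) := by rw [Finset.mul_sum]
      _ ≤ (2 * E m) * w m := by
          refine mul_le_mul_right ?_ _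
          rw [hw m]; exact ENNReal.sum_le_tsum _
      _ = 2 * (w m * E m) := by ring
  have lemT : ∀ m, Tl m ≤ 2 * w m := by
    intro m
    rw [hTldef, hw m, ← ENNReal.tsum_mul_left]
    refine ENNReal.tsum_le_tsum fun n => ?_
    by_cases h : m ≤ n
    · rw [if_pos h, div_eq_mul_inv]
      calc a n * (E n)⁻¹ ≤ a n * (2 * (E n + E m)⁻¹) := by
            refine mul_le_mul_right (inv_le_two_inv ?_) _
            rw [two_mul]; exact add_le_add_right (hEmono h) _
        _ = 2 * (a n * (E n + E m)⁻¹) := by ring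
    · rw [if_neg h]; exact zero_le
  have lemSU : ∀ m, w m * E m ≤ (∑ j ∈ Finset.range m, a j) + E m * Tl m := by
    intro m
    rw [hwEeq m]
    have hsplit : ∀ n : ℕ, a n * (E m * (E n + E m)⁻¹)
        ≤ (if n < m then a n else 0) + (if m ≤ n then E m * (a n * (E n)⁻¹) else 0) := by
      intro n
      by_cases h : n < m
      · rw [if_pos h, if_neg (by omega), add_zero]
        calc a n * (E m * (E n + E m)⁻¹) ≤ a n * ((E n + E m) * (E n + E m)⁻¹) :=
              mul_le_mul_right (mul_le_mul_left le_add_self _) _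
          _ = a n := by rw [ENNReal.mul_inv_cancel (hEsum0 n m) (hEsumt n m), mul_one]
      · rw [if_neg h, if_pos (by omega), zero_add]
        calc a n * (E m * (E n + E m)⁻¹) ≤ a n * (E m * (E n)⁻¹) :=
            mul_le_mul_right (mul_le_mul_right (ENNReal.inv_le_inv.2 le_self_add) _) _
          _ = E m * (a n * (E n)⁻¹) := by ring
    calc (∑' n, a n * (E m * (E n + E m)⁻¹))
        ≤ ∑' n, ((if n < m then a n else 0) + (if m ≤ n then E m * (a n * (E n)⁻¹) else 0)) :=
          ENNReal.tsum_le_tsum hsplit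
      _ = (∑' n, if n < m then a n else 0)
          + ∑' n, (if m ≤ n then E m * (a n * (E n)⁻¹) else 0) := ENNReal.tsum_add
      _ = (∑ j ∈ Finset.range m, a j) + E m * Tl m := by
          congr 1
          · rw [tsum_eq_sum (s := Finset.range m)
              (fun b hb => if_neg (by simpa using hb))]
            exact Finset.sum_congr rfl fun j hj => if_pos (Finset.mem_range.1 hj)
          · rw [hTldef, ← ENNReal.tsum_mul_left]
            exact tsum_congr fun n => by rw [mul_ite, mul_zero]
  have lemTS : ∀ m1 m2 : ℕ, m1 ≤ m2 →
      Tl m1 = (∑ j ∈ Finset.Ico m1 m2, a j * (E j)⁻¹) + Tl m2 := by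
    intro m1 m2 h12
    have e1 : (∑ j ∈ Finset.Ico m1 m2, a j * (E j)⁻¹)
        = ∑' n, if n ∈ Finset.Ico m1 m2 then a n * (E n)⁻¹ else 0 := by
      rw [tsum_eq_sum (s := Finset.Ico m1 m2) (fun b hb => if_neg hb)]
      exact (Finset.sum_congr rfl fun j hj => if_pos hj).symm
    rw [hTldef, e1, ← ENNReal.tsum_add]
    refine tsum_congr fun n => ?_
    by_cases h1 : m1 ≤ n
    · by_cases h2 : m2 ≤ n
      · rw [if_pos h1, if_neg (by simp only [Finset.mem_Ico]; omega), if_pos h2, zero_add]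
      · rw [if_pos h1, if_pos (by simp only [Finset.mem_Ico]; omega), if_neg h2, add_zero]
    · rw [if_neg h1, if_neg (by simp only [Finset.mem_Ico]; omega), if_neg (by omega), add_zero]
  have hXstep : ∀ k, w (ν k) * E (ν k) ≤ L⁻¹ * (w (ν (k+1)) * E (ν (k+1))) := fun k =>
    le_inv_mul hL0 hLt (hinc k)
  have hwstep : ∀ k, w (ν (k+1)) ≤ L⁻¹ * w (ν k) := fun k => le_inv_mul hL0 hLt (hdec k)
  have hXt : ∀ m, w m * E m ≠ ⊤ := fun m => ENNReal.mul_ne_top (hwt m) (hEt m)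
  have locSucc : ∀ k, w (ν (k+1)) * E (ν (k+1)) ≤ CA * (aa k + E (ν (k+1)) * bb (k+1)) := by
    intro k
    have h1 := lemSU (ν (k+1))
    have hsplitH : (∑ j ∈ Finset.range (ν (k+1)), a j)
        = (∑ j ∈ Finset.range (ν k), a j) + aa k := by
      rw [haadef, Finset.range_eq_Ico, Finset.range_eq_Ico]
      exact (Finset.sum_Ico_consecutive _ (Nat.zero_le _) (hν (Nat.lt_succ_self k)).le).symm
    have h2 : (∑ j ∈ Finset.range (ν k), a j)
        ≤ (2 * L⁻¹) * (w (ν (k+1)) * E (ν (k+1))) := by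
      calc (∑ j ∈ Finset.range (ν k), a j) ≤ 2 * (w (ν k) * E (ν k)) := lemH (ν k)
        _ ≤ 2 * (L⁻¹ * (w (ν (k+1)) * E (ν (k+1)))) := mul_le_mul_right (hXstep k) _
        _ = (2 * L⁻¹) * (w (ν (k+1)) * E (ν (k+1))) := by ring
    have h3 : E (ν (k+1)) * Tl (ν (k+1))
        ≤ E (ν (k+1)) * bb (k+1) + (2 * L⁻¹) * (w (ν (k+1)) * E (ν (k+1))) := by
      rw [lemTS (ν (k+1)) (ν (k+2)) (hν (Nat.lt_succ_self (k+1))).le, mul_add]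
      refine add_le_add (le_of_eq (by rw [hbbdef])) ?_
      calc E (ν (k+1)) * Tl (ν (k+2)) ≤ E (ν (k+1)) * (2 * w (ν (k+2))) :=
            mul_le_mul_right (lemT _) _
        _ ≤ E (ν (k+1)) * (2 * (L⁻¹ * w (ν (k+1)))) :=
            mul_le_mul_right (mul_le_mul_right (hwstep (k+1)) _) _
        _ = (2 * L⁻¹) * (w (ν (k+1)) * E (ν (k+1))) := by ring
    have h4 : w (ν (k+1)) * E (ν (k+1))
        ≤ (aa k + E (ν (k+1)) * bb (k+1)) + (4 * L⁻¹) * (w (ν (k+1)) * E (ν (k+1))) := by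
      calc w (ν (k+1)) * E (ν (k+1))
          ≤ (∑ j ∈ Finset.range (ν (k+1)), a j) + E (ν (k+1)) * Tl (ν (k+1)) := h1
        _ ≤ ((2 * L⁻¹) * (w (ν (k+1)) * E (ν (k+1))) + aa k)
            + (E (ν (k+1)) * bb (k+1) + (2 * L⁻¹) * (w (ν (k+1)) * E (ν (k+1)))) := by
            rw [hsplitH]
            exact add_le_add (add_le_add_left h2 _) h3
        _ = (aa k + E (ν (k+1)) * bb (k+1)) + (4 * L⁻¹) * (w (ν (k+1)) * E (ν (k+1))) := by
            ring
    exact absorb (hXt _) h4Li h4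
  have loc0 : w (ν 0) * E (ν 0) ≤ CA * bb 0 := by
    rw [hν0, hE01, mul_one]
    have h1 : w 0 ≤ Tl 0 := by
      have h := lemSU 0
      rw [hE01] at h
      simpa using h
    have h3 : Tl 0 ≤ bb 0 + (4 * L⁻¹) * w 0 := by
      have h4 := lemTS 0 (ν 1) (Nat.zero_le _)
      have h5 : (∑ j ∈ Finset.Ico 0 (ν 1), a j * (E j)⁻¹) = bb 0 := by
        rw [hbbdef]
        simp only [hν0]
      rw [h4, h5]
      refine add_le_add_right ?_ _
      calc Tl (ν 1) ≤ 2 * w (ν 1) := lemT _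
        _ ≤ 2 * (L⁻¹ * w (ν 0)) := mul_le_mul_right (hwstep 0) _
        _ = (2 * L⁻¹) * w 0 := by rw [hν0]; ring
        _ ≤ (4 * L⁻¹) * w 0 := mul_le_mul_left (mul_le_mul_left (by norm_num) _) _
    exact absorb (hwt 0) h4Li (h1.trans h3)
  -- upper bounds for the block sums
  have hSJ : ∀ k ∈ J, Sq k ≤ C * ((w (ν k) * E (ν k)) * Gd k ^ q) := by
    intro k hk
    have hbound : ∀ m ∈ Finset.Ico (ν k) (ν (k+1)),
        w m ^ (1/q) * g m ≤ (C * (w (ν k) * E (ν k))) ^ (1/q) * (g m * (D m)⁻¹) := by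
      intro m hm
      obtain ⟨hm1, hm2⟩ := Finset.mem_Ico.1 hm
      have hmm' : m ≤ ν (k+1) - 1 := by omega
      have h1 : w m * E m ≤ C * (w (ν k) * E (ν k)) := (hwEmono hmm').trans (hJ k hk)
      have h2 : w m ≤ (C * (w (ν k) * E (ν k))) * (E m)⁻¹ := by
        have e : w m = (w m * E m) * (E m)⁻¹ := by
          rw [mul_assoc, ENNReal.mul_inv_cancel (hE0 m) (hEt m), mul_one]
        rw [e]; exact mul_le_mul_left h1 _
      have h3 : w m ^ (1/q) ≤ (C * (w (ν k) * E (ν k))) ^ (1/q) * (D m)⁻¹ := by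
        calc w m ^ (1/q) ≤ ((C * (w (ν k) * E (ν k))) * (E m)⁻¹) ^ (1/q) :=
              ENNReal.rpow_le_rpow h2 (by positivity)
          _ = (C * (w (ν k) * E (ν k))) ^ (1/q) * (D m)⁻¹ := by
              rw [ENNReal.mul_rpow_of_nonneg _ _ (by positivity), ENNReal.inv_rpow, hEq m]
      calc w m ^ (1/q) * g m ≤ ((C * (w (ν k) * E (ν k))) ^ (1/q) * (D m)⁻¹) * g m :=
            mul_le_mul_left h3 _
        _ = (C * (w (ν k) * E (ν k))) ^ (1/q) * (g m * (D m)⁻¹) := by ring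
    simp only [hSqdef]
    calc (∑ m ∈ Finset.Ico (ν k) (ν (k+1)), w m ^ (1/q) * g m) ^ q
        ≤ ((C * (w (ν k) * E (ν k))) ^ (1/q) * Gd k) ^ q := by
          refine ENNReal.rpow_le_rpow ?_ hq0.le
          rw [hGddef]
          rw [Finset.mul_sum]
          exact Finset.sum_le_sum hbound
      _ = C * ((w (ν k) * E (ν k)) * Gd k ^ q) := by
          rw [ENNReal.mul_rpow_of_nonneg _ _ hq0.le, one_div, ENNReal.rpow_inv_rpow hq',
            mul_assoc]
  have hSI : ∀ k ∈ I, Sq k ≤ c⁻¹ * (w (ν (k+1) - 1) * G k ^ q) := by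
    intro k hk
    have hbound : ∀ m ∈ Finset.Ico (ν k) (ν (k+1)),
        w m ^ (1/q) * g m ≤ w (ν k) ^ (1/q) * g m := fun m hm =>
      mul_le_mul_left (ENNReal.rpow_le_rpow (hwmono (Finset.mem_Ico.1 hm).1)
        (by positivity)) _
    have h1 : Sq k ≤ w (ν k) * G k ^ q := by
      simp only [hSqdef, hGdef]
      calc (∑ m ∈ Finset.Ico (ν k) (ν (k+1)), w m ^ (1/q) * g m) ^ q
          ≤ (w (ν k) ^ (1/q) * ∑ m ∈ Finset.Ico (ν k) (ν (k+1)), g m) ^ q := by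
            refine ENNReal.rpow_le_rpow ?_ hq0.le
            rw [Finset.mul_sum]
            exact Finset.sum_le_sum hbound
        _ = w (ν k) * (∑ m ∈ Finset.Ico (ν k) (ν (k+1)), g m) ^ q := by
            rw [ENNReal.mul_rpow_of_nonneg _ _ hq0.le, one_div, ENNReal.rpow_inv_rpow hq']
    have h2 : w (ν k) ≤ c⁻¹ * w (ν (k+1) - 1) := le_inv_mul hc0 hct (hI k hk)
    calc Sq k ≤ w (ν k) * G k ^ q := h1
      _ ≤ (c⁻¹ * w (ν (k+1) - 1)) * G k ^ q := mul_le_mul_left h2 _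
      _ = c⁻¹ * (w (ν (k+1) - 1) * G k ^ q) := by rw [mul_assoc]
  -- localization at ν(k+1)-1
  have locI : ∀ k, w (ν (k+1) - 1) * E (ν (k+1) - 1)
      ≤ CB * aa k + CB * (E (ν (k+1) - 1) * bb (k+1)) := by
    intro k
    have hm12 : ν k ≤ ν (k+1) - 1 ∧ ν (k+1) - 1 < ν (k+1) := by
      have := hν (show k < k + 1 by omega); omega
    obtain ⟨hm1, hm2⟩ := hm12
    have hmp1 : ν (k+1) = (ν (k+1) - 1) + 1 := by omega
    have hY := lemSU (ν (k+1) - 1)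
    have hH1 : (∑ j ∈ Finset.range (ν (k+1) - 1), a j)
        ≤ (∑ j ∈ Finset.range (ν k), a j) + aa k := by
      rw [Finset.range_eq_Ico, Finset.range_eq_Ico,
        ← Finset.sum_Ico_consecutive a (Nat.zero_le (ν k)) hm1]
      refine add_le_add_right ?_ _
      rw [haadef]
      exact Finset.sum_le_sum_of_subset (Finset.Ico_subset_Ico le_rfl hm2.le)
    have hEsucc : E (ν (k+1)) ≤ c2 * E (ν (k+1) - 1) := by
      rw [hmp1]; exact hEstep _
    have hH2 : (∑ j ∈ Finset.range (ν k), a j)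
        ≤ CA * aa k + CA * (c2 * (E (ν (k+1) - 1) * bb (k+1))) := by
      calc (∑ j ∈ Finset.range (ν k), a j) ≤ 2 * (w (ν k) * E (ν k)) := lemH _
        _ ≤ 2 * (L⁻¹ * (w (ν (k+1)) * E (ν (k+1)))) := mul_le_mul_right (hXstep k) _
        _ = (2 * L⁻¹) * (w (ν (k+1)) * E (ν (k+1))) := by ring
        _ ≤ 1 * (w (ν (k+1)) * E (ν (k+1))) := mul_le_mul_left h2Li _
        _ = w (ν (k+1)) * E (ν (k+1)) := one_mul _
        _ ≤ CA * (aa k + E (ν (k+1)) * bb (k+1)) := locSucc k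
        _ ≤ CA * (aa k + (c2 * E (ν (k+1) - 1)) * bb (k+1)) :=
            mul_le_mul_right (add_le_add_right (mul_le_mul_left hEsucc _) _) _
        _ = CA * aa k + CA * (c2 * (E (ν (k+1) - 1) * bb (k+1))) := by ring
    have hT1 : E (ν (k+1) - 1) * Tl (ν (k+1) - 1)
        ≤ aa k + (2 * CA) * (aa k + c2 * (E (ν (k+1) - 1) * bb (k+1))) := by
      rw [lemTS (ν (k+1) - 1) (ν (k+1)) (by omega), mul_add]
      refine add_le_add ?_ ?_
      · calc E (ν (k+1) - 1) * (∑ j ∈ Finset.Ico (ν (k+1) - 1) (ν (k+1)), a j * (E j)⁻¹)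
            = ∑ j ∈ Finset.Ico (ν (k+1) - 1) (ν (k+1)), E (ν (k+1) - 1) * (a j * (E j)⁻¹) :=
              Finset.mul_sum _ _ _
          _ ≤ ∑ j ∈ Finset.Ico (ν (k+1) - 1) (ν (k+1)), a j := by
              refine Finset.sum_le_sum fun j hj => ?_
              have hj1 : ν (k+1) - 1 ≤ j := (Finset.mem_Ico.1 hj).1
              calc E (ν (k+1) - 1) * (a j * (E j)⁻¹) ≤ E j * (a j * (E j)⁻¹) :=
                    mul_le_mul_left (hEmono hj1) _
                _ = a j * (E j * (E j)⁻¹) := by ring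
                _ = a j := by rw [ENNReal.mul_inv_cancel (hE0 j) (hEt j), mul_one]
          _ ≤ aa k := by
              rw [haadef]
              exact Finset.sum_le_sum_of_subset (Finset.Ico_subset_Ico hm1 le_rfl)
      · calc E (ν (k+1) - 1) * Tl (ν (k+1))
            ≤ E (ν (k+1) - 1) * (2 * w (ν (k+1))) := mul_le_mul_right (lemT _) _
          _ = 2 * (w (ν (k+1)) * E (ν (k+1) - 1)) := by ring
          _ ≤ 2 * (w (ν (k+1)) * E (ν (k+1))) :=
              mul_le_mul_right (mul_le_mul_right (hEmono (by omega)) _) _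
          _ ≤ 2 * (CA * (aa k + E (ν (k+1)) * bb (k+1))) := mul_le_mul_right (locSucc k) _
          _ ≤ 2 * (CA * (aa k + (c2 * E (ν (k+1) - 1)) * bb (k+1))) :=
              mul_le_mul_right (mul_le_mul_right (add_le_add_right
                (mul_le_mul_left hEsucc _) _) _) _
          _ = (2 * CA) * (aa k + c2 * (E (ν (k+1) - 1) * bb (k+1))) := by ring
    calc w (ν (k+1) - 1) * E (ν (k+1) - 1)
        ≤ (∑ j ∈ Finset.range (ν (k+1) - 1), a j)
          + E (ν (k+1) - 1) * Tl (ν (k+1) - 1) := hY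
      _ ≤ ((∑ j ∈ Finset.range (ν k), a j) + aa k)
          + (aa k + (2 * CA) * (aa k + c2 * (E (ν (k+1) - 1) * bb (k+1)))) :=
          add_le_add hH1 hT1
      _ ≤ ((CA * aa k + CA * (c2 * (E (ν (k+1) - 1) * bb (k+1)))) + aa k)
          + (aa k + (2 * CA) * (aa k + c2 * (E (ν (k+1) - 1) * bb (k+1)))) :=
          add_le_add (add_le_add_left hH2 _) le_rfl
      _ = (2 + 3 * CA) * aa k + (3 * c2 * CA) * (E (ν (k+1) - 1) * bb (k+1)) := by ring
      _ ≤ CB * aa k + CB * (E (ν (k+1) - 1) * bb (k+1)) := by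
          refine add_le_add (mul_le_mul_left ?_ _) (mul_le_mul_left ?_ _)
          · rw [hCBdef]
            refine add_le_add_right ?_ _
            refine mul_le_mul_left ?_ _
            exact le_self_add
          · rw [hCBdef]
            calc 3 * c2 * CA ≤ (3 + 3 * c2) * CA := mul_le_mul_left le_add_self _
              _ ≤ 2 + (3 + 3 * c2) * CA := le_add_self
  -- lower bounds via partial LHS sums
  have hmulinv2 : ∀ z : ℝ≥0∞, (2 * z)⁻¹ = 2⁻¹ * z⁻¹ := fun z =>
    ENNReal.mul_inv (Or.inl (by norm_num)) (Or.inl (by norm_num))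
  have hhalf : (2⁻¹ : ℝ≥0∞) ≤ (2⁻¹ : ℝ≥0∞) ^ q := by
    calc (2⁻¹ : ℝ≥0∞) = (2⁻¹ : ℝ≥0∞) ^ (1:ℝ) := (ENNReal.rpow_one _).symm
      _ ≤ (2⁻¹ : ℝ≥0∞) ^ q := ENNReal.rpow_le_rpow_of_exponent_ge (by norm_num) hq1
  have hdouble : ∀ {x y : ℝ≥0∞}, 2⁻¹ * x ≤ y → x ≤ 2 * y := by
    intro x y h
    calc x = 2 * (2⁻¹ * x) := by
          rw [← mul_assoc, ENNReal.mul_inv_cancel (by norm_num) (by norm_num), one_mul]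
      _ ≤ 2 * y := mul_le_mul_right h _
  have hker : ∀ m n t : ℕ, D m ≤ D t → D n ≤ D t → 2⁻¹ * (D t)⁻¹ ≤ (D m + D n)⁻¹ := by
    intro m n t h1 h2
    rw [← hmulinv2 (D t)]
    exact ENNReal.inv_le_inv.2 (by rw [two_mul]; exact add_le_add h1 h2)
  have hkerB : ∀ k m n : ℕ, ν k ≤ m → ν k ≤ n →
      D (ν k) * (2⁻¹ * ((D m)⁻¹ * (D n)⁻¹)) ≤ (D m + D n)⁻¹ := by
    intro k m n h1 h2
    have hx : (2 * (D m * D n))⁻¹ = 2⁻¹ * ((D m)⁻¹ * (D n)⁻¹) := by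
      rw [hmulinv2, ENNReal.mul_inv (Or.inl (hD0 m)) (Or.inl (hDt m))]
    rw [← hx]
    refine mul_inv_le_inv ?_ ?_ ?_ ?_ ?_
    · exact mul_ne_zero (by norm_num) (mul_ne_zero (hD0 m) (hD0 n))
    · exact ENNReal.mul_ne_top (by norm_num) (ENNReal.mul_ne_top (hDt m) (hDt n))
    · exact fun h => hD0 m (add_eq_zero.1 h).1
    · exact ENNReal.add_ne_top.2 ⟨hDt m, hDt n⟩
    · rw [mul_add, two_mul]
      refine add_le_add ?_ ?_
      · calc D (ν k) * D m ≤ D n * D m := mul_le_mul_left (hDmono h2) _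
          _ = D m * D n := mul_comm _ _
      · exact mul_le_mul_left (hDmono h1) _
  have hUF : ∀ k n, U k n ≤ F n := fun k n => by
    simp only [hUdef, hFdef]
    exact ENNReal.sum_le_tsum _
  have hLamU : ∀ k n, a n * (U k n) ^ q ≤ Lam n := fun k n => by
    simp only [hLamdef]
    exact mul_le_mul_right (ENNReal.rpow_le_rpow (hUF k n) hq0.le) _
  have lbA : ∀ j, aa j * Gd (j+1) ^ q ≤ 2 * P0 j := by
    intro j
    have hUq : ∀ n ∈ Finset.Ico (ν j) (ν (j+1)), 2⁻¹ * Gd (j+1) ^ q ≤ (U (j+1) n) ^ q := by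
      intro n hn
      have hn2 : n < ν (j+1) := (Finset.mem_Ico.1 hn).2
      have hU : 2⁻¹ * Gd (j+1) ≤ U (j+1) n := by
        simp only [hGddef, hUdef]
        rw [Finset.mul_sum]
        refine Finset.sum_le_sum fun m hm => ?_
        have hnm : n ≤ m := le_trans hn2.le (Finset.mem_Ico.1 hm).1
        rw [div_eq_mul_inv]
        calc 2⁻¹ * (g m * (D m)⁻¹) = g m * (2⁻¹ * (D m)⁻¹) := by ring
          _ ≤ g m * (D m + D n)⁻¹ :=
              mul_le_mul_right (hker m n m le_rfl (hDmono hnm)) _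
      calc 2⁻¹ * Gd (j+1) ^ q ≤ 2⁻¹ ^ q * Gd (j+1) ^ q := mul_le_mul_left hhalf _
        _ = (2⁻¹ * Gd (j+1)) ^ q := (ENNReal.mul_rpow_of_nonneg _ _ hq0.le).symm
        _ ≤ (U (j+1) n) ^ q := ENNReal.rpow_le_rpow hU hq0.le
    refine hdouble ?_
    calc 2⁻¹ * (aa j * Gd (j+1) ^ q) = aa j * (2⁻¹ * Gd (j+1) ^ q) := by ring
      _ = ∑ n ∈ Finset.Ico (ν j) (ν (j+1)), a n * (2⁻¹ * Gd (j+1) ^ q) := by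
          simp only [haadef]
          rw [Finset.sum_mul]
      _ ≤ ∑ n ∈ Finset.Ico (ν j) (ν (j+1)), Lam n :=
          Finset.sum_le_sum fun n hn =>
            le_trans (mul_le_mul_right (hUq n hn) _) (hLamU (j+1) n)
      _ = P0 j := by simp only [hP0def]
  have lbB : ∀ k, (E (ν k) * bb k) * Gd k ^ q ≤ 2 * P0 k := by
    intro k
    have hUq : ∀ n ∈ Finset.Ico (ν k) (ν (k+1)),
        E (ν k) * (2⁻¹ * ((E n)⁻¹ * Gd k ^ q)) ≤ (U k n) ^ q := by
      intro n hn
      obtain ⟨hn1, _⟩ := Finset.mem_Ico.1 hn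
      have hU : D (ν k) * (2⁻¹ * ((D n)⁻¹ * Gd k)) ≤ U k n := by
        simp only [hGddef, hUdef]
        have e1 : D (ν k) * (2⁻¹ * ((D n)⁻¹ * ∑ m ∈ Finset.Ico (ν k) (ν (k+1)),
            g m * (D m)⁻¹))
            = ∑ m ∈ Finset.Ico (ν k) (ν (k+1)),
              g m * (D (ν k) * (2⁻¹ * ((D m)⁻¹ * (D n)⁻¹))) := by
          rw [Finset.mul_sum, Finset.mul_sum, Finset.mul_sum]
          exact Finset.sum_congr rfl fun m hm => by ring
        rw [e1]
        refine Finset.sum_le_sum fun m hm => ?_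
        rw [div_eq_mul_inv]
        exact mul_le_mul_right (hkerB k m n (Finset.mem_Ico.1 hm).1 hn1) _
      have e2 : (D (ν k) * (2⁻¹ * ((D n)⁻¹ * Gd k))) ^ q
          = E (ν k) * ((2⁻¹:ℝ≥0∞) ^ q * ((E n)⁻¹ * Gd k ^ q)) := by
        simp only [ENNReal.mul_rpow_of_nonneg _ _ hq0.le, ENNReal.inv_rpow, hDq]
      calc E (ν k) * (2⁻¹ * ((E n)⁻¹ * Gd k ^ q))
          ≤ E (ν k) * ((2⁻¹:ℝ≥0∞) ^ q * ((E n)⁻¹ * Gd k ^ q)) :=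
            mul_le_mul_right (mul_le_mul_left hhalf _) _
        _ = (D (ν k) * (2⁻¹ * ((D n)⁻¹ * Gd k))) ^ q := e2.symm
        _ ≤ (U k n) ^ q := ENNReal.rpow_le_rpow hU hq0.le
    refine hdouble ?_
    calc 2⁻¹ * ((E (ν k) * bb k) * Gd k ^ q)
        = ∑ n ∈ Finset.Ico (ν k) (ν (k+1)),
            (a n * (E n)⁻¹) * (2⁻¹ * (E (ν k) * Gd k ^ q)) := by
          simp only [hbbdef]
          rw [← Finset.sum_mul]
          ring
      _ ≤ ∑ n ∈ Finset.Ico (ν k) (ν (k+1)), Lam n := by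
          refine Finset.sum_le_sum fun n hn => ?_
          calc (a n * (E n)⁻¹) * (2⁻¹ * (E (ν k) * Gd k ^ q))
              = a n * ((E n)⁻¹ * (2⁻¹ * (E (ν k) * Gd k ^ q))) := by ring
            _ = a n * (E (ν k) * (2⁻¹ * ((E n)⁻¹ * Gd k ^ q))) := by ring
            _ ≤ a n * (U k n) ^ q := mul_le_mul_right (hUq n hn) _
            _ ≤ Lam n := hLamU k n
      _ = P0 k := by simp only [hP0def]
  have lbC : ∀ k, (aa k * (E (ν (k+1) - 1))⁻¹) * G k ^ q ≤ 2 * P0 k := by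
    intro k
    have hUq : ∀ n ∈ Finset.Ico (ν k) (ν (k+1)),
        2⁻¹ * ((E (ν (k+1) - 1))⁻¹ * G k ^ q) ≤ (U k n) ^ q := by
      intro n hn
      have hn2 : n ≤ ν (k+1) - 1 := by
        have := (Finset.mem_Ico.1 hn).2; omega
      have hU : 2⁻¹ * ((D (ν (k+1) - 1))⁻¹ * G k) ≤ U k n := by
        simp only [hGdef, hUdef]
        have e1 : 2⁻¹ * ((D (ν (k+1) - 1))⁻¹ * ∑ m ∈ Finset.Ico (ν k) (ν (k+1)), g m)
            = ∑ m ∈ Finset.Ico (ν k) (ν (k+1)),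
                g m * (2⁻¹ * (D (ν (k+1) - 1))⁻¹) := by
          rw [Finset.mul_sum, Finset.mul_sum]
          exact Finset.sum_congr rfl fun m hm => by ring
        rw [e1]
        refine Finset.sum_le_sum fun m hm => ?_
        have hm2 : m ≤ ν (k+1) - 1 := by
          have := (Finset.mem_Ico.1 hm).2; omega
        rw [div_eq_mul_inv]
        exact mul_le_mul_right (hker m n (ν (k+1) - 1) (hDmono hm2) (hDmono hn2)) _
      have e2 : (2⁻¹ * ((D (ν (k+1) - 1))⁻¹ * G k)) ^ q
          = (2⁻¹:ℝ≥0∞) ^ q * ((E (ν (k+1) - 1))⁻¹ * G k ^ q) := by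
        simp only [ENNReal.mul_rpow_of_nonneg _ _ hq0.le, ENNReal.inv_rpow, hDq]
      calc 2⁻¹ * ((E (ν (k+1) - 1))⁻¹ * G k ^ q)
          ≤ (2⁻¹:ℝ≥0∞) ^ q * ((E (ν (k+1) - 1))⁻¹ * G k ^ q) := mul_le_mul_left hhalf _
        _ = (2⁻¹ * ((D (ν (k+1) - 1))⁻¹ * G k)) ^ q := e2.symm
        _ ≤ (U k n) ^ q := ENNReal.rpow_le_rpow hU hq0.le
    refine hdouble ?_
    calc 2⁻¹ * ((aa k * (E (ν (k+1) - 1))⁻¹) * G k ^ q)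
        = ∑ n ∈ Finset.Ico (ν k) (ν (k+1)),
            a n * (2⁻¹ * ((E (ν (k+1) - 1))⁻¹ * G k ^ q)) := by
          simp only [haadef]
          rw [← Finset.sum_mul]
          ring
      _ ≤ ∑ n ∈ Finset.Ico (ν k) (ν (k+1)), Lam n :=
          Finset.sum_le_sum fun n hn =>
            le_trans (mul_le_mul_right (hUq n hn) _) (hLamU k n)
      _ = P0 k := by simp only [hP0def]
  have lbD : ∀ k, bb (k+1) * G k ^ q ≤ 2 * P0 (k+1) := by
    intro k
    have hUq : ∀ n ∈ Finset.Ico (ν (k+1)) (ν (k+2)),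
        2⁻¹ * ((E n)⁻¹ * G k ^ q) ≤ (U k n) ^ q := by
      intro n hn
      have hn1 : ν (k+1) ≤ n := (Finset.mem_Ico.1 hn).1
      have hU : 2⁻¹ * ((D n)⁻¹ * G k) ≤ U k n := by
        simp only [hGdef, hUdef]
        have e1 : 2⁻¹ * ((D n)⁻¹ * ∑ m ∈ Finset.Ico (ν k) (ν (k+1)), g m)
            = ∑ m ∈ Finset.Ico (ν k) (ν (k+1)), g m * (2⁻¹ * (D n)⁻¹) := by
          rw [Finset.mul_sum, Finset.mul_sum]
          exact Finset.sum_congr rfl fun m hm => by ring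
        rw [e1]
        refine Finset.sum_le_sum fun m hm => ?_
        have hmn : m ≤ n := by
          have := (Finset.mem_Ico.1 hm).2; omega
        rw [div_eq_mul_inv]
        exact mul_le_mul_right (hker m n n (hDmono hmn) le_rfl) _
      have e2 : (2⁻¹ * ((D n)⁻¹ * G k)) ^ q
          = (2⁻¹:ℝ≥0∞) ^ q * ((E n)⁻¹ * G k ^ q) := by
        simp only [ENNReal.mul_rpow_of_nonneg _ _ hq0.le, ENNReal.inv_rpow, hDq]
      calc 2⁻¹ * ((E n)⁻¹ * G k ^ q)
          ≤ (2⁻¹:ℝ≥0∞) ^ q * ((E n)⁻¹ * G k ^ q) := mul_le_mul_left hhalf _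
        _ = (2⁻¹ * ((D n)⁻¹ * G k)) ^ q := e2.symm
        _ ≤ (U k n) ^ q := ENNReal.rpow_le_rpow hU hq0.le
    refine hdouble ?_
    calc 2⁻¹ * (bb (k+1) * G k ^ q)
        = ∑ n ∈ Finset.Ico (ν (k+1)) (ν (k+2)),
            (a n * (E n)⁻¹) * (2⁻¹ * G k ^ q) := by
          simp only [hbbdef]
          rw [← Finset.sum_mul]
          ring
      _ ≤ ∑ n ∈ Finset.Ico (ν (k+1)) (ν (k+2)), Lam n := by
          refine Finset.sum_le_sum fun n hn => ?_
          calc (a n * (E n)⁻¹) * (2⁻¹ * G k ^ q)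
              = a n * (2⁻¹ * ((E n)⁻¹ * G k ^ q)) := by ring
            _ ≤ a n * (U k n) ^ q := mul_le_mul_right (hUq n hn) _
            _ ≤ Lam n := hLamU k n
      _ = P0 (k+1) := by simp only [hP0def]
  -- per-block bound
  set Pm : ℕ → ℝ≥0∞ := fun k => Nat.casesOn k 0 (fun j => P0 j) with hPmdef
  have main : ∀ k, Sq k ≤ (2*C*CA + 2*c⁻¹*CB) * (Pm k + (P0 k + P0 (k+1))) := by
    intro k
    have hkIJ : k ∈ I ∪ J := by rw [hIJ]; trivial
    cases hkIJ with
    | inr hk =>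
      have h1 : Sq k ≤ C * ((w (ν k) * E (ν k)) * Gd k ^ q) := hSJ k hk
      have h2 : (w (ν k) * E (ν k)) * Gd k ^ q ≤ CA * (2 * (Pm k + P0 k)) := by
        cases k with
        | zero =>
          calc (w (ν 0) * E (ν 0)) * Gd 0 ^ q ≤ (CA * bb 0) * Gd 0 ^ q :=
                mul_le_mul_left loc0 _
            _ = CA * ((E (ν 0) * bb 0) * Gd 0 ^ q) := by rw [hν0, hE01]; ring
            _ ≤ CA * (2 * P0 0) := mul_le_mul_right (lbB 0) _
            _ ≤ CA * (2 * (Pm 0 + P0 0)) :=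
                mul_le_mul_right (mul_le_mul_right le_add_self _) _
        | succ j =>
          calc (w (ν (j+1)) * E (ν (j+1))) * Gd (j+1) ^ q
              ≤ (CA * (aa j + E (ν (j+1)) * bb (j+1))) * Gd (j+1) ^ q :=
                mul_le_mul_left (locSucc j) _
            _ = CA * (aa j * Gd (j+1) ^ q + (E (ν (j+1)) * bb (j+1)) * Gd (j+1) ^ q) := by
                ring
            _ ≤ CA * (2 * P0 j + 2 * P0 (j+1)) :=
                mul_le_mul_right (add_le_add (lbA j) (lbB (j+1))) _
            _ = CA * (2 * (Pm (j+1) + P0 (j+1))) := by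
                have hPmj : Pm (j+1) = P0 j := rfl
                rw [hPmj]; ring
      calc Sq k ≤ C * ((w (ν k) * E (ν k)) * Gd k ^ q) := h1
        _ ≤ C * (CA * (2 * (Pm k + P0 k))) := mul_le_mul_right h2 _
        _ = (2*C*CA) * (Pm k + P0 k) := by ring
        _ ≤ (2*C*CA) * (Pm k + (P0 k + P0 (k+1))) :=
            mul_le_mul_right (add_le_add_right le_self_add _) _
        _ ≤ (2*C*CA + 2*c⁻¹*CB) * (Pm k + (P0 k + P0 (k+1))) :=
            mul_le_mul_left le_self_add _
    | inl hk =>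
      have h1 : Sq k ≤ c⁻¹ * (w (ν (k+1) - 1) * G k ^ q) := hSI k hk
      have h2 : w (ν (k+1) - 1) * G k ^ q ≤ CB * (2 * (P0 k + P0 (k+1))) := by
        have hloc := locI k
        have hdiv : w (ν (k+1) - 1)
            ≤ CB * (aa k * (E (ν (k+1) - 1))⁻¹) + CB * bb (k+1) := by
          have e : w (ν (k+1) - 1)
              = (w (ν (k+1) - 1) * E (ν (k+1) - 1)) * (E (ν (k+1) - 1))⁻¹ := by
            rw [mul_assoc, ENNReal.mul_inv_cancel (hE0 _) (hEt _), mul_one]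
          rw [e]
          calc (w (ν (k+1) - 1) * E (ν (k+1) - 1)) * (E (ν (k+1) - 1))⁻¹
              ≤ (CB * aa k + CB * (E (ν (k+1) - 1) * bb (k+1))) * (E (ν (k+1) - 1))⁻¹ :=
                mul_le_mul_left hloc _
            _ = CB * (aa k * (E (ν (k+1) - 1))⁻¹)
                + CB * bb (k+1) * (E (ν (k+1) - 1) * (E (ν (k+1) - 1))⁻¹) := by ring
            _ = CB * (aa k * (E (ν (k+1) - 1))⁻¹) + CB * bb (k+1) := by
                rw [ENNReal.mul_inv_cancel (hE0 _) (hEt _), mul_one]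
        calc w (ν (k+1) - 1) * G k ^ q
            ≤ (CB * (aa k * (E (ν (k+1) - 1))⁻¹) + CB * bb (k+1)) * G k ^ q :=
              mul_le_mul_left hdiv _
          _ = CB * ((aa k * (E (ν (k+1) - 1))⁻¹) * G k ^ q)
              + CB * (bb (k+1) * G k ^ q) := by ring
          _ ≤ CB * (2 * P0 k) + CB * (2 * P0 (k+1)) :=
              add_le_add (mul_le_mul_right (lbC k) _) (mul_le_mul_right (lbD k) _)
          _ = CB * (2 * (P0 k + P0 (k+1))) := by ring
      calc Sq k ≤ c⁻¹ * (w (ν (k+1) - 1) * G k ^ q) := h1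
        _ ≤ c⁻¹ * (CB * (2 * (P0 k + P0 (k+1)))) := mul_le_mul_right h2 _
        _ = (2*c⁻¹*CB) * (P0 k + P0 (k+1)) := by ring
        _ ≤ (2*c⁻¹*CB) * (Pm k + (P0 k + P0 (k+1))) := mul_le_mul_right le_add_self _
        _ ≤ (2*C*CA + 2*c⁻¹*CB) * (Pm k + (P0 k + P0 (k+1))) :=
            mul_le_mul_left le_add_self _
  -- assembling
  have hP0sum : (∑' k, P0 k) = ∑' n, Lam n := by
    simp only [hP0def]
    exact (tsum_partition ν hν hν0 Lam).symm
  have hPmsum : (∑' k, Pm k) = ∑' k, P0 k := by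
    rw [tsum_eq_zero_add' ENNReal.summable]
    have h1 : Pm 0 = 0 := rfl
    have h2 : ∀ b : ℕ, Pm (b+1) = P0 b := fun b => rfl
    simp only [h1, h2, zero_add]
  have hP1sum : (∑' k, P0 (k+1)) ≤ ∑' k, P0 k := by
    conv_rhs => rw [tsum_eq_zero_add' (f := P0) ENNReal.summable]
    exact le_add_self
  calc (∑' k, Sq k)
      ≤ ∑' k, (2*C*CA + 2*c⁻¹*CB) * (Pm k + (P0 k + P0 (k+1))) :=
        ENNReal.tsum_le_tsum main
    _ = (2*C*CA + 2*c⁻¹*CB) * ((∑' k, Pm k) + ((∑' k, P0 k) + (∑' k, P0 (k+1)))) := by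
        rw [ENNReal.tsum_mul_left, ENNReal.tsum_add, ENNReal.tsum_add]
    _ ≤ (2*C*CA + 2*c⁻¹*CB) * ((∑' n, Lam n) + ((∑' n, Lam n) + (∑' n, Lam n))) :=
        mul_le_mul_right (add_le_add (le_of_eq (hPmsum.trans hP0sum))
          (add_le_add (le_of_eq hP0sum) (hP1sum.trans (le_of_eq hP0sum)))) _
    _ = (3 * (2*C*CA + 2*c⁻¹*CB)) * ∑' n, Lam n := by ring
    _ = (3 * (2*C*CA + 2*c⁻¹*CB)) * ∑' n, a n * (∑' j, g j / (D j + D n)) ^ q := by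
        simp only [hLamdef, hFdef]

end Stmt1Aux

/-- Blockwise splitting of the weighted sum along a discretizing sequence
(Lemma 2.2): for `0 < q ≤ 1`,
`Σ_n α_n (Σ_j f_j/(j^{pr/q}+n^{pr/q}))^q ≈ Σ_k (Σ_{μ_k ≤ l < μ_{k+1}} (ω̄_l^p)^{1/q} f_l)^q`,
with constants depending only on `p, q, r, λ` (and the constants in the
discretizing-sequence hypotheses). -/
theorem stmt1 (p q r lam : ℝ) (hp : 0 < p) (hr : 0 < r) (hq0 : 0 < q) (hq1 : q ≤ 1)
    (hlam : 4 < lam) (cI CI : ℝ≥0∞) (hcI : cI ≠ 0) (hCI : CI ≠ ⊤) :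
    ∃ K : ℝ≥0∞, K ≠ 0 ∧ K ≠ ⊤ ∧
      ∀ (α : ℕ → ℝ≥0∞) (μ : ℕ → ℕ) (I J : Set ℕ),
        (∀ l, 1 ≤ l → omegaBar p r α l ≠ ⊤) →
        μ 0 = 1 → StrictMono μ →
        (∀ k, ENNReal.ofReal lam * (μ k : ℝ≥0∞) ^ (p * r) ≤ (μ (k+1) : ℝ≥0∞) ^ (p * r)) →
        (∀ k, ENNReal.ofReal lam * omegaBar p r α (μ (k+1)) ≤ omegaBar p r α (μ k)) →
        (∀ k, ENNReal.ofReal lam * (omegaBar p r α (μ k) * (μ k : ℝ≥0∞) ^ (p * r)) ≤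
          omegaBar p r α (μ (k+1)) * (μ (k+1) : ℝ≥0∞) ^ (p * r)) →
        I ∪ J = Set.univ →
        (∀ k ∈ I, cI * omegaBar p r α (μ k) ≤ omegaBar p r α (μ (k+1) - 1) ∧
          omegaBar p r α (μ (k+1) - 1) ≤ CI * omegaBar p r α (μ k)) →
        (∀ k ∈ J, cI * (omegaBar p r α (μ k) * (μ k : ℝ≥0∞) ^ (p * r)) ≤
            omegaBar p r α (μ (k+1) - 1) * ((μ (k+1) - 1 : ℕ) : ℝ≥0∞) ^ (p * r) ∧
          omegaBar p r α (μ (k+1) - 1) * ((μ (k+1) - 1 : ℕ) : ℝ≥0∞) ^ (p * r) ≤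
            CI * (omegaBar p r α (μ k) * (μ k : ℝ≥0∞) ^ (p * r))) →
        ∀ f : ℕ → ℝ≥0∞,
          (∑' n : ℕ, α (n+1) * (∑' j : ℕ, f (j+1) /
              (((j+1 : ℕ) : ℝ≥0∞) ^ (p * r / q) + ((n+1 : ℕ) : ℝ≥0∞) ^ (p * r / q))) ^ q)
            ≤ K * ∑' k : ℕ, (∑ l ∈ Finset.Ico (μ k) (μ (k+1)),
                (omegaBar p r α l) ^ (1/q) * f l) ^ q
          ∧ (∑' k : ℕ, (∑ l ∈ Finset.Ico (μ k) (μ (k+1)),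
                (omegaBar p r α l) ^ (1/q) * f l) ^ q)
            ≤ K * ∑' n : ℕ, α (n+1) * (∑' j : ℕ, f (j+1) /
                (((j+1 : ℕ) : ℝ≥0∞) ^ (p * r / q) + ((n+1 : ℕ) : ℝ≥0∞) ^ (p * r / q))) ^ q := by
  classical
  have hP : 0 < p * r := mul_pos hp hr
  have hPq : 0 < p * r / q := div_pos hP hq0
  have hL4 : (4:ℝ≥0∞) < ENNReal.ofReal lam := by
    have h1 : ENNReal.ofReal 4 < ENNReal.ofReal lam :=
      (ENNReal.ofReal_lt_ofReal_iff (by linarith)).2 hlam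
    simpa using h1
  have hLt : ENNReal.ofReal lam ≠ ⊤ := ENNReal.ofReal_ne_top
  have h4Li : 4 * (ENNReal.ofReal lam)⁻¹ < 1 := by
    have h1 : (ENNReal.ofReal lam)⁻¹ < 4⁻¹ := ENNReal.inv_lt_inv.2 hL4
    calc 4 * (ENNReal.ofReal lam)⁻¹ < 4 * 4⁻¹ :=
          (ENNReal.mul_lt_mul_iff_right (by norm_num) (by norm_num)).2 h1
      _ = 1 := ENNReal.mul_inv_cancel (by norm_num) (by norm_num)
  have hCA0 : (1 - 4 * (ENNReal.ofReal lam)⁻¹) ≠ 0 := by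
    simpa [tsub_eq_zero_iff_le] using h4Li.not_ge
  have hCAt : (1 - 4 * (ENNReal.ofReal lam)⁻¹)⁻¹ ≠ ⊤ := ENNReal.inv_ne_top.2 hCA0
  have hc0 : (min cI 1 : ℝ≥0∞) ≠ 0 := (lt_min (zero_lt_iff.2 hcI) zero_lt_one).ne'
  have hc1 : (min cI 1 : ℝ≥0∞) ≤ 1 := min_le_right _ _
  have hcinvt : (min cI 1 : ℝ≥0∞)⁻¹ ≠ ⊤ := ENNReal.inv_ne_top.2 hc0
  have hC1 : (1:ℝ≥0∞) ≤ max CI 1 := le_max_right _ _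
  have hCt : (max CI 1 : ℝ≥0∞) ≠ ⊤ := (max_lt (Ne.lt_top hCI) ENNReal.one_lt_top).ne
  have h2Pt : ((2:ℝ≥0∞) ^ (p*r)) ≠ ⊤ :=
    ENNReal.rpow_ne_top_of_nonneg hP.le (by norm_num)
  refine ⟨(2 * (min cI 1)⁻¹ + 2 * max CI 1)
      + 3 * (2 * max CI 1 * (1 - 4 * (ENNReal.ofReal lam)⁻¹)⁻¹
        + 2 * (min cI 1)⁻¹ * (2 + (3 + 3 * (2:ℝ≥0∞) ^ (p*r))
            * (1 - 4 * (ENNReal.ofReal lam)⁻¹)⁻¹)), ?_, ?_, ?_⟩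
  · intro h
    rw [add_eq_zero] at h
    obtain ⟨h1, h2⟩ := add_eq_zero.1 h.1
    rcases mul_eq_zero.1 h2 with h3 | h3
    · norm_num at h3
    · exact absurd h3 (lt_of_lt_of_le zero_lt_one hC1).ne'
  · refine ENNReal.add_ne_top.2 ⟨?_, ?_⟩
    · exact ENNReal.add_ne_top.2 ⟨ENNReal.mul_ne_top (by norm_num) hcinvt,
        ENNReal.mul_ne_top (by norm_num) hCt⟩
    · refine ENNReal.mul_ne_top (by norm_num) (ENNReal.add_ne_top.2 ⟨?_, ?_⟩)
      · exact ENNReal.mul_ne_top (ENNReal.mul_ne_top (by norm_num) hCt) hCAt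
      · refine ENNReal.mul_ne_top (ENNReal.mul_ne_top (by norm_num) hcinvt) ?_
        exact ENNReal.add_ne_top.2 ⟨by norm_num,
          ENNReal.mul_ne_top (ENNReal.add_ne_top.2 ⟨by norm_num,
            ENNReal.mul_ne_top (by norm_num) h2Pt⟩) hCAt⟩
  intro α μ I J hfin hμ0 hμmono hgap hdec hinc hIJ hI hJ f
  have hμ1 : ∀ k, 1 ≤ μ k := fun k =>
    le_of_eq_of_le hμ0.symm (hμmono.monotone (Nat.zero_le k))
  have hν0 : μ 0 - 1 = 0 := by rw [hμ0]
  have hνmono : StrictMono (fun k => μ k - 1) := by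
    intro x y hxy
    have h1 := hμmono hxy
    have h2 := hμ1 x
    simp only
    omega
  have hμν : ∀ k, μ k = (μ k - 1) + 1 := fun k => by have := hμ1 k; omega
  have hν' : ∀ k, (μ (k+1) - 1 - 1) + 1 = μ (k+1) - 1 := fun k => by
    have h1 := hμ1 k
    have h2 := hμmono (show k < k + 1 by omega)
    omega
  have hcast : ∀ k : ℕ, ((μ k : ℕ) : ℝ≥0∞) ^ (p*r) = (((μ k - 1) + 1 : ℕ) : ℝ≥0∞) ^ (p*r) :=
    fun k => by rw [← hμν k]
  have hcast' : ∀ k : ℕ, ((μ (k+1) - 1 : ℕ) : ℝ≥0∞) ^ (p*r)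
      = (((μ (k+1) - 1 - 1) + 1 : ℕ) : ℝ≥0∞) ^ (p*r) := fun k => by rw [hν' k]
  have hw' : ∀ k : ℕ, omegaBar p r α (μ k) = omegaBar p r α ((μ k - 1) + 1) :=
    fun k => by rw [← hμν k]
  have hwm' : ∀ k : ℕ, omegaBar p r α (μ (k+1) - 1)
      = omegaBar p r α ((μ (k+1) - 1 - 1) + 1) := fun k => by rw [hν' k]
  have hcast1 : ∀ n : ℕ, (1:ℝ≥0∞) ≤ ((n+1:ℕ) : ℝ≥0∞) := fun n => by
    exact_mod_cast Nat.one_le_iff_ne_zero.2 (Nat.succ_ne_zero n)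
  have hE1 : ∀ n : ℕ, (1:ℝ≥0∞) ≤ ((n+1:ℕ) : ℝ≥0∞) ^ (p*r) := fun n => by
    calc (1:ℝ≥0∞) = 1 ^ (p*r) := (ENNReal.one_rpow _).symm
      _ ≤ _ := ENNReal.rpow_le_rpow (hcast1 n) hP.le
  have hEt : ∀ n : ℕ, ((n+1:ℕ) : ℝ≥0∞) ^ (p*r) ≠ ⊤ := fun n =>
    ENNReal.rpow_ne_top_of_nonneg hP.le (ENNReal.natCast_ne_top _)
  have hD1 : ∀ n : ℕ, (1:ℝ≥0∞) ≤ ((n+1:ℕ) : ℝ≥0∞) ^ (p*r/q) := fun n => by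
    calc (1:ℝ≥0∞) = 1 ^ (p*r/q) := (ENNReal.one_rpow _).symm
      _ ≤ _ := ENNReal.rpow_le_rpow (hcast1 n) hPq.le
  have hDt : ∀ n : ℕ, ((n+1:ℕ) : ℝ≥0∞) ^ (p*r/q) ≠ ⊤ := fun n =>
    ENNReal.rpow_ne_top_of_nonneg hPq.le (ENNReal.natCast_ne_top _)
  have hDmono : Monotone (fun n : ℕ => ((n+1:ℕ) : ℝ≥0∞) ^ (p*r/q)) := by
    intro x y hxy
    simp only
    exact ENNReal.rpow_le_rpow (by exact_mod_cast Nat.succ_le_succ hxy) hPq.le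
  have hDq : ∀ n : ℕ, (((n+1:ℕ) : ℝ≥0∞) ^ (p*r/q)) ^ q = ((n+1:ℕ) : ℝ≥0∞) ^ (p*r) := by
    intro n
    rw [← ENNReal.rpow_mul]
    congr 1
    field_simp
  have hwdef : ∀ m : ℕ, omegaBar p r α (m+1)
      = ∑' n, α (n+1) / (((n+1:ℕ):ℝ≥0∞) ^ (p*r) + ((m+1:ℕ):ℝ≥0∞) ^ (p*r)) := fun m => rfl
  have hwt : ∀ m : ℕ, omegaBar p r α (m+1) ≠ ⊤ := fun m => hfin (m+1) (by omega)
  have hE01 : ((0+1:ℕ) : ℝ≥0∞) ^ (p*r) = 1 := by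
    simp [ENNReal.one_rpow]
  have hEstep : ∀ m : ℕ, ((m+1+1:ℕ) : ℝ≥0∞) ^ (p*r)
      ≤ (2:ℝ≥0∞) ^ (p*r) * ((m+1:ℕ) : ℝ≥0∞) ^ (p*r) := by
    intro m
    have h1 : ((m+1+1:ℕ):ℝ≥0∞) ≤ 2 * ((m+1:ℕ):ℝ≥0∞) := by
      calc ((m+1+1:ℕ):ℝ≥0∞) ≤ ((2*(m+1):ℕ):ℝ≥0∞) := Nat.cast_le.2 (by omega)
        _ = 2 * ((m+1:ℕ):ℝ≥0∞) := by push_cast; ring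
    calc ((m+1+1:ℕ):ℝ≥0∞) ^ (p*r) ≤ (2 * ((m+1:ℕ):ℝ≥0∞)) ^ (p*r) :=
          ENNReal.rpow_le_rpow h1 hP.le
      _ = (2:ℝ≥0∞) ^ (p*r) * ((m+1:ℕ):ℝ≥0∞) ^ (p*r) :=
          ENNReal.mul_rpow_of_nonneg _ _ hP.le
  have hI1 : ∀ k ∈ I, (min cI 1) * omegaBar p r α ((μ k - 1) + 1)
      ≤ omegaBar p r α ((μ (k+1) - 1 - 1) + 1) := by
    intro k hk
    rw [← hw' k, ← hwm' k]
    exact le_trans (mul_le_mul_left (min_le_left _ _) _) (hI k hk).1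
  have hJ1 : ∀ k ∈ J, omegaBar p r α ((μ (k+1) - 1 - 1) + 1)
        * (((μ (k+1) - 1 - 1) + 1 : ℕ):ℝ≥0∞) ^ (p*r)
      ≤ (max CI 1) * (omegaBar p r α ((μ k - 1) + 1) * (((μ k - 1) + 1 : ℕ):ℝ≥0∞) ^ (p*r)) := by
    intro k hk
    rw [← hw' k, ← hwm' k, ← hcast k, ← hcast' k]
    exact le_trans (hJ k hk).2 (mul_le_mul_left (le_max_left _ _) _)
  have hdec1 : ∀ k, ENNReal.ofReal lam * omegaBar p r α ((μ (k+1) - 1) + 1)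
      ≤ omegaBar p r α ((μ k - 1) + 1) := by
    intro k
    rw [← hw' k, ← hw' (k+1)]
    exact hdec k
  have hinc1 : ∀ k, ENNReal.ofReal lam
        * (omegaBar p r α ((μ k - 1) + 1) * (((μ k - 1) + 1 : ℕ):ℝ≥0∞) ^ (p*r))
      ≤ omegaBar p r α ((μ (k+1) - 1) + 1) * (((μ (k+1) - 1) + 1 : ℕ):ℝ≥0∞) ^ (p*r) := by
    intro k
    rw [← hw' k, ← hw' (k+1), ← hcast k, ← hcast (k+1)]
    exact hinc k
  have hblocksum : ∀ (k : ℕ),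
      (∑ l ∈ Finset.Ico (μ k) (μ (k+1)), (omegaBar p r α l) ^ (1/q) * f l)
      = ∑ m ∈ Finset.Ico (μ k - 1) (μ (k+1) - 1),
          (omegaBar p r α (m+1)) ^ (1/q) * f (m+1) := by
    intro k
    rw [hμν k, hμν (k+1), ← Finset.map_add_right_Ico (μ k - 1) (μ (k+1) - 1) 1,
      Finset.sum_map]
    simp [addRightEmbedding_apply]
  constructor
  · have h := Stmt1Aux.core1 hq0 hq1 (fun n => ((n+1:ℕ):ℝ≥0∞) ^ (p*r))
      (fun n => ((n+1:ℕ):ℝ≥0∞) ^ (p*r/q)) hE1 hEt hD1 hDt hDmono hDq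
      (fun n => α (n+1)) (fun m => omegaBar p r α (m+1)) hwdef
      (fun k => μ k - 1) hνmono hν0 I J hIJ (min cI 1) (max CI 1)
      hc0 hc1 hC1 hI1 hJ1 (fun m => f (m+1))
    calc (∑' n : ℕ, α (n+1) * (∑' j : ℕ, f (j+1) /
            (((j+1 : ℕ) : ℝ≥0∞) ^ (p * r / q) + ((n+1 : ℕ) : ℝ≥0∞) ^ (p * r / q))) ^ q)
        ≤ (2 * (min cI 1)⁻¹ + 2 * max CI 1) * ∑' k : ℕ,
            (∑ m ∈ Finset.Ico (μ k - 1) (μ (k+1) - 1),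
              (omegaBar p r α (m+1)) ^ (1/q) * f (m+1)) ^ q := h
      _ = (2 * (min cI 1)⁻¹ + 2 * max CI 1) * ∑' k : ℕ,
            (∑ l ∈ Finset.Ico (μ k) (μ (k+1)), (omegaBar p r α l) ^ (1/q) * f l) ^ q := by
          refine congrArg _ (tsum_congr fun k => ?_)
          rw [hblocksum k]
      _ ≤ _ := mul_le_mul_left le_self_add _
  · have h := Stmt1Aux.core2 hq0 hq1 (fun n => ((n+1:ℕ):ℝ≥0∞) ^ (p*r))
      (fun n => ((n+1:ℕ):ℝ≥0∞) ^ (p*r/q)) hE1 hEt hE01 ((2:ℝ≥0∞) ^ (p*r)) hEstep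
      hD1 hDt hDmono hDq (fun n => α (n+1)) (fun m => omegaBar p r α (m+1)) hwdef hwt
      (fun k => μ k - 1) hνmono hν0 (ENNReal.ofReal lam) hL4 hLt hdec1 hinc1
      I J hIJ (min cI 1) (max CI 1) hc0 hc1 hC1 hI1 hJ1 (fun m => f (m+1))
    calc (∑' k : ℕ, (∑ l ∈ Finset.Ico (μ k) (μ (k+1)),
            (omegaBar p r α l) ^ (1/q) * f l) ^ q)
        = ∑' k : ℕ, (∑ m ∈ Finset.Ico (μ k - 1) (μ (k+1) - 1),
            (omegaBar p r α (m+1)) ^ (1/q) * f (m+1)) ^ q := by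
          refine tsum_congr fun k => ?_
          rw [hblocksum k]
      _ ≤ (3 * (2 * max CI 1 * (1 - 4 * (ENNReal.ofReal lam)⁻¹)⁻¹
            + 2 * (min cI 1)⁻¹ * (2 + (3 + 3 * (2:ℝ≥0∞) ^ (p*r))
              * (1 - 4 * (ENNReal.ofReal lam)⁻¹)⁻¹)))
          * ∑' n : ℕ, α (n+1) * (∑' j : ℕ, f (j+1) /
            (((j+1 : ℕ) : ℝ≥0∞) ^ (p * r / q) + ((n+1 : ℕ) : ℝ≥0∞) ^ (p * r / q))) ^ q := h
      _ ≤ _ := mul_le_mul_left le_add_self _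
end

section
/- Let p, r > 0, (α_n) a non-negative sequence, and ω̄_l^p := Σ_{n=1}^∞ α_n/(n^{pr} + l^{pr}), assumed finite. Let (μ_k) be a discretizing sequence for (ω̄_l^p) with parameter λ > 4. Then for every k with μ_{k+2} defined and every n with μ_k ≤ n < μ_{k+1}: Σ_{j=μ_{k-1}}^{μ_{k+2}-1} α_j/(j^{pr}+n^{pr}) ≥ (1 − 4/λ)·ω̄_n^p, and trivially the left side is at most ω̄_n^p. -/
open scoped ENNReal

namespace Stmt2Aux

/-- The summand, extended by `0` at `j = 0`, so that `omegaBar` is its full `tsum`. -/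
noncomputable def G (p r : ℝ) (α : ℕ → ℝ≥0∞) (l j : ℕ) : ℝ≥0∞ :=
  if j = 0 then 0 else α j / ((j : ℝ≥0∞) ^ (p * r) + (l : ℝ≥0∞) ^ (p * r))

variable {p r : ℝ} {α : ℕ → ℝ≥0∞}

lemma tsum_G (l : ℕ) : ∑' j : ℕ, G p r α l j = omegaBar p r α l := by
  rw [tsum_eq_zero_add' ENNReal.summable, omegaBar]
  simp [G]

lemma pow_ne_top (hq : 0 < p * r) (j : ℕ) : ((j : ℝ≥0∞)) ^ (p * r) ≠ ⊤ :=
  ENNReal.rpow_ne_top_of_nonneg hq.le (ENNReal.natCast_ne_top j)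

lemma pow_ne_zero' (hq : 0 < p * r) {j : ℕ} (hj : 1 ≤ j) : ((j : ℝ≥0∞)) ^ (p * r) ≠ 0 :=
  (ENNReal.rpow_pos (by exact_mod_cast Nat.pos_of_ne_zero (by omega))
    (ENNReal.natCast_ne_top j)).ne'

lemma pow_mono (hq : 0 < p * r) {a b : ℕ} (h : a ≤ b) :
    (a : ℝ≥0∞) ^ (p * r) ≤ (b : ℝ≥0∞) ^ (p * r) :=
  ENNReal.rpow_le_rpow (by exact_mod_cast h) hq.le

/-- `ω̄` is antitone. -/
lemma omega_anti (hq : 0 < p * r) {m n : ℕ} (h : m ≤ n) :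
    omegaBar p r α n ≤ omegaBar p r α m := by
  refine ENNReal.tsum_le_tsum fun j => ?_
  exact ENNReal.div_le_div_left (add_le_add_right (pow_mono hq h) _) _

/-- `l ↦ l^{pr}·ω̄_l` is monotone. -/
lemma omega_mul_mono (hq : 0 < p * r) {m n : ℕ} (h : m ≤ n) :
    omegaBar p r α m * (m : ℝ≥0∞) ^ (p * r) ≤ omegaBar p r α n * (n : ℝ≥0∞) ^ (p * r) := by
  rw [omegaBar, omegaBar, ← ENNReal.tsum_mul_right, ← ENNReal.tsum_mul_right]
  refine ENNReal.tsum_le_tsum fun j => ?_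
  set J := ((j + 1 : ℕ) : ℝ≥0∞) ^ (p * r) with hJ
  set M := ((m : ℝ≥0∞)) ^ (p * r) with hM
  set N := ((n : ℝ≥0∞)) ^ (p * r) with hN
  have hJ0 : J ≠ 0 := pow_ne_zero' hq (Nat.le_add_left 1 j)
  have hJt : J ≠ ⊤ := pow_ne_top hq _
  have hMt : M ≠ ⊤ := pow_ne_top hq m
  have hNt : N ≠ ⊤ := pow_ne_top hq n
  have hMN : M ≤ N := pow_mono hq h
  have e : ∀ a b c : ℝ≥0∞, a / b * c = a * (c / b) := fun a b c => by
    rw [div_eq_mul_inv, mul_right_comm, mul_assoc, ← div_eq_mul_inv]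
  rw [e, e]
  refine mul_le_mul_right ?_ _
  have e2 : ∀ a b c : ℝ≥0∞, a / b * c = a * c / b := fun a b c => by
    rw [e, ← mul_div_assoc]
  rw [ENNReal.div_le_iff (by simp [hJ0]) (ENNReal.add_ne_top.2 ⟨hJt, hMt⟩),
    e2,
    ENNReal.le_div_iff_mul_le (Or.inl (by simp [hJ0])) (Or.inl (ENNReal.add_ne_top.2 ⟨hJt, hNt⟩))]
  rw [mul_add, mul_add]
  exact add_le_add (mul_le_mul_left hMN _) (mul_comm M N).le

end Stmt2Aux

open Stmt2Aux in
/-- For a discretizing sequence `(μ_k)` with parameter `λ > 4` and `μ_k ≤ n < μ_{k+1}`: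
`Σ_{j=μ_{k-1}}^{μ_{k+2}-1} α_j/(j^{pr}+n^{pr}) ≥ (1-4/λ)·ω̄_n^p`, while trivially the
partial sum is at most `ω̄_n^p`. (Indices 0-based, so the statement is for `k ≥ 1`.) -/
theorem stmt2 (p r lam : ℝ) (hp : 0 < p) (hr : 0 < r) (hlam : 4 < lam)
    (α : ℕ → ℝ≥0∞) (μ : ℕ → ℕ)
    (hfin : ∀ l, 1 ≤ l → omegaBar p r α l ≠ ⊤)
    (hμ0 : μ 0 = 1) (hmono : StrictMono μ)
    (h3 : ∀ k, ENNReal.ofReal lam * (μ k : ℝ≥0∞) ^ (p * r) ≤ (μ (k+1) : ℝ≥0∞) ^ (p * r))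
    (h4 : ∀ k, ENNReal.ofReal lam * omegaBar p r α (μ (k+1)) ≤ omegaBar p r α (μ k))
    (h5 : ∀ k, ENNReal.ofReal lam * (omegaBar p r α (μ k) * (μ k : ℝ≥0∞) ^ (p * r)) ≤
      omegaBar p r α (μ (k+1)) * (μ (k+1) : ℝ≥0∞) ^ (p * r)) :
    ∀ k, 1 ≤ k → ∀ n, μ k ≤ n → n < μ (k+1) →
      ENNReal.ofReal (1 - 4 / lam) * omegaBar p r α n ≤
        (∑ j ∈ Finset.Ico (μ (k-1)) (μ (k+2)),
          α j / ((j : ℝ≥0∞) ^ (p * r) + (n : ℝ≥0∞) ^ (p * r)))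
      ∧ (∑ j ∈ Finset.Ico (μ (k-1)) (μ (k+2)),
          α j / ((j : ℝ≥0∞) ^ (p * r) + (n : ℝ≥0∞) ^ (p * r)))
        ≤ omegaBar p r α n := by
  intro k hk n hkn hnk1
  have hq : 0 < p * r := mul_pos hp hr
  have hμ1 : ∀ i, 1 ≤ μ i := fun i => hμ0 ▸ hmono.monotone (Nat.zero_le i)
  have hn1 : 1 ≤ n := le_trans (hμ1 k) hkn
  set m0 := μ (k - 1) with hm0
  set m2 := μ (k + 2) with hm2
  have hm01 : 1 ≤ m0 := hμ1 _
  have hm0k : m0 ≤ μ k := hmono.monotone (by omega)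
  have hm02 : m0 ≤ m2 := hmono.monotone (by omega)
  have hWt : omegaBar p r α n ≠ ⊤ := hfin n hn1
  set W := omegaBar p r α n with hW
  set N := ((n : ℝ≥0∞)) ^ (p * r) with hNdef
  have hN0 : N ≠ 0 := pow_ne_zero' hq hn1
  have hNt : N ≠ ⊤ := pow_ne_top hq n
  set L := ENNReal.ofReal lam with hL
  have hlam0 : (0 : ℝ) < lam := by linarith
  have hL0 : L ≠ 0 := (ENNReal.ofReal_pos.2 hlam0).ne'
  have hLt : L ≠ ⊤ := ENNReal.ofReal_ne_top
  -- the three pieces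
  set H := ∑ j ∈ Finset.Ico 0 m0, G p r α n j with hH
  set M := ∑ j ∈ Finset.Ico m0 m2, G p r α n j with hM
  set T := ∑' j : ℕ, G p r α n (j + m2) with hT
  -- the sum in the statement equals M
  have hMeq : (∑ j ∈ Finset.Ico m0 m2,
      α j / ((j : ℝ≥0∞) ^ (p * r) + (n : ℝ≥0∞) ^ (p * r))) = M := by
    refine Finset.sum_congr rfl fun j hj => ?_
    have : m0 ≤ j := (Finset.mem_Ico.1 hj).1
    rw [G, if_neg (by omega)]
  -- decomposition W = H + M + T
  have hdec : W = H + M + T := by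
    rw [hW, ← tsum_G n, ← Summable.sum_add_tsum_nat_add' (k := m2) ENNReal.summable,
      Finset.range_eq_Ico, ← Finset.sum_Ico_consecutive _ (Nat.zero_le m0) hm02]
  -- trivial upper bound
  have hupper : M ≤ W := by
    rw [hM, hW, ← tsum_G n]
    exact ENNReal.sum_le_tsum _
  -- head estimate
  have hheadN : H * N ≤ 2 * (omegaBar p r α m0 * (m0 : ℝ≥0∞) ^ (p * r)) := by
    set M0 := ((m0 : ℝ≥0∞)) ^ (p * r) with hM0def
    have hM00 : M0 ≠ 0 := pow_ne_zero' hq hm01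
    have hM0t : M0 ≠ ⊤ := pow_ne_top hq m0
    rw [hH, Finset.sum_mul]
    calc ∑ j ∈ Finset.Ico 0 m0, G p r α n j * N
        ≤ ∑ j ∈ Finset.Ico 0 m0, 2 * M0 * G p r α m0 j := by
          refine Finset.sum_le_sum fun j hj => ?_
          rcases Nat.eq_zero_or_pos j with hj0 | hj0
          · simp [G, hj0]
          have hjm0 : j ≤ m0 := le_of_lt (Finset.mem_Ico.1 hj).2
          set J := ((j : ℝ≥0∞)) ^ (p * r) with hJdef
          have hJt : J ≠ ⊤ := pow_ne_top hq j
          rw [G, G, if_neg (by omega), if_neg (by omega)]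
          calc α j / (J + N) * N ≤ α j / (J + N) * (J + N) :=
                mul_le_mul_right le_add_self _
            _ = α j := ENNReal.div_mul_cancel (by simp [hN0]) (ENNReal.add_ne_top.2 ⟨hJt, hNt⟩)
            _ = α j / (J + M0) * (J + M0) :=
                (ENNReal.div_mul_cancel (by simp [hM00]) (ENNReal.add_ne_top.2 ⟨hJt, hM0t⟩)).symm
            _ ≤ α j / (J + M0) * (2 * M0) := by
                refine mul_le_mul_right ?_ _
                rw [two_mul]
                exact add_le_add_left (pow_mono hq hjm0) M0
            _ = 2 * M0 * (α j / (J + M0)) := mul_comm _ _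
      _ = 2 * M0 * ∑ j ∈ Finset.Ico 0 m0, G p r α m0 j := by rw [Finset.mul_sum]
      _ ≤ 2 * M0 * omegaBar p r α m0 := by
          refine mul_le_mul_right ?_ _
          rw [← tsum_G m0]
          exact ENNReal.sum_le_tsum _
      _ = 2 * (omegaBar p r α m0 * M0) := by ring
  have hhead : L * H ≤ 2 * W := by
    rw [← ENNReal.mul_le_mul_iff_left hN0 hNt]
    calc L * H * N = L * (H * N) := mul_assoc _ _ _
      _ ≤ L * (2 * (omegaBar p r α m0 * (m0 : ℝ≥0∞) ^ (p * r))) := mul_le_mul_right hheadN _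
      _ = 2 * (L * (omegaBar p r α m0 * (m0 : ℝ≥0∞) ^ (p * r))) := by ring
      _ ≤ 2 * (omegaBar p r α (μ k) * (μ k : ℝ≥0∞) ^ (p * r)) := by
          have h := h5 (k - 1)
          rw [Nat.sub_add_cancel hk] at h
          exact mul_le_mul_right h 2
      _ ≤ 2 * (W * N) := mul_le_mul_right (omega_mul_mono hq hkn) 2
      _ = 2 * W * N := (mul_assoc _ _ _).symm
  -- tail estimate
  have htail2 : T ≤ 2 * omegaBar p r α m2 := by
    have hm21 : 1 ≤ m2 := hμ1 _
    set M2 := ((m2 : ℝ≥0∞)) ^ (p * r) with hM2def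
    have hM2t : M2 ≠ ⊤ := pow_ne_top hq m2
    calc T ≤ ∑' j : ℕ, 2 * G p r α m2 (j + m2) := by
          refine ENNReal.tsum_le_tsum fun j => ?_
          set i := j + m2 with hi
          have hi1 : 1 ≤ i := le_trans hm21 (Nat.le_add_left m2 j)
          set I := ((i : ℝ≥0∞)) ^ (p * r) with hIdef
          rw [G, G, if_neg (by omega), if_neg (by omega)]
          calc α i / (I + N) ≤ α i / I := ENNReal.div_le_div_left le_self_add _
            _ = 2 * α i / (2 * I) := (ENNReal.mul_div_mul_left _ _ two_ne_zero ENNReal.ofNat_ne_top).symm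
            _ ≤ 2 * α i / (I + M2) := by
                refine ENNReal.div_le_div_left ?_ _
                rw [two_mul]
                exact add_le_add_right (pow_mono hq (Nat.le_add_left m2 j)) I
            _ = 2 * (α i / (I + M2)) := mul_div_assoc _ _ _
      _ = 2 * ∑' j : ℕ, G p r α m2 (j + m2) := ENNReal.tsum_mul_left
      _ ≤ 2 * ∑' j : ℕ, G p r α m2 j :=
          mul_le_mul_right (ENNReal.tsum_comp_le_tsum_of_injective (add_left_injective m2) _) 2
      _ = 2 * omegaBar p r α m2 := by rw [tsum_G]
  have htail : L * T ≤ 2 * W := by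
    calc L * T ≤ L * (2 * omegaBar p r α m2) := mul_le_mul_right htail2 _
      _ = 2 * (L * omegaBar p r α m2) := by ring
      _ ≤ 2 * omegaBar p r α (μ (k + 1)) := mul_le_mul_right (h4 (k + 1)) 2
      _ ≤ 2 * W := mul_le_mul_right (omega_anti hq (le_of_lt hnk1)) 2
  -- combining
  have hHT : H + T ≤ ENNReal.ofReal (4 / lam) * W := by
    have h1 : (H + T) * L ≤ 4 * W := by
      rw [mul_comm, mul_add]
      calc L * H + L * T ≤ 2 * W + 2 * W := add_le_add hhead htail
        _ = 4 * W := by ring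
    have h2 : ENNReal.ofReal (4 / lam) = 4 / L := by
      rw [ENNReal.ofReal_div_of_pos hlam0]
      norm_num
      rfl
    rw [h2, div_eq_mul_inv, mul_right_comm, ← div_eq_mul_inv,
      ENNReal.le_div_iff_mul_le (Or.inl hL0) (Or.inl hLt)]
    exact h1
  have hHTt : H + T ≠ ⊤ :=
    ne_top_of_le_ne_top (ENNReal.mul_ne_top ENNReal.ofReal_ne_top hWt) hHT
  have hlower : ENNReal.ofReal (1 - 4 / lam) * W ≤ M := by
    have hofr : ENNReal.ofReal (1 - 4 / lam) = 1 - ENNReal.ofReal (4 / lam) := by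
      rw [ENNReal.ofReal_sub _ (by positivity)]
      simp
    calc ENNReal.ofReal (1 - 4 / lam) * W
        = 1 * W - ENNReal.ofReal (4 / lam) * W := by
          rw [hofr, ENNReal.sub_mul (fun _ _ => hWt)]
      _ = W - ENNReal.ofReal (4 / lam) * W := by rw [one_mul]
      _ ≤ W - (H + T) := tsub_le_tsub_left hHT W
      _ = M + (H + T) - (H + T) := by rw [hdec, show H + M + T = M + (H + T) from by ring]
      _ = M := ENNReal.add_sub_cancel_right hHTt
  rw [hMeq]
  exact ⟨hlower, hupper⟩
end

section
/- Let f(t) be a non-negative, non-decreasing function on [0,1] such that f(t)/t is non-increasing. Then the least concave majorant g of f on [0,1] satisfies f(t) ≤ g(t) ≤ 2·f(t) for all t ∈ (0,1]. -/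
/-- A nonnegative nondecreasing `f` on `[0,1]` with `f(t)/t` nonincreasing is equivalent
to its least concave majorant: `f ≤ g ≤ 2f` on `(0,1]`. -/
theorem stmt4 (f : ℝ → ℝ) (hnn : ∀ t ∈ Set.Icc (0:ℝ) 1, 0 ≤ f t)
    (hmono : MonotoneOn f (Set.Icc (0:ℝ) 1))
    (hdec : AntitoneOn (fun t => f t / t) (Set.Ioc (0:ℝ) 1))
    (g : ℝ → ℝ)
    (hg : ∀ x ∈ Set.Icc (0:ℝ) 1, g x = sInf {y : ℝ | ∃ h : ℝ → ℝ,
      ConcaveOn ℝ (Set.Icc (0:ℝ) 1) h ∧ (∀ t ∈ Set.Icc (0:ℝ) 1, f t ≤ h t) ∧ y = h x}) :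
    ∀ t ∈ Set.Ioc (0:ℝ) 1, f t ≤ g t ∧ g t ≤ 2 * f t := by
  intro t ht
  have ht0 : 0 < t := ht.1
  have htI : t ∈ Set.Icc (0:ℝ) 1 := ⟨le_of_lt ht0, ht.2⟩
  have hft : 0 ≤ f t := hnn t htI
  set h : ℝ → ℝ := fun x => f t + (f t / t) * x with hh
  have hconc : ConcaveOn ℝ (Set.Icc (0:ℝ) 1) h := by
    refine ⟨convex_Icc 0 1, ?_⟩
    intro x hx y hy a b ha hb hab
    simp only [hh, smul_eq_mul]
    have : a * (f t + f t / t * x) + b * (f t + f t / t * y)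
        = (a + b) * f t + f t / t * (a * x + b * y) := by ring
    rw [this, hab]; ring_nf; exact le_refl _
  have hmaj : ∀ s ∈ Set.Icc (0:ℝ) 1, f s ≤ h s := by
    intro s hs
    rcases le_or_gt s t with hst | hst
    · have h1 : f s ≤ f t := hmono hs htI hst
      have h2 : 0 ≤ f t / t * s := mul_nonneg (div_nonneg hft ht0.le) hs.1
      simp only [hh]; linarith
    · have hsI : s ∈ Set.Ioc (0:ℝ) 1 := ⟨lt_trans ht0 hst, hs.2⟩
      have h1 : f s / s ≤ f t / t := hdec ht hsI hst.le
      have hs0 : 0 < s := hsI.1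
      have h2 : f s ≤ f t / t * s := by
        rw [div_le_div_iff₀ hs0 ht0] at h1
        calc f s = f s / s * s := by field_simp
        _ ≤ f t / t * s := by
            apply mul_le_mul_of_nonneg_right _ hs0.le
            rw [div_le_div_iff₀ hs0 ht0]; linarith
      simp only [hh]; linarith
  set S := {y : ℝ | ∃ h : ℝ → ℝ,
      ConcaveOn ℝ (Set.Icc (0:ℝ) 1) h ∧ (∀ t ∈ Set.Icc (0:ℝ) 1, f t ≤ h t) ∧ y = h t} with hS
  have hmem : h t ∈ S := ⟨h, hconc, hmaj, rfl⟩
  have hlb : ∀ y ∈ S, f t ≤ y := by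
    rintro y ⟨h', _, hmaj', rfl⟩
    exact hmaj' t htI
  have hgt : g t = sInf S := hg t htI
  constructor
  · rw [hgt]
    exact le_csInf ⟨h t, hmem⟩ hlb
  · rw [hgt]
    have : sInf S ≤ h t := csInf_le ⟨f t, hlb⟩ hmem
    have hht : h t = 2 * f t := by
      simp only [hh]; field_simp; ring
    linarith
end

section
/- Let l ∈ ℕ_0, r ∈ ℕ, and let ω be r-quasiconcave with ω_N := ω(1/N). Let f ∈ L^2(𝕋^d) have Fourier coefficients a_n, and set R_n := (Σ_{‖k‖_∞ = n} |a_k|²)^{1/2}. Then the condition 'for all N ∈ ℕ: Σ_{n=1}^∞ |R_n · n^l · min(1, n^r/N^r)|² ≲ ω_N²' is equivalent to the condition 'for all k in the discretizing sequence: Σ_{n=μ_k}^{μ_{k+1}−1} |n^l R_n|² ≲ ω_{μ_k}² when k ∈ I, and Σ_{n=μ_k}^{μ_{k+1}−1} |n^{l+r} R_n|² ≲ ((μ_{k+1}−1)^r ω_{μ_{k+1}−1})² when k ∈ J', where (μ_k) is the discretizing sequence for (ω_n) with index sets I, J. -/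
open scoped ENNReal

lemma aux_geom_le_two (s : Finset ℕ) : (∑ j ∈ s, (2⁻¹ : ℝ≥0∞) ^ j) ≤ 2 := by
  calc (∑ j ∈ s, (2⁻¹ : ℝ≥0∞) ^ j) ≤ ∑' j : ℕ, (2⁻¹:ℝ≥0∞)^j := ENNReal.sum_le_tsum s
  _ = (1 - 2⁻¹)⁻¹ := ENNReal.tsum_geometric _
  _ = 2 := by rw [ENNReal.one_sub_inv_two]; simp

lemma aux_sum_blocks (μ : ℕ → ℕ) (hmono : Monotone μ) (f : ℕ → ℝ≥0∞) (K : ℕ) :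
    ∑ n ∈ Finset.Ico (μ 0) (μ K), f n
      = ∑ k ∈ Finset.range K, ∑ n ∈ Finset.Ico (μ k) (μ (k+1)), f n := by
  induction K with
  | zero => simp
  | succ K ih =>
    rw [Finset.sum_range_succ, ← ih,
      Finset.sum_Ico_consecutive f (hmono (Nat.zero_le K)) (hmono (Nat.le_succ K))]

lemma aux_cancel_le {z x y : ℝ≥0∞} (hz0 : z ≠ 0) (hztop : z ≠ ⊤) (h : z * x ≤ y) :
    x ≤ z⁻¹ * y := by
  calc x = z⁻¹ * (z * x) := by rw [← mul_assoc, ENNReal.inv_mul_cancel hz0 hztop, one_mul]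
  _ ≤ z⁻¹ * y := mul_le_mul_right h _

lemma aux_sum_Ico_le_tsum_succ (h : ℕ → ℝ≥0∞) (a b : ℕ) (ha : 1 ≤ a) :
    ∑ n ∈ Finset.Ico a b, h n ≤ ∑' m : ℕ, h (m + 1) := by
  rcases Nat.lt_or_ge a b with hab | hab
  · have hb : 1 ≤ b := le_of_lt (lt_of_le_of_lt ha hab)
    have : Finset.Ico a b = (Finset.Ico (a-1) (b-1)).map
        (addRightEmbedding 1) := by
      rw [Finset.map_add_right_Ico, Nat.sub_add_cancel ha, Nat.sub_add_cancel hb]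
    rw [this, Finset.sum_map]
    simpa using ENNReal.sum_le_tsum (f := fun m => h (m+1)) (Finset.Ico (a-1) (b-1))
  · rw [Finset.Ico_eq_empty (by omega)]; simp

lemma aux_weight_sum (k₀ K : ℕ) :
    ∑ k ∈ Finset.range K, (2⁻¹:ℝ≥0∞) ^ ((k₀ - k) + (k - k₀)) ≤ 4 := by
  have hsub : Finset.range K ⊆ Finset.range (k₀+1) ∪ Finset.Ico (k₀+1) (k₀+1+K) := by
    intro x hx
    simp only [Finset.mem_union, Finset.mem_range, Finset.mem_Ico] at *
    omega
  calc ∑ k ∈ Finset.range K, (2⁻¹:ℝ≥0∞) ^ ((k₀ - k) + (k - k₀))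
      ≤ ∑ k ∈ Finset.range (k₀+1) ∪ Finset.Ico (k₀+1) (k₀+1+K),
          (2⁻¹:ℝ≥0∞) ^ ((k₀ - k) + (k - k₀)) :=
        Finset.sum_le_sum_of_subset hsub
    _ = (∑ k ∈ Finset.range (k₀+1), (2⁻¹:ℝ≥0∞) ^ ((k₀ - k) + (k - k₀)))
        + ∑ k ∈ Finset.Ico (k₀+1) (k₀+1+K), (2⁻¹:ℝ≥0∞) ^ ((k₀ - k) + (k - k₀)) := by
        refine Finset.sum_union ?_
        refine Finset.disjoint_left.mpr fun x hx hx' => ?_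
        simp only [Finset.mem_range, Finset.mem_Ico] at *
        omega
    _ ≤ 2 + 2 := by
        gcongr
        · have : ∀ k ∈ Finset.range (k₀+1),
              (2⁻¹:ℝ≥0∞) ^ ((k₀ - k) + (k - k₀)) = (2⁻¹:ℝ≥0∞) ^ (k₀ - k) := by
            intro k hk; simp only [Finset.mem_range] at hk
            congr 1; omega
          rw [Finset.sum_congr rfl this]
          rw [show (∑ k ∈ Finset.range (k₀+1), (2⁻¹:ℝ≥0∞) ^ (k₀ - k))
              = ∑ k ∈ Finset.range (k₀+1), (2⁻¹:ℝ≥0∞) ^ (k₀ + 1 - 1 - k) from by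
            refine Finset.sum_congr rfl fun k hk => ?_; norm_num]
          rw [Finset.sum_range_reflect (fun j => (2⁻¹:ℝ≥0∞) ^ j) (k₀+1)]
          exact aux_geom_le_two _
        · have : ∀ k ∈ Finset.Ico (k₀+1) (k₀+1+K),
              (2⁻¹:ℝ≥0∞) ^ ((k₀ - k) + (k - k₀)) ≤ (2⁻¹:ℝ≥0∞) ^ (k - (k₀+1)) := by
            intro k hk; simp only [Finset.mem_Ico] at hk
            refine pow_le_pow_right_of_le_one' (by simp [ENNReal.inv_le_one]) ?_
            omega
          calc _ ≤ ∑ k ∈ Finset.Ico (k₀+1) (k₀+1+K), (2⁻¹:ℝ≥0∞) ^ (k - (k₀+1)) :=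
                Finset.sum_le_sum this
            _ = ∑ i ∈ Finset.range K, (2⁻¹:ℝ≥0∞) ^ i := by
                rw [Finset.sum_Ico_eq_sum_range]
                simp
            _ ≤ 2 := aux_geom_le_two _
    _ ≤ 4 := by norm_num

/-- Littlewood–Paley type characterization (Lemma 2.4): for `R_n ≥ 0`, the uniform
bound `Σ_n (R_n n^l min(1, n^r/N^r))² ≲ ω_N²` for all `N ≥ 1` is equivalent to the
blockwise bounds along a discretizing sequence `(μ_k)` with index sets `I, J`. -/
theorem stmt9 (l r : ℕ) (hr : 1 ≤ r) (lam : ℝ≥0∞) (hlam : 4 < lam)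
    (cI CI : ℝ≥0∞) (hc : cI ≠ 0) (hC : CI ≠ ⊤)
    (ω : ℕ → ℝ≥0∞) (hpos : ∀ n, 1 ≤ n → ω n ≠ 0) (hfin : ∀ n, ω n ≠ ⊤)
    (hdec : ∀ n, 1 ≤ n → ω (n+1) ≤ ω n)
    (hinc : ∀ n, 1 ≤ n → ω n * (n : ℝ≥0∞) ^ r ≤ ω (n+1) * ((n+1 : ℕ) : ℝ≥0∞) ^ r)
    (μ : ℕ → ℕ) (I J : Set ℕ) (hμ0 : μ 0 = 1) (hmono : StrictMono μ)
    (h3 : ∀ k, lam * (μ k : ℝ≥0∞) ^ r ≤ (μ (k+1) : ℝ≥0∞) ^ r)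
    (h4 : ∀ k, lam * ω (μ (k+1)) ≤ ω (μ k))
    (h5 : ∀ k, lam * (ω (μ k) * (μ k : ℝ≥0∞) ^ r) ≤ ω (μ (k+1)) * (μ (k+1) : ℝ≥0∞) ^ r)
    (hIJ : I ∪ J = Set.univ)
    (hI : ∀ k ∈ I, cI * ω (μ k) ≤ ω (μ (k+1) - 1) ∧ ω (μ (k+1) - 1) ≤ CI * ω (μ k))
    (hJ : ∀ k ∈ J, cI * (ω (μ k) * (μ k : ℝ≥0∞) ^ r) ≤
        ω (μ (k+1) - 1) * ((μ (k+1) - 1 : ℕ) : ℝ≥0∞) ^ r ∧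
      ω (μ (k+1) - 1) * ((μ (k+1) - 1 : ℕ) : ℝ≥0∞) ^ r ≤
        CI * (ω (μ k) * (μ k : ℝ≥0∞) ^ r))
    (R : ℕ → ℝ≥0∞) :
    (∃ C : ℝ≥0∞, C ≠ ⊤ ∧ ∀ N : ℕ, 1 ≤ N →
      (∑' n : ℕ, (R (n+1) * ((n+1 : ℕ) : ℝ≥0∞) ^ l *
        min 1 (((n+1 : ℕ) : ℝ≥0∞) ^ r / (N : ℝ≥0∞) ^ r)) ^ 2) ≤ C * (ω N) ^ 2)
    ↔ (∃ C : ℝ≥0∞, C ≠ ⊤ ∧ ∀ k : ℕ,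
        (k ∈ I → (∑ n ∈ Finset.Ico (μ k) (μ (k+1)), ((n : ℝ≥0∞) ^ l * R n) ^ 2) ≤
          C * (ω (μ k)) ^ 2) ∧
        (k ∈ J → (∑ n ∈ Finset.Ico (μ k) (μ (k+1)), ((n : ℝ≥0∞) ^ (l+r) * R n) ^ 2) ≤
          C * (((μ (k+1) - 1 : ℕ) : ℝ≥0∞) ^ r * ω (μ (k+1) - 1)) ^ 2)) := by
  constructor
  · rintro ⟨C, hCtop, hbound⟩
    refine ⟨C, hCtop, ?_⟩
    have main : ∀ k : ℕ,
        ((∑ n ∈ Finset.Ico (μ k) (μ (k+1)), ((n : ℝ≥0∞) ^ l * R n) ^ 2) ≤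
          C * (ω (μ k)) ^ 2) ∧
        ((∑ n ∈ Finset.Ico (μ k) (μ (k+1)), ((n : ℝ≥0∞) ^ (l+r) * R n) ^ 2) ≤
          C * (((μ (k+1) - 1 : ℕ) : ℝ≥0∞) ^ r * ω (μ (k+1) - 1)) ^ 2) := by
      have hμ1 : ∀ k, 1 ≤ μ k := fun k => hμ0 ▸ hmono.monotone (Nat.zero_le k)
      intro k
      constructor
      · -- I part, N = μ k
        set N := μ k with hN
        have h1N : 1 ≤ N := hμ1 k
        have hNr0 : ((N:ℝ≥0∞))^r ≠ 0 := by positivity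
        have hNrt : ((N:ℝ≥0∞))^r ≠ ⊤ := by
          exact ENNReal.pow_ne_top (ENNReal.natCast_ne_top N)
        calc ∑ n ∈ Finset.Ico (μ k) (μ (k+1)), ((n : ℝ≥0∞) ^ l * R n) ^ 2
            = ∑ n ∈ Finset.Ico (μ k) (μ (k+1)),
                (R n * (n : ℝ≥0∞) ^ l * min 1 ((n:ℝ≥0∞)^r / (N : ℝ≥0∞) ^ r)) ^ 2 := by
              refine Finset.sum_congr rfl fun n hn => ?_
              have hn' := Finset.mem_Ico.mp hn
              have hmin : min (1:ℝ≥0∞) ((n:ℝ≥0∞)^r / (N : ℝ≥0∞) ^ r) = 1 := by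
                refine min_eq_left ?_
                rw [ENNReal.le_div_iff_mul_le (Or.inl hNr0) (Or.inl hNrt), one_mul]
                exact pow_le_pow_left' (by exact_mod_cast hn'.1) r
              rw [hmin, mul_one, mul_comm]
          _ ≤ ∑' m : ℕ, (R (m+1) * ((m+1 : ℕ) : ℝ≥0∞) ^ l *
                min 1 (((m+1 : ℕ) : ℝ≥0∞) ^ r / (N : ℝ≥0∞) ^ r)) ^ 2 :=
              aux_sum_Ico_le_tsum_succ
                (fun n => (R n * (n : ℝ≥0∞) ^ l * min 1 ((n:ℝ≥0∞)^r / (N : ℝ≥0∞) ^ r)) ^ 2)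
                (μ k) (μ (k+1)) (hμ1 k)
          _ ≤ C * (ω N) ^ 2 := hbound N h1N
      · -- J part, N = μ (k+1) - 1
        set N := μ (k+1) - 1 with hN
        have h2 : μ k < μ (k+1) := hmono (Nat.lt_succ_self k)
        have h2' := hμ1 k
        have h1N : 1 ≤ N := by rw [hN]; omega
        have hNr0 : ((N:ℝ≥0∞))^r ≠ 0 := by positivity
        have hNrt : ((N:ℝ≥0∞))^r ≠ ⊤ := ENNReal.pow_ne_top (ENNReal.natCast_ne_top N)
        have key : ∀ n ∈ Finset.Ico (μ k) (μ (k+1)),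
            ((n : ℝ≥0∞) ^ (l+r) * R n) ^ 2
              = (R n * (n : ℝ≥0∞) ^ l * min 1 ((n:ℝ≥0∞)^r / (N : ℝ≥0∞) ^ r)) ^ 2
                  * ((N:ℝ≥0∞)^r)^2 := by
          intro n hn
          have hn' := Finset.mem_Ico.mp hn
          have hnN : (n:ℝ≥0∞)^r ≤ (N:ℝ≥0∞)^r := by
            refine pow_le_pow_left' (by exact_mod_cast (show n ≤ N by rw [hN]; omega) : (n:ℝ≥0∞) ≤ (N:ℝ≥0∞)) r
          have hmin : min (1:ℝ≥0∞) ((n:ℝ≥0∞)^r / (N : ℝ≥0∞) ^ r) = (n:ℝ≥0∞)^r / (N : ℝ≥0∞) ^ r := by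
            refine min_eq_right ?_
            exact ENNReal.div_le_of_le_mul (by simpa using hnN)
          rw [hmin]
          rw [div_eq_mul_inv, ← mul_pow]
          congr 1
          rw [mul_assoc, mul_assoc, mul_assoc]
          rw [ENNReal.inv_mul_cancel hNr0 hNrt, mul_one, pow_add]
          ring
        calc ∑ n ∈ Finset.Ico (μ k) (μ (k+1)), ((n : ℝ≥0∞) ^ (l+r) * R n) ^ 2
            = (∑ n ∈ Finset.Ico (μ k) (μ (k+1)),
                (R n * (n : ℝ≥0∞) ^ l * min 1 ((n:ℝ≥0∞)^r / (N : ℝ≥0∞) ^ r)) ^ 2)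
                * ((N:ℝ≥0∞)^r)^2 := by
              rw [Finset.sum_mul]; exact Finset.sum_congr rfl key
          _ ≤ (∑' m : ℕ, (R (m+1) * ((m+1 : ℕ) : ℝ≥0∞) ^ l *
                min 1 (((m+1 : ℕ) : ℝ≥0∞) ^ r / (N : ℝ≥0∞) ^ r)) ^ 2) * ((N:ℝ≥0∞)^r)^2 :=
              mul_le_mul_left (aux_sum_Ico_le_tsum_succ _ (μ k) (μ (k+1)) (hμ1 k)) _
          _ ≤ (C * (ω N) ^ 2) * ((N:ℝ≥0∞)^r)^2 := mul_le_mul_left (hbound N h1N) _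
          _ = C * (((N:ℕ) : ℝ≥0∞) ^ r * ω N) ^ 2 := by ring
    exact fun k => ⟨fun _ => (main k).1, fun _ => (main k).2⟩
  · rintro ⟨C, hCtop, hblk⟩
    -- basic facts
    have hμ1 : ∀ k, 1 ≤ μ k := fun k => hμ0 ▸ hmono.monotone (Nat.zero_le k)
    have hμlt : ∀ k, μ k < μ (k+1) := fun k => hmono (Nat.lt_succ_self k)
    have hμM : ∀ k, μ k ≤ μ (k+1) - 1 := fun k => by have := hμlt k; omega
    have h2lam : (2:ℝ≥0∞) ≤ lam := le_trans (by norm_num) hlam.le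
    -- monotonicity of ω and g
    have hanti : ∀ m n : ℕ, 1 ≤ m → m ≤ n → ω n ≤ ω m := by
      intro m n h1 hmn
      induction n, hmn using Nat.le_induction with
      | base => exact le_refl _
      | succ n hn ih => exact (hdec n (h1.trans hn)).trans ih
    have hgmono : ∀ m n : ℕ, 1 ≤ m → m ≤ n →
        ω m * (m:ℝ≥0∞)^r ≤ ω n * (n:ℝ≥0∞)^r := by
      intro m n h1 hmn
      induction n, hmn using Nat.le_induction with
      | base => exact le_refl _
      | succ n hn ih => exact ih.trans (hinc n (h1.trans hn))
    -- geometric decay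
    have half_of_double : ∀ x y : ℝ≥0∞, 2 * x ≤ y → x ≤ 2⁻¹ * y := by
      intro x y h
      exact aux_cancel_le (by norm_num) (by norm_num) h
    have hstep1 : ∀ k, ω (μ (k+1)) ≤ 2⁻¹ * ω (μ k) :=
      fun k => half_of_double _ _ (le_trans (mul_le_mul_left h2lam _) (h4 k))
    have hstep2 : ∀ k, ω (μ k) * (μ k:ℝ≥0∞)^r ≤ 2⁻¹ * (ω (μ (k+1)) * (μ (k+1):ℝ≥0∞)^r) :=
      fun k => half_of_double _ _ (le_trans (mul_le_mul_left h2lam _) (h5 k))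
    have hgeom1 : ∀ j m, ω (μ (j + m)) ≤ (2⁻¹:ℝ≥0∞)^m * ω (μ j) := by
      intro j m
      induction m with
      | zero => simp
      | succ m ih =>
        calc ω (μ (j + (m+1))) = ω (μ ((j + m) + 1)) := by rw [Nat.add_succ]
          _ ≤ 2⁻¹ * ω (μ (j + m)) := hstep1 _
          _ ≤ 2⁻¹ * ((2⁻¹:ℝ≥0∞)^m * ω (μ j)) := mul_le_mul_right ih _
          _ = (2⁻¹:ℝ≥0∞)^(m+1) * ω (μ j) := by ring
    have hgeom2 : ∀ j m, ω (μ j) * (μ j:ℝ≥0∞)^r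
        ≤ (2⁻¹:ℝ≥0∞)^m * (ω (μ (j + m)) * (μ (j + m):ℝ≥0∞)^r) := by
      intro j m
      induction m with
      | zero => simp
      | succ m ih =>
        calc ω (μ j) * (μ j:ℝ≥0∞)^r ≤ (2⁻¹:ℝ≥0∞)^m * (ω (μ (j + m)) * (μ (j + m):ℝ≥0∞)^r) := ih
          _ ≤ (2⁻¹:ℝ≥0∞)^m * (2⁻¹ * (ω (μ ((j+m)+1)) * (μ ((j+m)+1):ℝ≥0∞)^r)) :=
              mul_le_mul_right (hstep2 _) _
          _ = (2⁻¹:ℝ≥0∞)^(m+1) * (ω (μ (j + (m+1))) * (μ (j + (m+1)):ℝ≥0∞)^r) := by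
              rw [pow_succ, mul_assoc]; rfl
    -- modified constant c'
    set c' := min cI 1 with hc'def
    have hc'0 : c' ≠ 0 := by
      simp only [hc'def, ne_eq, min_eq_iff]
      rintro (⟨h1, -⟩ | ⟨h1, -⟩) <;> simp_all
    have hc'top : c' ≠ ⊤ := by
      refine ne_top_of_le_ne_top (by norm_num) (min_le_right _ _)
    have hc'I : ∀ k ∈ I, c' * ω (μ k) ≤ ω (μ (k+1) - 1) := fun k hk =>
      le_trans (mul_le_mul_left (min_le_left _ _) _) (hI k hk).1
    -- constants
    set D := 2 * C * (1 + CI^2) * (1 + (c'⁻¹)^2) with hDdef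
    have hDtop : D ≠ ⊤ := by
      apply ENNReal.mul_ne_top
      apply ENNReal.mul_ne_top
      · exact ENNReal.mul_ne_top (by norm_num) hCtop
      · exact ENNReal.add_ne_top.mpr ⟨ENNReal.one_ne_top, ENNReal.pow_ne_top hC⟩
      · exact ENNReal.add_ne_top.mpr ⟨ENNReal.one_ne_top,
          ENNReal.pow_ne_top (ENNReal.inv_ne_top.mpr hc'0)⟩
    have hD1 : 2 * C * (1 + CI^2) ≤ D := by
      rw [hDdef]
      exact le_mul_of_one_le_right' (le_add_of_nonneg_right zero_le)
    have hD2 : 2 * C * (1 + (c'⁻¹)^2) ≤ D := by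
      rw [hDdef, show 2 * C * (1 + CI^2) * (1 + (c'⁻¹)^2) = 2 * C * (1 + (c'⁻¹)^2) * (1 + CI^2) by ring]
      exact le_mul_of_one_le_right' (le_add_of_nonneg_right zero_le)
    have hCc : C * (c'⁻¹)^2 ≤ D := by
      calc C * (c'⁻¹)^2 ≤ 2 * C * (1 + (c'⁻¹)^2) := by
            rw [show 2 * C * (1 + (c'⁻¹)^2) = C * (c'⁻¹)^2 + (2*C + C*(c'⁻¹)^2) by ring]
            exact le_add_of_nonneg_right zero_le
        _ ≤ D := hD2
    have hCC : C * CI^2 ≤ D := by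
      calc C * CI^2 ≤ 2 * C * (1 + CI^2) := by
            rw [show 2 * C * (1 + CI^2) = C * CI^2 + (2*C + C*CI^2) by ring]
            exact le_add_of_nonneg_right zero_le
        _ ≤ D := hD1
    -- blockwise bounds independent of membership
    have hIorJ : ∀ k : ℕ, k ∈ I ∨ k ∈ J := by
      intro k
      have : k ∈ I ∪ J := by rw [hIJ]; trivial
      exact this
    have hS1 : ∀ k, (∑ n ∈ Finset.Ico (μ k) (μ (k+1)), ((n : ℝ≥0∞) ^ l * R n) ^ 2)
        ≤ C * (1 + CI^2) * (ω (μ k)) ^ 2 := by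
      intro k
      rcases hIorJ k with hk | hk
      · calc _ ≤ C * (ω (μ k))^2 := (hblk k).1 hk
          _ ≤ C * (1 + CI^2) * (ω (μ k)) ^ 2 := by
              refine mul_le_mul_left ?_ _
              exact le_mul_of_one_le_right' (le_add_of_nonneg_right zero_le)
      · -- J case
        set a := μ k with ha
        have har0 : ((a:ℝ≥0∞))^r ≠ 0 := by
          have := hμ1 k; positivity
        have hart : ((a:ℝ≥0∞))^r ≠ ⊤ := ENNReal.pow_ne_top (ENNReal.natCast_ne_top a)
        have key : ((a:ℝ≥0∞)^r)^2 * (∑ n ∈ Finset.Ico (μ k) (μ (k+1)), ((n : ℝ≥0∞) ^ l * R n) ^ 2)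
            ≤ ∑ n ∈ Finset.Ico (μ k) (μ (k+1)), ((n : ℝ≥0∞) ^ (l+r) * R n) ^ 2 := by
          rw [Finset.mul_sum]
          refine Finset.sum_le_sum fun n hn => ?_
          have hn' := Finset.mem_Ico.mp hn
          have h1 : (a:ℝ≥0∞)^r * (n:ℝ≥0∞)^l ≤ (n:ℝ≥0∞)^(l+r) := by
            rw [pow_add]
            rw [mul_comm ((n:ℝ≥0∞)^l) ((n:ℝ≥0∞)^r)]
            exact mul_le_mul_left (pow_le_pow_left' (by exact_mod_cast hn'.1) r) _
          calc ((a:ℝ≥0∞)^r)^2 * ((n : ℝ≥0∞) ^ l * R n) ^ 2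
              = ((a:ℝ≥0∞)^r * ((n : ℝ≥0∞) ^ l * R n))^2 := (mul_pow _ _ 2).symm
            _ ≤ ((n:ℝ≥0∞)^(l+r) * R n)^2 := by
                refine pow_le_pow_left' ?_ 2
                rw [← mul_assoc]
                exact mul_le_mul_left h1 _
        have h2 := aux_cancel_le (z := ((a:ℝ≥0∞)^r)^2) (by positivity)
          (ENNReal.pow_ne_top hart) key
        refine h2.trans ?_
        have h3 := (hblk k).2 hk
        have h4' : (((μ (k+1) - 1:ℕ):ℝ≥0∞)^r * ω (μ (k+1) - 1))^2
            ≤ (CI * (ω a * (a:ℝ≥0∞)^r))^2 := by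
          refine pow_le_pow_left' ?_ 2
          rw [mul_comm (((μ (k+1) - 1:ℕ):ℝ≥0∞)^r) (ω (μ (k+1) - 1))]
          exact (hJ k hk).2
        calc (((a:ℝ≥0∞)^r)^2)⁻¹ * (∑ n ∈ Finset.Ico (μ k) (μ (k+1)), ((n : ℝ≥0∞) ^ (l+r) * R n) ^ 2)
            ≤ (((a:ℝ≥0∞)^r)^2)⁻¹ * (C * (CI * (ω a * (a:ℝ≥0∞)^r))^2) :=
              mul_le_mul_right (h3.trans (mul_le_mul_right h4' _)) _
          _ = C * CI^2 * (ω a)^2 * ((((a:ℝ≥0∞)^r)^2)⁻¹ * ((a:ℝ≥0∞)^r)^2) := by ring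
          _ = C * CI^2 * (ω a)^2 := by
              rw [ENNReal.inv_mul_cancel (by positivity) (ENNReal.pow_ne_top hart), mul_one]
          _ ≤ C * (1 + CI^2) * (ω a) ^ 2 := by
              refine mul_le_mul_left (mul_le_mul_right ?_ _) _
              exact le_add_of_nonneg_left zero_le
    have hS2 : ∀ k, (∑ n ∈ Finset.Ico (μ k) (μ (k+1)), ((n : ℝ≥0∞) ^ (l+r) * R n) ^ 2)
        ≤ C * (1 + (c'⁻¹)^2) * (((μ (k+1) - 1:ℕ):ℝ≥0∞)^r * ω (μ (k+1) - 1)) ^ 2 := by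
      intro k
      rcases hIorJ k with hk | hk
      · -- I case
        set M := μ (k+1) - 1 with hM
        have hMr : ∀ n ∈ Finset.Ico (μ k) (μ (k+1)),
            ((n : ℝ≥0∞) ^ (l+r) * R n) ^ 2 ≤ (((M:ℕ):ℝ≥0∞)^r)^2 * ((n : ℝ≥0∞) ^ l * R n) ^ 2 := by
          intro n hn
          have hn' := Finset.mem_Ico.mp hn
          have hnM : (n:ℝ≥0∞)^r ≤ ((M:ℕ):ℝ≥0∞)^r :=
            pow_le_pow_left' (by exact_mod_cast (show n ≤ M by rw [hM]; omega)) r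
          calc ((n : ℝ≥0∞) ^ (l+r) * R n) ^ 2
              = (((n:ℝ≥0∞))^r * ((n : ℝ≥0∞) ^ l * R n)) ^ 2 := by
                rw [pow_add]; ring
            _ ≤ (((M:ℕ):ℝ≥0∞)^r * ((n : ℝ≥0∞) ^ l * R n)) ^ 2 :=
                pow_le_pow_left' (mul_le_mul_left hnM _) 2
            _ = (((M:ℕ):ℝ≥0∞)^r)^2 * ((n : ℝ≥0∞) ^ l * R n) ^ 2 := mul_pow _ _ 2
        have hωa : ω (μ k) ≤ c'⁻¹ * ω M := aux_cancel_le hc'0 hc'top (hc'I k hk)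
        calc (∑ n ∈ Finset.Ico (μ k) (μ (k+1)), ((n : ℝ≥0∞) ^ (l+r) * R n) ^ 2)
            ≤ ∑ n ∈ Finset.Ico (μ k) (μ (k+1)),
                (((M:ℕ):ℝ≥0∞)^r)^2 * ((n : ℝ≥0∞) ^ l * R n) ^ 2 := Finset.sum_le_sum hMr
          _ = (((M:ℕ):ℝ≥0∞)^r)^2 * ∑ n ∈ Finset.Ico (μ k) (μ (k+1)), ((n : ℝ≥0∞) ^ l * R n) ^ 2 :=
              (Finset.mul_sum _ _ _).symm
          _ ≤ (((M:ℕ):ℝ≥0∞)^r)^2 * (C * (ω (μ k))^2) := mul_le_mul_right ((hblk k).1 hk) _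
          _ ≤ (((M:ℕ):ℝ≥0∞)^r)^2 * (C * (c'⁻¹ * ω M)^2) := by
              exact mul_le_mul_right (mul_le_mul_right (pow_le_pow_left' hωa 2) _) _
          _ = C * (c'⁻¹)^2 * (((M:ℕ):ℝ≥0∞)^r * ω M)^2 := by ring
          _ ≤ C * (1 + (c'⁻¹)^2) * (((M:ℕ):ℝ≥0∞)^r * ω M)^2 := by
              refine mul_le_mul_left (mul_le_mul_right ?_ _) _
              exact le_add_of_nonneg_left zero_le
      · calc _ ≤ C * (((μ (k+1) - 1:ℕ):ℝ≥0∞)^r * ω (μ (k+1) - 1)) ^ 2 := (hblk k).2 hk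
          _ ≤ C * (1 + (c'⁻¹)^2) * (((μ (k+1) - 1:ℕ):ℝ≥0∞)^r * ω (μ (k+1) - 1)) ^ 2 := by
              refine mul_le_mul_left ?_ _
              exact le_mul_of_one_le_right' (le_add_of_nonneg_right zero_le)
    -- conclusion
    refine ⟨4 * D, ENNReal.mul_ne_top (by norm_num) hDtop, ?_⟩
    intro N hN
    have hex : μ 0 ≤ N := by rw [hμ0]; exact hN
    set k₀ := Nat.findGreatest (fun k => μ k ≤ N) N with hk₀def
    have hk₀le : μ k₀ ≤ N := Nat.findGreatest_spec (P := fun k => μ k ≤ N) (Nat.zero_le N) hex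
    have hk₀lt : N < μ (k₀ + 1) := by
      by_cases h : k₀ + 1 ≤ N
      · have := Nat.findGreatest_is_greatest (show k₀ < k₀ + 1 by omega) h
        omega
      · have h1 : N < k₀ + 1 := not_le.mp h
        exact lt_of_lt_of_le h1 (hmono.le_apply)
    have hNr0 : ((N:ℝ≥0∞))^r ≠ 0 := by positivity
    have hNrt : ((N:ℝ≥0∞))^r ≠ ⊤ := ENNReal.pow_ne_top (ENNReal.natCast_ne_top N)
    have hωNle : ω (μ (k₀+1)) ≤ ω N := hanti N (μ (k₀+1)) hN hk₀lt.le
    have two_halves : ∀ m : ℕ, (2:ℝ≥0∞) * (2⁻¹:ℝ≥0∞)^(m+1) = (2⁻¹:ℝ≥0∞)^m := by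
      intro m
      rw [pow_succ', ← mul_assoc, ENNReal.mul_inv_cancel (by norm_num) (by norm_num), one_mul]
    -- per-block bound
    have hblock : ∀ k, (∑ n ∈ Finset.Ico (μ k) (μ (k+1)),
        (R n * (n:ℝ≥0∞)^l * min 1 ((n:ℝ≥0∞)^r / (N:ℝ≥0∞)^r))^2)
        ≤ D * (2⁻¹:ℝ≥0∞)^((k₀-k)+(k-k₀)) * (ω N)^2 := by
      intro k
      have hmin1 : (∑ n ∈ Finset.Ico (μ k) (μ (k+1)),
          (R n * (n:ℝ≥0∞)^l * min 1 ((n:ℝ≥0∞)^r / (N:ℝ≥0∞)^r))^2)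
          ≤ ∑ n ∈ Finset.Ico (μ k) (μ (k+1)), ((n : ℝ≥0∞) ^ l * R n) ^ 2 := by
        refine Finset.sum_le_sum fun n hn => ?_
        refine pow_le_pow_left' ?_ 2
        calc R n * (n:ℝ≥0∞)^l * min 1 ((n:ℝ≥0∞)^r / (N:ℝ≥0∞)^r)
            ≤ R n * (n:ℝ≥0∞)^l * 1 := mul_le_mul_right (min_le_left _ _) _
          _ = (n:ℝ≥0∞)^l * R n := by rw [mul_one, mul_comm]
      have hmin2 : (∑ n ∈ Finset.Ico (μ k) (μ (k+1)),
          (R n * (n:ℝ≥0∞)^l * min 1 ((n:ℝ≥0∞)^r / (N:ℝ≥0∞)^r))^2)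
          ≤ (((N:ℝ≥0∞)^r)⁻¹)^2
              * ∑ n ∈ Finset.Ico (μ k) (μ (k+1)), ((n : ℝ≥0∞) ^ (l+r) * R n) ^ 2 := by
        rw [Finset.mul_sum]
        refine Finset.sum_le_sum fun n hn => ?_
        calc (R n * (n:ℝ≥0∞)^l * min 1 ((n:ℝ≥0∞)^r / (N:ℝ≥0∞)^r))^2
            ≤ (R n * (n:ℝ≥0∞)^l * ((n:ℝ≥0∞)^r / (N:ℝ≥0∞)^r))^2 :=
              pow_le_pow_left' (mul_le_mul_right (min_le_right _ _) _) 2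
          _ = (((N:ℝ≥0∞)^r)⁻¹ * ((n : ℝ≥0∞) ^ (l+r) * R n))^2 := by
              rw [div_eq_mul_inv, pow_add]; ring
          _ = (((N:ℝ≥0∞)^r)⁻¹)^2 * ((n : ℝ≥0∞) ^ (l+r) * R n) ^ 2 := mul_pow _ _ 2
      rcases lt_trichotomy k k₀ with hkk | hkk | hkk
      · -- k < k₀ : use S2 bound and growth of g
        set M := μ (k+1) - 1 with hM
        have h1M : 1 ≤ M := le_trans (hμ1 k) (hμM k)
        have hg1 : ω M * (M:ℝ≥0∞)^r ≤ ω (μ (k+1)) * ((μ (k+1)):ℝ≥0∞)^r :=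
          hgmono M (μ (k+1)) h1M (by rw [hM]; omega)
        have hg2 : ω (μ (k+1)) * ((μ (k+1)):ℝ≥0∞)^r
            ≤ (2⁻¹:ℝ≥0∞)^(k₀ - (k+1)) * (ω (μ k₀) * ((μ k₀):ℝ≥0∞)^r) := by
          have := hgeom2 (k+1) (k₀ - (k+1))
          rwa [show (k+1) + (k₀ - (k+1)) = k₀ from by omega] at this
        have hg3 : ω (μ k₀) * ((μ k₀):ℝ≥0∞)^r ≤ ω N * (N:ℝ≥0∞)^r :=
          hgmono (μ k₀) N (hμ1 k₀) hk₀le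
        have hgM : ω M * (M:ℝ≥0∞)^r ≤ (2⁻¹:ℝ≥0∞)^(k₀ - (k+1)) * (ω N * (N:ℝ≥0∞)^r) :=
          hg1.trans (hg2.trans (mul_le_mul_right hg3 _))
        have hsq : (((M:ℕ):ℝ≥0∞)^r * ω M)^2
            ≤ (2:ℝ≥0∞) * (2⁻¹:ℝ≥0∞)^((k₀-k)+(k-k₀)) * (ω N * (N:ℝ≥0∞)^r)^2 := by
          have e1 : ((k₀-k)+(k-k₀)) = (k₀ - (k+1)) + 1 := by omega
          calc (((M:ℕ):ℝ≥0∞)^r * ω M)^2 = (ω M * (M:ℝ≥0∞)^r)^2 := by rw [mul_comm]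
            _ ≤ ((2⁻¹:ℝ≥0∞)^(k₀ - (k+1)) * (ω N * (N:ℝ≥0∞)^r))^2 := pow_le_pow_left' hgM 2
            _ = ((2⁻¹:ℝ≥0∞)^(k₀ - (k+1)))^2 * (ω N * (N:ℝ≥0∞)^r)^2 := mul_pow _ _ 2
            _ ≤ (2⁻¹:ℝ≥0∞)^(k₀ - (k+1)) * (ω N * (N:ℝ≥0∞)^r)^2 := by
                refine mul_le_mul_left ?_ _
                rw [← pow_mul]
                exact pow_le_pow_right_of_le_one' (by simp [ENNReal.inv_le_one]) (by omega)
            _ = (2:ℝ≥0∞) * (2⁻¹:ℝ≥0∞)^((k₀-k)+(k-k₀)) * (ω N * (N:ℝ≥0∞)^r)^2 := by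
                rw [e1, two_halves]
        calc (∑ n ∈ Finset.Ico (μ k) (μ (k+1)),
            (R n * (n:ℝ≥0∞)^l * min 1 ((n:ℝ≥0∞)^r / (N:ℝ≥0∞)^r))^2)
            ≤ (((N:ℝ≥0∞)^r)⁻¹)^2
                * ∑ n ∈ Finset.Ico (μ k) (μ (k+1)), ((n : ℝ≥0∞) ^ (l+r) * R n) ^ 2 := hmin2
          _ ≤ (((N:ℝ≥0∞)^r)⁻¹)^2 * (C * (1 + (c'⁻¹)^2) * (((M:ℕ):ℝ≥0∞)^r * ω M)^2) :=
              mul_le_mul_right (hS2 k) _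
          _ ≤ (((N:ℝ≥0∞)^r)⁻¹)^2 * (C * (1 + (c'⁻¹)^2)
                * ((2:ℝ≥0∞) * (2⁻¹:ℝ≥0∞)^((k₀-k)+(k-k₀)) * (ω N * (N:ℝ≥0∞)^r)^2)) :=
              mul_le_mul_right (mul_le_mul_right hsq _) _
          _ = (2 * C * (1 + (c'⁻¹)^2)) * (2⁻¹:ℝ≥0∞)^((k₀-k)+(k-k₀)) * (ω N)^2
                * (((N:ℝ≥0∞)^r)⁻¹ * (N:ℝ≥0∞)^r)^2 := by ring
          _ = (2 * C * (1 + (c'⁻¹)^2)) * (2⁻¹:ℝ≥0∞)^((k₀-k)+(k-k₀)) * (ω N)^2 := by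
              rw [ENNReal.inv_mul_cancel hNr0 hNrt, one_pow, mul_one]
          _ ≤ D * (2⁻¹:ℝ≥0∞)^((k₀-k)+(k-k₀)) * (ω N)^2 :=
              mul_le_mul_left (mul_le_mul_left hD2 _) _
      · -- k = k₀
        have hw : (2⁻¹:ℝ≥0∞)^((k₀-k)+(k-k₀)) = 1 := by
          rw [show (k₀-k)+(k-k₀) = 0 from by omega, pow_zero]
        rcases hIorJ k with hk | hk
        · have hNM : N ≤ μ (k+1) - 1 := by
            have h' := hk₀lt
            have h'' := hμ1 k
            rw [hkk]
            omega
          have hωk : ω (μ k) ≤ c'⁻¹ * ω (μ (k+1) - 1) := aux_cancel_le hc'0 hc'top (hc'I k hk)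
          have hωM : ω (μ (k+1) - 1) ≤ ω N := hanti N _ hN hNM
          calc (∑ n ∈ Finset.Ico (μ k) (μ (k+1)),
              (R n * (n:ℝ≥0∞)^l * min 1 ((n:ℝ≥0∞)^r / (N:ℝ≥0∞)^r))^2)
              ≤ ∑ n ∈ Finset.Ico (μ k) (μ (k+1)), ((n : ℝ≥0∞) ^ l * R n) ^ 2 := hmin1
            _ ≤ C * (ω (μ k))^2 := (hblk k).1 hk
            _ ≤ C * (c'⁻¹ * ω N)^2 := mul_le_mul_right
                (pow_le_pow_left' (hωk.trans (mul_le_mul_right hωM _)) 2) _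
            _ = (C * (c'⁻¹)^2) * (ω N)^2 := by ring
            _ ≤ D * (2⁻¹:ℝ≥0∞)^((k₀-k)+(k-k₀)) * (ω N)^2 := by
                rw [hw, mul_one]
                exact mul_le_mul_left hCc _
        · have hgm : ω (μ k) * ((μ k):ℝ≥0∞)^r ≤ ω N * (N:ℝ≥0∞)^r :=
            hgmono (μ k) N (hμ1 k) (by rw [hkk]; exact hk₀le)
          have hJu := (hJ k hk).2
          calc (∑ n ∈ Finset.Ico (μ k) (μ (k+1)),
              (R n * (n:ℝ≥0∞)^l * min 1 ((n:ℝ≥0∞)^r / (N:ℝ≥0∞)^r))^2)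
              ≤ (((N:ℝ≥0∞)^r)⁻¹)^2
                  * ∑ n ∈ Finset.Ico (μ k) (μ (k+1)), ((n : ℝ≥0∞) ^ (l+r) * R n) ^ 2 := hmin2
            _ ≤ (((N:ℝ≥0∞)^r)⁻¹)^2
                  * (C * (((μ (k+1) - 1:ℕ):ℝ≥0∞)^r * ω (μ (k+1) - 1))^2) :=
                mul_le_mul_right ((hblk k).2 hk) _
            _ ≤ (((N:ℝ≥0∞)^r)⁻¹)^2 * (C * (CI * (ω N * (N:ℝ≥0∞)^r))^2) := by
                refine mul_le_mul_right (mul_le_mul_right (pow_le_pow_left' ?_ 2) _) _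
                rw [mul_comm (((μ (k+1) - 1:ℕ):ℝ≥0∞)^r) (ω (μ (k+1) - 1))]
                exact hJu.trans (mul_le_mul_right hgm _)
            _ = (C * CI^2) * (ω N)^2 * (((N:ℝ≥0∞)^r)⁻¹ * (N:ℝ≥0∞)^r)^2 := by ring
            _ = (C * CI^2) * (ω N)^2 := by
                rw [ENNReal.inv_mul_cancel hNr0 hNrt, one_pow, mul_one]
            _ ≤ D * (2⁻¹:ℝ≥0∞)^((k₀-k)+(k-k₀)) * (ω N)^2 := by
                rw [hw, mul_one]
                exact mul_le_mul_left hCC _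
      · -- k > k₀ : use S1 bound and decay of ω
        have hω1 : ω (μ k) ≤ (2⁻¹:ℝ≥0∞)^(k - (k₀+1)) * ω (μ (k₀+1)) := by
          have := hgeom1 (k₀+1) (k - (k₀+1))
          rwa [show (k₀+1) + (k - (k₀+1)) = k from by omega] at this
        have hsq : (ω (μ k))^2 ≤ (2:ℝ≥0∞) * (2⁻¹:ℝ≥0∞)^((k₀-k)+(k-k₀)) * (ω N)^2 := by
          have e1 : ((k₀-k)+(k-k₀)) = (k - (k₀+1)) + 1 := by omega
          calc (ω (μ k))^2 ≤ ((2⁻¹:ℝ≥0∞)^(k - (k₀+1)) * ω N)^2 :=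
                pow_le_pow_left' (hω1.trans (mul_le_mul_right hωNle _)) 2
            _ = ((2⁻¹:ℝ≥0∞)^(k - (k₀+1)))^2 * (ω N)^2 := mul_pow _ _ 2
            _ ≤ (2⁻¹:ℝ≥0∞)^(k - (k₀+1)) * (ω N)^2 := by
                refine mul_le_mul_left ?_ _
                rw [← pow_mul]
                exact pow_le_pow_right_of_le_one' (by simp [ENNReal.inv_le_one]) (by omega)
            _ = (2:ℝ≥0∞) * (2⁻¹:ℝ≥0∞)^((k₀-k)+(k-k₀)) * (ω N)^2 := by
                rw [e1, two_halves]
        calc (∑ n ∈ Finset.Ico (μ k) (μ (k+1)),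
            (R n * (n:ℝ≥0∞)^l * min 1 ((n:ℝ≥0∞)^r / (N:ℝ≥0∞)^r))^2)
            ≤ ∑ n ∈ Finset.Ico (μ k) (μ (k+1)), ((n : ℝ≥0∞) ^ l * R n) ^ 2 := hmin1
          _ ≤ C * (1 + CI^2) * (ω (μ k))^2 := hS1 k
          _ ≤ C * (1 + CI^2) * ((2:ℝ≥0∞) * (2⁻¹:ℝ≥0∞)^((k₀-k)+(k-k₀)) * (ω N)^2) :=
              mul_le_mul_right hsq _
          _ = (2 * C * (1 + CI^2)) * (2⁻¹:ℝ≥0∞)^((k₀-k)+(k-k₀)) * (ω N)^2 := by ring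
          _ ≤ D * (2⁻¹:ℝ≥0∞)^((k₀-k)+(k-k₀)) * (ω N)^2 :=
              mul_le_mul_left (mul_le_mul_left hD1 _) _
    -- assemble
    calc (∑' n : ℕ, (R (n+1) * ((n+1 : ℕ) : ℝ≥0∞) ^ l *
          min 1 (((n+1 : ℕ) : ℝ≥0∞) ^ r / (N : ℝ≥0∞) ^ r)) ^ 2)
        = ⨆ K : ℕ, ∑ n ∈ Finset.range K, (R (n+1) * ((n+1 : ℕ) : ℝ≥0∞) ^ l *
          min 1 (((n+1 : ℕ) : ℝ≥0∞) ^ r / (N : ℝ≥0∞) ^ r)) ^ 2 := ENNReal.tsum_eq_iSup_nat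
      _ ≤ 4 * D * (ω N)^2 := by
        refine iSup_le fun K => ?_
        calc (∑ n ∈ Finset.range K, (R (n+1) * ((n+1 : ℕ) : ℝ≥0∞) ^ l *
              min 1 (((n+1 : ℕ) : ℝ≥0∞) ^ r / (N : ℝ≥0∞) ^ r)) ^ 2)
            = ∑ n ∈ Finset.Ico 1 (K+1), (R n * (n:ℝ≥0∞)^l *
                min 1 ((n:ℝ≥0∞)^r / (N:ℝ≥0∞)^r))^2 := by
              rw [Finset.sum_Ico_eq_sum_range]
              exact (Finset.sum_congr rfl fun i _ => by rw [Nat.add_comm]).symm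
          _ ≤ ∑ n ∈ Finset.Ico 1 (μ (K+1)), (R n * (n:ℝ≥0∞)^l *
                min 1 ((n:ℝ≥0∞)^r / (N:ℝ≥0∞)^r))^2 :=
              Finset.sum_le_sum_of_subset (Finset.Ico_subset_Ico le_rfl hmono.le_apply)
          _ = ∑ k ∈ Finset.range (K+1), ∑ n ∈ Finset.Ico (μ k) (μ (k+1)),
                (R n * (n:ℝ≥0∞)^l * min 1 ((n:ℝ≥0∞)^r / (N:ℝ≥0∞)^r))^2 := by
              have h := aux_sum_blocks μ hmono.monotone
                (fun n => (R n * (n:ℝ≥0∞)^l * min 1 ((n:ℝ≥0∞)^r / (N:ℝ≥0∞)^r))^2) (K+1)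
              rw [hμ0] at h
              exact h
          _ ≤ ∑ k ∈ Finset.range (K+1), D * (2⁻¹:ℝ≥0∞)^((k₀-k)+(k-k₀)) * (ω N)^2 :=
              Finset.sum_le_sum fun k _ => hblock k
          _ = (D * (ω N)^2) * ∑ k ∈ Finset.range (K+1), (2⁻¹:ℝ≥0∞)^((k₀-k)+(k-k₀)) := by
              rw [Finset.mul_sum]
              exact Finset.sum_congr rfl fun k _ => by ring
          _ ≤ (D * (ω N)^2) * 4 := mul_le_mul_right (aux_weight_sum k₀ (K+1)) _
          _ = 4 * D * (ω N)^2 := by ring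
end

section
/- Let p, r > 0 and (α_n) non-negative with Σ α_n/(1+n^{pr}) < ∞, and define ω_n^p := Σ_{m=1}^∞ α_m/(n^{pr}+m^{pr}). Then Σ_{n=1}^∞ α_n·n^{−pr}·(log(n+1))^{1−p/2} is comparable to Σ_{n=1}^∞ (n·(log(n+1))^{p/2})^{−1}·ω_n^p, with constants depending only on p and r (both sides possibly infinite simultaneously). -/
open scoped ENNReal

/-- The weight `ω_n^p = Σ_m α_m/(n^{pr}+m^{pr})`. -/
noncomputable def omegaP (p r : ℝ) (α : ℕ → ℝ≥0∞) (n : ℕ) : ℝ≥0∞ :=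
  ∑' m : ℕ, α (m+1) / ((n : ℝ≥0∞) ^ (p * r) + ((m+1 : ℕ) : ℝ≥0∞) ^ (p * r))

namespace Stmt17Aux
open Finset

noncomputable def ell (n : ℕ) : ℝ := Real.log ((n:ℝ) + 2)

lemma log2_pos : 0 < Real.log 2 := Real.log_pos (by norm_num)
lemma ell_ge (n : ℕ) : Real.log 2 ≤ ell n :=
  Real.log_le_log (by norm_num) (by have := n.cast_nonneg (α := ℝ); linarith)
lemma ell_pos (n : ℕ) : 0 < ell n := lt_of_lt_of_le log2_pos (ell_ge n)
lemma ell_mono {n m : ℕ} (h : n ≤ m) : ell n ≤ ell m :=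
  Real.log_le_log (by positivity) (by have : (n:ℝ) ≤ m := Nat.cast_le.2 h; linarith)
lemma ell_zero : ell 0 = Real.log 2 := by norm_num [ell]

/-- harmonic sum lower bound -/
lemma harmonic_ge (m : ℕ) : ell m ≤ ∑ n ∈ range (m+1), ((n:ℝ)+1)⁻¹ := by
  induction m with
  | zero =>
    simp only [ell, Nat.cast_zero, zero_add, range_one, sum_singleton]
    norm_num
    calc Real.log 2 ≤ 2 - 1 := by linarith [Real.log_le_sub_one_of_pos (by norm_num : (0:ℝ) < 2)]
    _ = 1 := by norm_num
  | succ m ih =>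
    rw [Finset.sum_range_succ]
    have hm2 : (0:ℝ) < (m:ℝ) + 2 := by positivity
    have hm3 : (0:ℝ) < (m:ℝ) + 3 := by positivity
    have key : ell (m+1) - ell m ≤ ((m:ℝ)+2)⁻¹ := by
      have hdiv : ell (m+1) - ell m = Real.log (((m:ℝ)+3) / ((m:ℝ)+2)) := by
        rw [Real.log_div (by positivity) (by positivity)]
        simp only [ell]; push_cast; ring_nf
      have := Real.log_le_sub_one_of_pos (show (0:ℝ) < ((m:ℝ)+3)/((m:ℝ)+2) by positivity)
      rw [hdiv]
      have heq : ((m:ℝ)+3)/((m:ℝ)+2) - 1 = ((m:ℝ)+2)⁻¹ := by field_simp; ring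
      linarith [this, heq ▸ this]
    have hcast : (((m+1:ℕ):ℝ) + 1)⁻¹ = ((m:ℝ)+2)⁻¹ := by push_cast; ring_nf
    rw [hcast]
    linarith

/-- tangent line inequality for concave rpow, 0 ≤ q ≤ 1 -/
lemma tangent {q x y : ℝ} (hq0 : 0 ≤ q) (hq1 : q ≤ 1) (hx : 0 < x) (hy : 0 ≤ y) :
    y ^ q ≤ x ^ q + q * x ^ (q-1) * (y - x) := by
  have hs : -1 ≤ y/x - 1 := by
    have : 0 ≤ y/x := div_nonneg hy hx.le
    linarith
  have hb := _root_.rpow_one_add_le_one_add_mul_self hs hq0 hq1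
  have h1 : (1 + (y/x - 1)) = y/x := by ring
  rw [h1] at hb
  have hxq : (0:ℝ) < x ^ q := Real.rpow_pos_of_pos hx q
  have hyx : (y/x) ^ q = y ^ q / x ^ q := Real.div_rpow hy hx.le q
  rw [hyx] at hb
  have hb2 : y ^ q ≤ (1 + q * (y/x - 1)) * x ^ q := by
    rw [div_le_iff₀ hxq] at hb; linarith [hb]
  have hxq1 : x ^ (q-1) = x ^ q / x := by
    rw [Real.rpow_sub hx, Real.rpow_one]
  calc y ^ q ≤ (1 + q * (y/x - 1)) * x ^ q := hb2
    _ = x ^ q + q * x ^ (q-1) * (y - x) := by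
        rw [hxq1]; field_simp

/-- increment lower bound -/
lemma incr_ge {q : ℝ} (hq0 : 0 < q) (hq1 : q < 1) (m : ℕ) :
    ((((m:ℝ)+2)) * ell (m+1) ^ (1-q))⁻¹ ≤ (2/q) * (ell (m+1) ^ q - ell m ^ q) := by
  have hpos1 : 0 < ell (m+1) := ell_pos _
  have hpos0 : 0 < ell m := ell_pos _
  have hm2 : (0:ℝ) < (m:ℝ)+2 := by positivity
  have hm3 : (0:ℝ) < (m:ℝ)+3 := by positivity
  have hell : ((m:ℝ)+2)⁻¹ / 2 ≤ ell (m+1) - ell m := by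
    have hdiv : ell (m+1) - ell m = Real.log (((m:ℝ)+3) / ((m:ℝ)+2)) := by
      rw [Real.log_div (by positivity) (by positivity)]
      simp only [ell]; push_cast; ring_nf
    have hlog : Real.log (((m:ℝ)+2) / ((m:ℝ)+3)) ≤ ((m:ℝ)+2)/((m:ℝ)+3) - 1 :=
      Real.log_le_sub_one_of_pos (by positivity)
    have hneg : Real.log (((m:ℝ)+2) / ((m:ℝ)+3)) = - Real.log (((m:ℝ)+3) / ((m:ℝ)+2)) := by
      rw [← Real.log_inv]; congr 1; field_simp
    have h1 : 1 - ((m:ℝ)+2)/((m:ℝ)+3) ≤ Real.log (((m:ℝ)+3) / ((m:ℝ)+2)) := by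
      rw [hneg] at hlog; linarith
    have h2 : ((m:ℝ)+3)⁻¹ = 1 - ((m:ℝ)+2)/((m:ℝ)+3) := by field_simp; norm_num
    have h3 : ((m:ℝ)+2)⁻¹/2 ≤ ((m:ℝ)+3)⁻¹ := by
      rw [inv_eq_one_div, inv_eq_one_div, div_div, div_le_div_iff₀ (by positivity) hm3]
      nlinarith
    rw [hdiv]; linarith
  have ht := tangent hq0.le hq1.le hpos1 hpos0.le
  have hkey : q * ell (m+1) ^ (q-1) * (ell (m+1) - ell m) ≤ ell (m+1) ^ q - ell m ^ q := by
    linarith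
  have hq1' : ell (m+1) ^ (q-1) = (ell (m+1) ^ (1-q))⁻¹ := by
    rw [← Real.rpow_neg hpos1.le]; congr 1; ring
  have hepos : (0:ℝ) < ell (m+1) ^ (1-q) := Real.rpow_pos_of_pos hpos1 _
  have hstep : q * (ell (m+1) ^ (1-q))⁻¹ * (((m:ℝ)+2)⁻¹/2) ≤ ell (m+1) ^ q - ell m ^ q := by
    refine le_trans ?_ hkey
    rw [hq1']
    apply mul_le_mul_of_nonneg_left hell
    positivity
  have h2q : 0 < 2/q := by positivity
  have hfin : ((((m:ℝ)+2)) * ell (m+1) ^ (1-q))⁻¹ =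
      q * (ell (m+1) ^ (1-q))⁻¹ * (((m:ℝ)+2)⁻¹/2) * (2/q) := by
    field_simp
  rw [hfin]
  calc q * (ell (m+1) ^ (1-q))⁻¹ * (((m:ℝ)+2)⁻¹/2) * (2/q)
      ≤ (ell (m+1) ^ q - ell m ^ q) * (2/q) := by
        apply mul_le_mul_of_nonneg_right hstep h2q.le
    _ = (2/q) * (ell (m+1) ^ q - ell m ^ q) := by ring

/-- F1: partial-sum upper bound -/
lemma sumA_le {q : ℝ} (hq0 : 0 < q) (hq1 : q < 1) (m : ℕ) :
    ∑ n ∈ range (m+1), (((n:ℝ)+1) * ell n ^ (1-q))⁻¹ ≤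
      ((Real.log 2)⁻¹ + 2/q) * ell m ^ q := by
  have key : ∀ m : ℕ, ∑ n ∈ range (m+1), (((n:ℝ)+1) * ell n ^ (1-q))⁻¹ ≤
      (Real.log 2)⁻¹ * ell m ^ q + (2/q) * (ell m ^ q - ell 0 ^ q) := by
    intro m
    induction m with
    | zero =>
      simp only [range_one, sum_singleton, Nat.cast_zero, zero_add, one_mul, sub_self,
        mul_zero, add_zero]
      rw [ell_zero]
      have h2 : (Real.log 2 ^ (1-q))⁻¹ = (Real.log 2)⁻¹ * Real.log 2 ^ q := by
        rw [← Real.rpow_neg log2_pos.le, show -(1-q) = q + (-1) by ring,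
          Real.rpow_add log2_pos, Real.rpow_neg_one]
        ring
      rw [h2]
    | succ m ih =>
      rw [Finset.sum_range_succ]
      have hincr := incr_ge hq0 hq1 m
      have hcast : (((m+1:ℕ):ℝ) + 1) = ((m:ℝ)+2) := by push_cast; ring
      rw [hcast]
      have hmono : ell m ^ q ≤ ell (m+1) ^ q :=
        Real.rpow_le_rpow (ell_pos m).le (ell_mono (Nat.le_succ m)) hq0.le
      have hl2 : 0 ≤ (Real.log 2)⁻¹ := by positivity
      nlinarith [mul_le_mul_of_nonneg_left hmono hl2]
  refine le_trans (key m) ?_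
  have h0 : 0 ≤ ell 0 ^ q := (Real.rpow_pos_of_pos (ell_pos 0) q).le
  have : (2/q) * (ell m ^ q - ell 0 ^ q) ≤ (2/q) * ell m ^ q := by
    apply mul_le_mul_of_nonneg_left _ (by positivity)
    linarith
  linarith [this]

/-- telescoping step for the tail -/
lemma tail_step {s : ℝ} (hs : 0 < s) {k : ℝ} (hk : 1 ≤ k) :
    s * ((k+1) ^ (1+s))⁻¹ ≤ (k ^ s)⁻¹ - ((k+1) ^ s)⁻¹ := by
  have hk0 : (0:ℝ) < k := lt_of_lt_of_le one_pos hk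
  have hk1 : (0:ℝ) < k + 1 := by linarith
  set A := k ^ s with hA
  set B := (k+1) ^ s with hB
  have hApos : 0 < A := Real.rpow_pos_of_pos hk0 s
  have hBpos : 0 < B := Real.rpow_pos_of_pos hk1 s
  have hlog : (k+1)⁻¹ ≤ Real.log ((k+1)/k) := by
    have h := Real.log_le_sub_one_of_pos (show (0:ℝ) < k/(k+1) by positivity)
    have hneg : Real.log (k/(k+1)) = - Real.log ((k+1)/k) := by
      rw [← Real.log_inv]; congr 1; field_simp
    rw [hneg] at h
    have : 1 - k/(k+1) = (k+1)⁻¹ := by field_simp; ring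
    linarith
  have hexp : 1 + s * (k+1)⁻¹ ≤ ((k+1)/k) ^ s := by
    rw [Real.rpow_def_of_pos (by positivity)]
    have h2 : s * (k+1)⁻¹ ≤ s * Real.log ((k+1)/k) := mul_le_mul_of_nonneg_left hlog hs.le
    have h3 := Real.add_one_le_exp (Real.log ((k+1)/k) * s)
    nlinarith [h2, h3]
  have hdivr : ((k+1)/k) ^ s = B / A := Real.div_rpow hk1.le hk0.le s
  have hBA : A * (1 + s * (k+1)⁻¹) ≤ B := by
    rw [hdivr] at hexp
    rw [le_div_iff₀ hApos] at hexp
    linarith [hexp]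
  have hKB : (k+1) * B = (k+1) ^ (1+s) := by
    rw [hB, ← Real.rpow_one_add' hk1.le (by positivity)]
  have hid : (A)⁻¹ - (B)⁻¹ = (B - A) * (A⁻¹ * B⁻¹) := by
    field_simp
  rw [hid]
  have hBA' : A * (s * (k+1)⁻¹) ≤ B - A := by linarith [hBA]
  calc s * ((k+1) ^ (1+s))⁻¹ = A * (s * (k+1)⁻¹) * (A⁻¹ * B⁻¹) := by
        rw [← hKB]; field_simp
    _ ≤ (B - A) * (A⁻¹ * B⁻¹) := by
        apply mul_le_mul_of_nonneg_right hBA'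
        positivity

/-- F3: tail sum bound -/
lemma tail_sum {s : ℝ} (hs : 0 < s) (m K : ℕ) :
    ∑ k ∈ range K, ((((m:ℝ)+2+k)) ^ (1+s))⁻¹ ≤ s⁻¹ * ((((m:ℝ)+1)) ^ s)⁻¹ := by
  have key : ∀ K : ℕ, ∑ k ∈ range K, ((((m:ℝ)+2+k)) ^ (1+s))⁻¹ ≤
      s⁻¹ * (((((m:ℝ)+1)) ^ s)⁻¹ - ((((m:ℝ)+1+K)) ^ s)⁻¹) := by
    intro K
    induction K with
    | zero => simp
    | succ K ih =>
      rw [Finset.sum_range_succ]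
      have hk : (1:ℝ) ≤ (m:ℝ)+1+K := by
        have h1 : (0:ℝ) ≤ (m:ℝ) := m.cast_nonneg
        have h2 : (0:ℝ) ≤ (K:ℝ) := K.cast_nonneg
        linarith
      have hstep := tail_step hs hk
      have heq1 : (m:ℝ)+1+K+1 = (m:ℝ)+2+K := by ring
      rw [heq1] at hstep
      have heq2 : (m:ℝ)+1+((K:ℕ)+1:ℕ) = (m:ℝ)+2+K := by push_cast; ring
      rw [heq2]
      have hstep' : ((((m:ℝ)+2+K)) ^ (1+s))⁻¹ ≤
          s⁻¹ * (((((m:ℝ)+1+K)) ^ s)⁻¹ - ((((m:ℝ)+2+K)) ^ s)⁻¹) := by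
        rw [← mul_le_mul_iff_right₀ hs, ← mul_assoc, mul_inv_cancel₀ hs.ne', one_mul]
        exact hstep
      calc ∑ k ∈ range K, ((((m:ℝ)+2+k)) ^ (1+s))⁻¹ + ((((m:ℝ)+2+K)) ^ (1+s))⁻¹
          ≤ s⁻¹ * (((((m:ℝ)+1)) ^ s)⁻¹ - ((((m:ℝ)+1+K)) ^ s)⁻¹)
            + s⁻¹ * (((((m:ℝ)+1+K)) ^ s)⁻¹ - ((((m:ℝ)+2+K)) ^ s)⁻¹) :=
            add_le_add ih hstep'
        _ = s⁻¹ * (((((m:ℝ)+1)) ^ s)⁻¹ - ((((m:ℝ)+2+K)) ^ s)⁻¹) := by ring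
  refine le_trans (key K) ?_
  have hpos : (0:ℝ) < (((m:ℝ)+1+K)) ^ s := Real.rpow_pos_of_pos (by positivity) s
  have : (0:ℝ) ≤ ((((m:ℝ)+1+K)) ^ s)⁻¹ := by positivity
  have hsi : (0:ℝ) ≤ s⁻¹ := by positivity
  nlinarith

/-! ### ENNReal glue -/

/-- real-valued summand of the exchanged double sum -/
noncomputable def g (p r : ℝ) (m n : ℕ) : ℝ :=
  (((n:ℝ)+1) * ell n ^ (p/2))⁻¹ * ((((n:ℝ)+1) ^ (p*r) + ((m:ℝ)+1) ^ (p*r))⁻¹)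

lemma g_nonneg (p r : ℝ) (m n : ℕ) : 0 ≤ g p r m n := by
  unfold g
  have h1 : (0:ℝ) < ((n:ℝ)+1) := by positivity
  have h2 : (0:ℝ) < ell n := ell_pos n
  have h3 : (0:ℝ) < ((n:ℝ)+1) ^ (p*r) := Real.rpow_pos_of_pos h1 _
  have h4 : (0:ℝ) < ((m:ℝ)+1) ^ (p*r) := Real.rpow_pos_of_pos (by positivity) _
  have h5 : (0:ℝ) < ell n ^ (p/2) := Real.rpow_pos_of_pos h2 _
  positivity

lemma coe_succ (n : ℕ) : ((n+1:ℕ) : ℝ≥0∞) = ENNReal.ofReal ((n:ℝ)+1) := by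
  rw [← ENNReal.ofReal_natCast (n+1)]
  congr 1
  push_cast
  ring

lemma term_eq (p r : ℝ) (m n : ℕ) :
    ((((n+1:ℕ)):ℝ≥0∞) * ENNReal.ofReal (Real.log ((n:ℝ)+2)) ^ (p/2))⁻¹ *
      (((((n+1:ℕ)):ℝ≥0∞)) ^ (p*r) + ((((m+1:ℕ)):ℝ≥0∞)) ^ (p*r))⁻¹
    = ENNReal.ofReal (g p r m n) := by
  have hN : (0:ℝ) < (n:ℝ)+1 := by positivity
  have hM : (0:ℝ) < (m:ℝ)+1 := by positivity
  have hl : (0:ℝ) < ell n := ell_pos n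
  have hle : Real.log ((n:ℝ)+2) = ell n := rfl
  rw [hle, coe_succ n, coe_succ m,
    ENNReal.ofReal_rpow_of_pos hN, ENNReal.ofReal_rpow_of_pos hM,
    ENNReal.ofReal_rpow_of_pos hl,
    ← ENNReal.ofReal_mul hN.le,
    ← ENNReal.ofReal_add (by positivity) (by positivity),
    ← ENNReal.ofReal_inv_of_pos (by positivity),
    ← ENNReal.ofReal_inv_of_pos (by positivity),
    ← ENNReal.ofReal_mul (by positivity)]
  rfl

lemma targ_eq (p r : ℝ) (m : ℕ) :
    (((m+1:ℕ)):ℝ≥0∞) ^ (-(p*r)) * ENNReal.ofReal (Real.log ((m:ℝ)+2)) ^ (1-p/2)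
    = ENNReal.ofReal (((((m:ℝ)+1)) ^ (p*r))⁻¹ * ell m ^ (1-p/2)) := by
  have hM : (0:ℝ) < (m:ℝ)+1 := by positivity
  have hl : (0:ℝ) < ell m := ell_pos m
  have hle : Real.log ((m:ℝ)+2) = ell m := rfl
  rw [hle, coe_succ m, ENNReal.ofReal_rpow_of_pos hM, ENNReal.ofReal_rpow_of_pos hl,
    ← ENNReal.ofReal_mul (by positivity)]
  congr 1
  rw [Real.rpow_neg hM.le]

/-- lower bound for the inner sum -/
lemma S_lower (p r : ℝ) (hp : 0 < p) (hr : 0 < r) (m : ℕ) :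
    ENNReal.ofReal (2⁻¹ * ((((m:ℝ)+1) ^ (p*r))⁻¹ * ell m ^ (1-p/2))) ≤
      ∑' n : ℕ, ENNReal.ofReal (g p r m n) := by
  have hM : (0:ℝ) < (m:ℝ)+1 := by positivity
  have hMs : (0:ℝ) < ((m:ℝ)+1) ^ (p*r) := Real.rpow_pos_of_pos hM _
  have hlm : (0:ℝ) < ell m := ell_pos m
  have hlme : (0:ℝ) < ell m ^ (p/2) := Real.rpow_pos_of_pos hlm _
  -- real estimate
  have key : 2⁻¹ * ((((m:ℝ)+1) ^ (p*r))⁻¹ * ell m ^ (1-p/2)) ≤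
      ∑ n ∈ range (m+1), g p r m n := by
    have hterm : ∀ n ∈ range (m+1),
        ((n:ℝ)+1)⁻¹ * ((ell m ^ (p/2))⁻¹ * (2 * ((m:ℝ)+1) ^ (p*r))⁻¹) ≤ g p r m n := by
      intro n hn
      have hnm : n ≤ m := Nat.lt_succ_iff.mp (mem_range.mp hn)
      have hN : (0:ℝ) < (n:ℝ)+1 := by positivity
      have hNM : (n:ℝ)+1 ≤ (m:ℝ)+1 := by
        have : (n:ℝ) ≤ m := Nat.cast_le.2 hnm
        linarith
      have h1 : ell n ^ (p/2) ≤ ell m ^ (p/2) :=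
        Real.rpow_le_rpow (ell_pos n).le (ell_mono hnm) (by positivity)
      have h2 : ((n:ℝ)+1) ^ (p*r) ≤ ((m:ℝ)+1) ^ (p*r) :=
        Real.rpow_le_rpow hN.le hNM (by positivity)
      unfold g
      have hA : ((n:ℝ)+1) * ell n ^ (p/2) ≤ ((n:ℝ)+1) * ell m ^ (p/2) := by
        apply mul_le_mul_of_nonneg_left h1 hN.le
      have hB : ((n:ℝ)+1) ^ (p*r) + ((m:ℝ)+1) ^ (p*r) ≤ 2 * ((m:ℝ)+1) ^ (p*r) := by
        linarith
      have hApos : (0:ℝ) < ((n:ℝ)+1) * ell n ^ (p/2) := by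
        have := Real.rpow_pos_of_pos (ell_pos n) (p/2); positivity
      have hBpos : (0:ℝ) < ((n:ℝ)+1) ^ (p*r) + ((m:ℝ)+1) ^ (p*r) := by
        have := Real.rpow_pos_of_pos hN (p*r); positivity
      have hi1 : (((n:ℝ)+1) * ell m ^ (p/2))⁻¹ ≤ (((n:ℝ)+1) * ell n ^ (p/2))⁻¹ :=
        inv_anti₀ hApos hA
      have hi2 : (2 * ((m:ℝ)+1) ^ (p*r))⁻¹ ≤ (((n:ℝ)+1) ^ (p*r) + ((m:ℝ)+1) ^ (p*r))⁻¹ :=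
        inv_anti₀ hBpos hB
      calc ((n:ℝ)+1)⁻¹ * ((ell m ^ (p/2))⁻¹ * (2 * ((m:ℝ)+1) ^ (p*r))⁻¹)
          = (((n:ℝ)+1) * ell m ^ (p/2))⁻¹ * (2 * ((m:ℝ)+1) ^ (p*r))⁻¹ := by
            rw [mul_inv, mul_inv]; ring
        _ ≤ (((n:ℝ)+1) * ell n ^ (p/2))⁻¹ * (((n:ℝ)+1) ^ (p*r) + ((m:ℝ)+1) ^ (p*r))⁻¹ := by
            apply mul_le_mul hi1 hi2 (by positivity) (by positivity)
    have hsum := Finset.sum_le_sum hterm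
    rw [← Finset.sum_mul] at hsum
    have hharm := harmonic_ge m
    have hc : (0:ℝ) ≤ (ell m ^ (p/2))⁻¹ * (2 * ((m:ℝ)+1) ^ (p*r))⁻¹ := by positivity
    have : ell m * ((ell m ^ (p/2))⁻¹ * (2 * ((m:ℝ)+1) ^ (p*r))⁻¹) ≤
        (∑ n ∈ range (m+1), ((n:ℝ)+1)⁻¹) * ((ell m ^ (p/2))⁻¹ * (2 * ((m:ℝ)+1) ^ (p*r))⁻¹) :=
      mul_le_mul_of_nonneg_right hharm hc
    refine le_trans (le_of_eq ?_) (le_trans this hsum)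
    rw [Real.rpow_sub hlm, Real.rpow_one, div_eq_mul_inv, mul_inv]
    ring
  calc ENNReal.ofReal (2⁻¹ * ((((m:ℝ)+1) ^ (p*r))⁻¹ * ell m ^ (1-p/2)))
      ≤ ENNReal.ofReal (∑ n ∈ range (m+1), g p r m n) := ENNReal.ofReal_le_ofReal key
    _ = ∑ n ∈ range (m+1), ENNReal.ofReal (g p r m n) :=
        ENNReal.ofReal_sum_of_nonneg (fun n _ => g_nonneg p r m n)
    _ ≤ ∑' n : ℕ, ENNReal.ofReal (g p r m n) := ENNReal.sum_le_tsum _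

end Stmt17Aux

namespace Stmt17Aux
open Finset

noncomputable def Cr (p r : ℝ) : ℝ :=
  ((Real.log 2)⁻¹ + 2/(1-p/2)) +
    (Real.log 2 ^ (p/2))⁻¹ * (p*r)⁻¹ * ((Real.log 2) ^ (1-p/2))⁻¹

lemma Cr_nonneg (p r : ℝ) (hp : 0 < p) (hp2 : p < 2) (hr : 0 < r) : 0 ≤ Cr p r := by
  unfold Cr
  have h1 : (0:ℝ) < Real.log 2 := log2_pos
  have h2 : (0:ℝ) < Real.log 2 ^ (p/2) := Real.rpow_pos_of_pos h1 _
  have h3 : (0:ℝ) < Real.log 2 ^ (1-p/2) := Real.rpow_pos_of_pos h1 _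
  have h4 : (0:ℝ) < 1 - p/2 := by linarith
  positivity

/-- upper bound for the inner sum -/
lemma S_upper (p r : ℝ) (hp : 0 < p) (hp2 : p < 2) (hr : 0 < r) (m : ℕ) :
    (∑' n : ℕ, ENNReal.ofReal (g p r m n)) ≤
      ENNReal.ofReal (Cr p r * ((((m:ℝ)+1) ^ (p*r))⁻¹ * ell m ^ (1-p/2))) := by
  have hs : 0 < p*r := mul_pos hp hr
  have hq0 : 0 < 1 - p/2 := by linarith
  have hq1 : 1 - p/2 < 1 := by linarith
  have hM : (0:ℝ) < (m:ℝ)+1 := by positivity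
  have hMs : (0:ℝ) < ((m:ℝ)+1) ^ (p*r) := Real.rpow_pos_of_pos hM _
  have hlm : (0:ℝ) < ell m := ell_pos m
  have hl2e : (0:ℝ) < Real.log 2 ^ (p/2) := Real.rpow_pos_of_pos log2_pos _
  have hl2q : (0:ℝ) < Real.log 2 ^ (1-p/2) := Real.rpow_pos_of_pos log2_pos _
  have hlq : (0:ℝ) < ell m ^ (1-p/2) := Real.rpow_pos_of_pos hlm _
  set u : ℝ := (((m:ℝ)+1) ^ (p*r))⁻¹ * ell m ^ (1-p/2) with hu
  have hupos : 0 < u := by positivity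
  -- part 1 : real bound for the head
  have h1 : ∑ n ∈ range (m+1), g p r m n ≤ ((Real.log 2)⁻¹ + 2/(1-p/2)) * u := by
    have hterm : ∀ n ∈ range (m+1),
        g p r m n ≤ (((n:ℝ)+1) * ell n ^ (p/2))⁻¹ * (((m:ℝ)+1) ^ (p*r))⁻¹ := by
      intro n _
      have hN : (0:ℝ) < (n:ℝ)+1 := by positivity
      have hNs : (0:ℝ) < ((n:ℝ)+1) ^ (p*r) := Real.rpow_pos_of_pos hN _
      have hApos : (0:ℝ) < ((n:ℝ)+1) * ell n ^ (p/2) := by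
        have := Real.rpow_pos_of_pos (ell_pos n) (p/2); positivity
      have hB : ((m:ℝ)+1) ^ (p*r) ≤ ((n:ℝ)+1) ^ (p*r) + ((m:ℝ)+1) ^ (p*r) := by linarith
      have hi : (((n:ℝ)+1) ^ (p*r) + ((m:ℝ)+1) ^ (p*r))⁻¹ ≤ (((m:ℝ)+1) ^ (p*r))⁻¹ :=
        inv_anti₀ hMs hB
      unfold g
      exact mul_le_mul_of_nonneg_left hi (by positivity)
    have hsum := Finset.sum_le_sum hterm
    rw [← Finset.sum_mul] at hsum
    have hA := sumA_le (q := 1 - p/2) hq0 hq1 m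
    have hee : (1 : ℝ) - (1 - p/2) = p/2 := by ring
    rw [hee] at hA
    calc ∑ n ∈ range (m+1), g p r m n
        ≤ (∑ n ∈ range (m+1), (((n:ℝ)+1) * ell n ^ (p/2))⁻¹) * (((m:ℝ)+1) ^ (p*r))⁻¹ := hsum
      _ ≤ (((Real.log 2)⁻¹ + 2/(1-p/2)) * ell m ^ (1-p/2)) * (((m:ℝ)+1) ^ (p*r))⁻¹ := by
          apply mul_le_mul_of_nonneg_right hA (by positivity)
      _ = ((Real.log 2)⁻¹ + 2/(1-p/2)) * u := by rw [hu]; ring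
  -- part 2 : real bound for the tail
  have h2 : ∀ K : ℕ, ∑ k ∈ range K, g p r m (k+(m+1)) ≤
      ((Real.log 2 ^ (p/2))⁻¹ * (p*r)⁻¹ * ((Real.log 2) ^ (1-p/2))⁻¹) * u := by
    intro K
    have hterm : ∀ k ∈ range K,
        g p r m (k+(m+1)) ≤ (Real.log 2 ^ (p/2))⁻¹ * ((((m:ℝ)+2+k) ^ (1+(p*r)))⁻¹) := by
      intro k _
      have hNk : (0:ℝ) < (m:ℝ)+2+k := by positivity
      have hcast : ((k+(m+1):ℕ):ℝ) + 1 = (m:ℝ)+2+(k:ℝ) := by push_cast; ring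
      have hellk : Real.log 2 ^ (p/2) ≤ ell (k+(m+1)) ^ (p/2) :=
        Real.rpow_le_rpow log2_pos.le (ell_ge _) (by positivity)
      have hellkpos : (0:ℝ) < ell (k+(m+1)) ^ (p/2) := Real.rpow_pos_of_pos (ell_pos _) _
      unfold g
      rw [hcast]
      have hA : ((m:ℝ)+2+k) * Real.log 2 ^ (p/2) ≤ ((m:ℝ)+2+k) * ell (k+(m+1)) ^ (p/2) :=
        mul_le_mul_of_nonneg_left hellk hNk.le
      have hApos : (0:ℝ) < ((m:ℝ)+2+k) * Real.log 2 ^ (p/2) := by positivity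
      have hB : ((m:ℝ)+2+k) ^ (p*r) ≤ ((m:ℝ)+2+k) ^ (p*r) + ((m:ℝ)+1) ^ (p*r) := by
        have : (0:ℝ) < ((m:ℝ)+1) ^ (p*r) := hMs
        linarith
      have hBpos : (0:ℝ) < ((m:ℝ)+2+k) ^ (p*r) := Real.rpow_pos_of_pos hNk _
      have hi1 : (((m:ℝ)+2+k) * ell (k+(m+1)) ^ (p/2))⁻¹ ≤
          (((m:ℝ)+2+k) * Real.log 2 ^ (p/2))⁻¹ := inv_anti₀ hApos hA
      have hi2 : (((m:ℝ)+2+k) ^ (p*r) + ((m:ℝ)+1) ^ (p*r))⁻¹ ≤ (((m:ℝ)+2+k) ^ (p*r))⁻¹ :=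
        inv_anti₀ hBpos hB
      calc (((m:ℝ)+2+k) * ell (k+(m+1)) ^ (p/2))⁻¹ *
            ((((m:ℝ)+2+k) ^ (p*r) + ((m:ℝ)+1) ^ (p*r))⁻¹)
          ≤ (((m:ℝ)+2+k) * Real.log 2 ^ (p/2))⁻¹ * ((((m:ℝ)+2+k) ^ (p*r))⁻¹) := by
            apply mul_le_mul hi1 hi2 (by positivity) (by positivity)
        _ = (Real.log 2 ^ (p/2))⁻¹ * ((((m:ℝ)+2+k) ^ (1+(p*r)))⁻¹) := by
            rw [Real.rpow_one_add' hNk.le (by positivity), mul_inv, mul_inv]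
            ring
    have hsum := Finset.sum_le_sum hterm
    rw [← Finset.mul_sum] at hsum
    have htail := tail_sum hs m K
    have hone : 1 ≤ ((Real.log 2) ^ (1-p/2))⁻¹ * ell m ^ (1-p/2) := by
      have h := Real.rpow_le_rpow log2_pos.le (ell_ge m) hq0.le
      have h' := mul_le_mul_of_nonneg_left h (inv_nonneg.mpr hl2q.le)
      rwa [inv_mul_cancel₀ hl2q.ne'] at h'
    calc ∑ k ∈ range K, g p r m (k+(m+1))
        ≤ (Real.log 2 ^ (p/2))⁻¹ * ∑ k ∈ range K, ((((m:ℝ)+2+k) ^ (1+(p*r)))⁻¹) := hsum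
      _ ≤ (Real.log 2 ^ (p/2))⁻¹ * ((p*r)⁻¹ * ((((m:ℝ)+1)) ^ (p*r))⁻¹) := by
          apply mul_le_mul_of_nonneg_left htail (by positivity)
      _ = ((Real.log 2 ^ (p/2))⁻¹ * ((p*r)⁻¹ * ((((m:ℝ)+1)) ^ (p*r))⁻¹)) * 1 := by ring
      _ ≤ ((Real.log 2 ^ (p/2))⁻¹ * ((p*r)⁻¹ * ((((m:ℝ)+1)) ^ (p*r))⁻¹)) *
            (((Real.log 2) ^ (1-p/2))⁻¹ * ell m ^ (1-p/2)) := by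
          apply mul_le_mul_of_nonneg_left hone (by positivity)
      _ = ((Real.log 2 ^ (p/2))⁻¹ * (p*r)⁻¹ * ((Real.log 2) ^ (1-p/2))⁻¹) * u := by
          rw [hu]; ring
  -- ENNReal assembly
  rw [← Summable.sum_add_tsum_nat_add' (f := fun n => ENNReal.ofReal (g p r m n)) (k := m+1)
    ENNReal.summable]
  have hP1 : ∑ n ∈ range (m+1), ENNReal.ofReal (g p r m n) ≤
      ENNReal.ofReal (((Real.log 2)⁻¹ + 2/(1-p/2)) * u) := by
    rw [← ENNReal.ofReal_sum_of_nonneg (fun n _ => g_nonneg p r m n)]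
    exact ENNReal.ofReal_le_ofReal h1
  have hP2 : (∑' k : ℕ, ENNReal.ofReal (g p r m (k+(m+1)))) ≤
      ENNReal.ofReal (((Real.log 2 ^ (p/2))⁻¹ * (p*r)⁻¹ * ((Real.log 2) ^ (1-p/2))⁻¹) * u) := by
    refine Summable.tsum_le_of_sum_le ENNReal.summable fun t => ?_
    obtain ⟨K, hK⟩ := t.exists_nat_subset_range
    calc ∑ k ∈ t, ENNReal.ofReal (g p r m (k+(m+1)))
        ≤ ∑ k ∈ range K, ENNReal.ofReal (g p r m (k+(m+1))) :=
          Finset.sum_le_sum_of_subset hK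
      _ = ENNReal.ofReal (∑ k ∈ range K, g p r m (k+(m+1))) :=
          (ENNReal.ofReal_sum_of_nonneg (fun k _ => g_nonneg p r m _)).symm
      _ ≤ _ := ENNReal.ofReal_le_ofReal (h2 K)
  calc (∑ n ∈ range (m+1), ENNReal.ofReal (g p r m n)) +
        ∑' k : ℕ, ENNReal.ofReal (g p r m (k+(m+1)))
      ≤ ENNReal.ofReal (((Real.log 2)⁻¹ + 2/(1-p/2)) * u) +
        ENNReal.ofReal (((Real.log 2 ^ (p/2))⁻¹ * (p*r)⁻¹ * ((Real.log 2) ^ (1-p/2))⁻¹) * u) :=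
        add_le_add hP1 hP2
    _ = ENNReal.ofReal (Cr p r * u) := by
        rw [← ENNReal.ofReal_add (by positivity) (by positivity)]
        congr 1
        unfold Cr
        ring

end Stmt17Aux


/-- Logarithmic version: `Σ_n α_n n^{-pr} (log(n+1))^{1-p/2} ≈ Σ_n (n (log(n+1))^{p/2})⁻¹ ω_n^p`. -/
theorem stmt17 (p r : ℝ) (hp : 0 < p) (hp2 : p < 2) (hr : 0 < r) (α : ℕ → ℝ≥0∞)
    (hfin : (∑' n : ℕ, α (n+1) / (1 + ((n+1 : ℕ) : ℝ≥0∞) ^ (p * r))) ≠ ⊤) :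
    ∃ c C : ℝ≥0∞, c ≠ 0 ∧ C ≠ ⊤ ∧
      c * (∑' n : ℕ, α (n+1) * ((n+1 : ℕ) : ℝ≥0∞) ^ (-(p * r)) *
            ENNReal.ofReal (Real.log ((n : ℝ) + 2)) ^ (1 - p/2)) ≤
        (∑' n : ℕ, (((n+1 : ℕ) : ℝ≥0∞) * ENNReal.ofReal (Real.log ((n : ℝ) + 2)) ^ (p/2))⁻¹ *
            omegaP p r α (n+1))
      ∧ (∑' n : ℕ, (((n+1 : ℕ) : ℝ≥0∞) * ENNReal.ofReal (Real.log ((n : ℝ) + 2)) ^ (p/2))⁻¹ *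
            omegaP p r α (n+1)) ≤
        C * (∑' n : ℕ, α (n+1) * ((n+1 : ℕ) : ℝ≥0∞) ^ (-(p * r)) *
            ENNReal.ofReal (Real.log ((n : ℝ) + 2)) ^ (1 - p/2)) := by
    open Stmt17Aux in
  have hswap : (∑' n : ℕ, (((n+1 : ℕ) : ℝ≥0∞) *
        ENNReal.ofReal (Real.log ((n : ℝ) + 2)) ^ (p/2))⁻¹ * omegaP p r α (n+1))
      = ∑' m : ℕ, α (m+1) * ∑' n : ℕ, ENNReal.ofReal (Stmt17Aux.g p r m n) := by
    have h1 : ∀ n : ℕ, (((n+1 : ℕ) : ℝ≥0∞) *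
        ENNReal.ofReal (Real.log ((n : ℝ) + 2)) ^ (p/2))⁻¹ * omegaP p r α (n+1)
        = ∑' m : ℕ, α (m+1) * ENNReal.ofReal (Stmt17Aux.g p r m n) := by
      intro n
      simp only [omegaP]
      calc (((n+1 : ℕ) : ℝ≥0∞) * ENNReal.ofReal (Real.log ((n : ℝ) + 2)) ^ (p/2))⁻¹ *
            ∑' m : ℕ, α (m+1) / (((n+1 : ℕ) : ℝ≥0∞) ^ (p * r) + ((m+1 : ℕ) : ℝ≥0∞) ^ (p * r))
          = ∑' m : ℕ, (((n+1 : ℕ) : ℝ≥0∞) * ENNReal.ofReal (Real.log ((n : ℝ) + 2)) ^ (p/2))⁻¹ *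
            (α (m+1) / (((n+1 : ℕ) : ℝ≥0∞) ^ (p * r) + ((m+1 : ℕ) : ℝ≥0∞) ^ (p * r))) :=
            ENNReal.tsum_mul_left.symm
        _ = ∑' m : ℕ, α (m+1) * ENNReal.ofReal (Stmt17Aux.g p r m n) := by
            refine tsum_congr fun m => ?_
            rw [div_eq_mul_inv (α (m+1)), ← Stmt17Aux.term_eq p r m n, ← mul_assoc,
              mul_comm ((((n+1 : ℕ) : ℝ≥0∞) *
                ENNReal.ofReal (Real.log ((n : ℝ) + 2)) ^ (p/2))⁻¹) (α (m+1)),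
              mul_assoc]
    rw [tsum_congr h1, ENNReal.tsum_comm]
    exact tsum_congr fun m => ENNReal.tsum_mul_left
  refine ⟨ENNReal.ofReal 2⁻¹, ENNReal.ofReal (Stmt17Aux.Cr p r),
    (ENNReal.ofReal_pos.mpr (by norm_num)).ne', ENNReal.ofReal_ne_top, ?_, ?_⟩
  · calc ENNReal.ofReal 2⁻¹ * (∑' m : ℕ, α (m+1) * ((m+1 : ℕ) : ℝ≥0∞) ^ (-(p * r)) *
          ENNReal.ofReal (Real.log ((m : ℝ) + 2)) ^ (1 - p/2))
        = ∑' m : ℕ, ENNReal.ofReal 2⁻¹ * (α (m+1) * ((m+1 : ℕ) : ℝ≥0∞) ^ (-(p * r)) *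
          ENNReal.ofReal (Real.log ((m : ℝ) + 2)) ^ (1 - p/2)) := ENNReal.tsum_mul_left.symm
      _ ≤ ∑' m : ℕ, α (m+1) * ∑' n : ℕ, ENNReal.ofReal (Stmt17Aux.g p r m n) := by
          refine Summable.tsum_le_tsum (fun m => ?_) ENNReal.summable ENNReal.summable
          calc ENNReal.ofReal 2⁻¹ * (α (m+1) * ((m+1 : ℕ) : ℝ≥0∞) ^ (-(p * r)) *
                ENNReal.ofReal (Real.log ((m : ℝ) + 2)) ^ (1 - p/2))
              = α (m+1) * (ENNReal.ofReal 2⁻¹ * (((m+1 : ℕ) : ℝ≥0∞) ^ (-(p * r)) *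
                ENNReal.ofReal (Real.log ((m : ℝ) + 2)) ^ (1 - p/2))) := by ring
            _ = α (m+1) * ENNReal.ofReal (2⁻¹ *
                (((((m:ℝ)+1)) ^ (p*r))⁻¹ * Stmt17Aux.ell m ^ (1-p/2))) := by
                rw [Stmt17Aux.targ_eq p r m,
                  ← ENNReal.ofReal_mul (by norm_num : (0:ℝ) ≤ 2⁻¹)]
            _ ≤ α (m+1) * ∑' n : ℕ, ENNReal.ofReal (Stmt17Aux.g p r m n) :=
                mul_le_mul_right (Stmt17Aux.S_lower p r hp hr m) _
      _ = _ := hswap.symm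
  · calc (∑' n : ℕ, (((n+1 : ℕ) : ℝ≥0∞) *
          ENNReal.ofReal (Real.log ((n : ℝ) + 2)) ^ (p/2))⁻¹ * omegaP p r α (n+1))
        = ∑' m : ℕ, α (m+1) * ∑' n : ℕ, ENNReal.ofReal (Stmt17Aux.g p r m n) := hswap
      _ ≤ ∑' m : ℕ, ENNReal.ofReal (Stmt17Aux.Cr p r) * (α (m+1) *
            ((m+1 : ℕ) : ℝ≥0∞) ^ (-(p * r)) *
            ENNReal.ofReal (Real.log ((m : ℝ) + 2)) ^ (1 - p/2)) := by
          refine Summable.tsum_le_tsum (fun m => ?_) ENNReal.summable ENNReal.summable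
          calc α (m+1) * ∑' n : ℕ, ENNReal.ofReal (Stmt17Aux.g p r m n)
              ≤ α (m+1) * ENNReal.ofReal (Stmt17Aux.Cr p r *
                  (((((m:ℝ)+1)) ^ (p*r))⁻¹ * Stmt17Aux.ell m ^ (1-p/2))) :=
                mul_le_mul_right (Stmt17Aux.S_upper p r hp hp2 hr m) _
            _ = ENNReal.ofReal (Stmt17Aux.Cr p r) * (α (m+1) *
                ((m+1 : ℕ) : ℝ≥0∞) ^ (-(p * r)) *
                ENNReal.ofReal (Real.log ((m : ℝ) + 2)) ^ (1 - p/2)) := by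
                rw [ENNReal.ofReal_mul (Stmt17Aux.Cr_nonneg p r hp hp2 hr),
                  ← Stmt17Aux.targ_eq p r m]
                ring
      _ = ENNReal.ofReal (Stmt17Aux.Cr p r) * (∑' m : ℕ, α (m+1) *
            ((m+1 : ℕ) : ℝ≥0∞) ^ (-(p * r)) *
            ENNReal.ofReal (Real.log ((m : ℝ) + 2)) ^ (1 - p/2)) := ENNReal.tsum_mul_left
end
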